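/- arXiv:2101.11504 — 6 statements merged into one kernel-verified Lean document; each statement's English description precedes it below -/
import Mathlib

section
/- The rows of Î_{n,k} form a basis of the row space of I_{n,k}; that is, the rows of Î_{n,k} are linearly independent and their span equals the span of the rows of I_{n,k}. -/
/-- The entry of the boundary matrix `I_{n,k}`: for a `k`-element subset `Y` and a
`(k+1)`-element subset `X = {x_0 < x_1 < ⋯ < x_k}` of `Fin n`, the entry is `(-1)^i` if
`Y = X \ {x_i}`, and `0` otherwise. -/
noncomputable def Ient (n k : ℕ) (Y X : Finset (Fin n)) : ℝ :=
  if Y ⊆ X ∧ Y.card = k ∧ X.card = k + 1 then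
    (-1 : ℝ) ^ (X.filter (fun a => ∀ b ∈ X \ Y, a < b)).card
  else 0

lemma Ient_cond {n k : ℕ} {Y X : Finset (Fin n)} (h : Ient n k Y X ≠ 0) :
    Y ⊆ X ∧ Y.card = k ∧ X.card = k + 1 := by
  by_contra hc
  rw [Ient, if_neg hc] at h
  exact h rfl

lemma Ient_eq {n k : ℕ} {Y X : Finset (Fin n)} (h : Y ⊆ X ∧ Y.card = k ∧ X.card = k + 1)
    {x : Fin n} (hx : X \ Y = {x}) :
    Ient n k Y X = (-1 : ℝ) ^ (X.filter (fun a => a < x)).card := by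
  rw [Ient, if_pos h]
  congr 2
  apply Finset.filter_congr
  intro a _
  simp [hx]

lemma Ient_ne_zero {n k : ℕ} {Y X : Finset (Fin n)} (h : Y ⊆ X ∧ Y.card = k ∧ X.card = k + 1) :
    Ient n k Y X ≠ 0 := by
  rw [Ient, if_pos h]
  exact pow_ne_zero _ (by norm_num)

lemma sdiff_singleton_of_card {n k : ℕ} {Y X : Finset (Fin n)} (hsub : Y ⊆ X)
    (hY : Y.card = k) (hX : X.card = k + 1) : ∃ x, x ∉ Y ∧ X \ Y = {x} := by
  have hc : (X \ Y).card = 1 := by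
    rw [Finset.card_sdiff_of_subset hsub, hY, hX]; omega
  obtain ⟨x, hx⟩ := Finset.card_eq_one.mp hc
  refine ⟨x, ?_, hx⟩
  have : x ∈ X \ Y := hx ▸ Finset.mem_singleton_self x
  exact (Finset.mem_sdiff.mp this).2

lemma ddzero (n k : ℕ) (W X : Finset (Fin n)) (hW : W.card = k) (hX : X.card = k + 2) :
    ∑ Y : Finset (Fin n), Ient n k W Y * Ient n (k + 1) Y X = 0 := by
  by_cases hWX : W ⊆ X
  · -- X \ W has two elements
    have hc2 : (X \ W).card = 2 := by
      rw [Finset.card_sdiff_of_subset hWX, hW, hX]; omega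
    obtain ⟨u, v, huv, hpair⟩ := Finset.card_eq_two.mp hc2
    suffices aux : ∀ u v : Fin n, u < v → X \ W = {u, v} →
        ∑ Y : Finset (Fin n), Ient n k W Y * Ient n (k + 1) Y X = 0 by
      rcases lt_or_gt_of_ne huv with h | h
      · exact aux u v h hpair
      · exact aux v u h (by rw [hpair, Finset.pair_comm])
    clear huv hpair u v
    intro u v huv hpair
    have huW : u ∉ W := by
      have : u ∈ X \ W := by rw [hpair]; simp
      exact (Finset.mem_sdiff.mp this).2
    have hvW : v ∉ W := by
      have : v ∈ X \ W := by rw [hpair]; simp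
      exact (Finset.mem_sdiff.mp this).2
    have huX : u ∈ X := by
      have : u ∈ X \ W := by rw [hpair]; simp
      exact (Finset.mem_sdiff.mp this).1
    have hvX : v ∈ X := by
      have : v ∈ X \ W := by rw [hpair]; simp
      exact (Finset.mem_sdiff.mp this).1
    set Yu := insert u W with hYu
    set Yv := insert v W with hYv
    have hYune : Yu ≠ Yv := by
      intro h
      have : u ∈ Yv := h ▸ Finset.mem_insert_self u W
      rcases Finset.mem_insert.mp this with h1 | h1
      · exact absurd h1 huv.ne
      · exact huW h1
    have hYucard : Yu.card = k + 1 := by rw [hYu, Finset.card_insert_of_notMem huW, hW]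
    have hYvcard : Yv.card = k + 1 := by rw [hYv, Finset.card_insert_of_notMem hvW, hW]
    have hYusub : Yu ⊆ X := Finset.insert_subset huX hWX
    have hYvsub : Yv ⊆ X := Finset.insert_subset hvX hWX
    have hXYu : X \ Yu = {v} := by
      ext a
      simp only [Finset.mem_sdiff, hYu, Finset.mem_insert, Finset.mem_singleton, not_or]
      constructor
      · rintro ⟨haX, hau, haW⟩
        have : a ∈ X \ W := Finset.mem_sdiff.mpr ⟨haX, haW⟩
        rw [hpair] at this
        rcases Finset.mem_insert.mp this with h1 | h1
        · exact absurd h1 hau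
        · exact Finset.mem_singleton.mp h1
      · rintro rfl
        exact ⟨hvX, huv.ne', hvW⟩
    have hXYv : X \ Yv = {u} := by
      ext a
      simp only [Finset.mem_sdiff, hYv, Finset.mem_insert, Finset.mem_singleton, not_or]
      constructor
      · rintro ⟨haX, hav, haW⟩
        have : a ∈ X \ W := Finset.mem_sdiff.mpr ⟨haX, haW⟩
        rw [hpair] at this
        rcases Finset.mem_insert.mp this with h1 | h1
        · exact h1
        · exact absurd (Finset.mem_singleton.mp h1) hav
      · rintro rfl
        exact ⟨huX, huv.ne, huW⟩
    have hYuW : Yu \ W = {u} := by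
      ext a
      simp only [Finset.mem_sdiff, hYu, Finset.mem_insert, Finset.mem_singleton]
      constructor
      · rintro ⟨h1 | h1, h2⟩
        · exact h1
        · exact absurd h1 h2
      · rintro rfl; exact ⟨Or.inl rfl, huW⟩
    have hYvW : Yv \ W = {v} := by
      ext a
      simp only [Finset.mem_sdiff, hYv, Finset.mem_insert, Finset.mem_singleton]
      constructor
      · rintro ⟨h1 | h1, h2⟩
        · exact h1
        · exact absurd h1 h2
      · rintro rfl; exact ⟨Or.inl rfl, hvW⟩
    -- restrict sum to {Yu, Yv}
    have key : ∀ Y : Finset (Fin n), Y ∉ ({Yu, Yv} : Finset (Finset (Fin n))) →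
        Ient n k W Y * Ient n (k + 1) Y X = 0 := by
      intro Y hY
      simp only [Finset.mem_insert, Finset.mem_singleton, not_or] at hY
      by_contra h
      have h1 : Ient n k W Y ≠ 0 := fun hz => h (by rw [hz, zero_mul])
      have h2 : Ient n (k + 1) Y X ≠ 0 := fun hz => h (by rw [hz, mul_zero])
      obtain ⟨hWY, _, hYcard⟩ := Ient_cond h1
      obtain ⟨hYX, _, _⟩ := Ient_cond h2
      obtain ⟨y, hyW, hYWy⟩ := sdiff_singleton_of_card hWY hW hYcard
      have hyuv : y ∈ ({u, v} : Finset (Fin n)) := by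
        rw [← hpair]
        have : y ∈ Y \ W := hYWy ▸ Finset.mem_singleton_self y
        exact Finset.mem_sdiff.mpr ⟨hYX (Finset.mem_sdiff.mp this).1, hyW⟩
      have hYeq : Y = insert y W := by
        have := Finset.union_sdiff_of_subset hWY
        rw [hYWy] at this
        rw [← this, Finset.union_comm, Finset.insert_eq]
      rcases Finset.mem_insert.mp hyuv with h1 | h1
      · exact hY.1 (by rw [hYeq, h1])
      · exact hY.2 (by rw [hYeq, Finset.mem_singleton.mp h1])
    rw [← Finset.sum_subset (Finset.subset_univ ({Yu, Yv} : Finset (Finset (Fin n))))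
        (fun Y _ hY => key Y hY), Finset.sum_pair hYune]
    -- now compute the two terms
    have e1 : Ient n k W Yu = (-1 : ℝ) ^ (Yu.filter (fun a => a < u)).card :=
      Ient_eq ⟨Finset.subset_insert u W, hW, hYucard⟩ hYuW
    have e2 : Ient n k W Yv = (-1 : ℝ) ^ (Yv.filter (fun a => a < v)).card :=
      Ient_eq ⟨Finset.subset_insert v W, hW, hYvcard⟩ hYvW
    have e3 : Ient n (k + 1) Yu X = (-1 : ℝ) ^ (X.filter (fun a => a < v)).card :=
      Ient_eq ⟨hYusub, hYucard, by rw [hX]⟩ hXYu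
    have e4 : Ient n (k + 1) Yv X = (-1 : ℝ) ^ (X.filter (fun a => a < u)).card :=
      Ient_eq ⟨hYvsub, hYvcard, by rw [hX]⟩ hXYv
    have f1 : Yu.filter (fun a => a < u) = W.filter (fun a => a < u) := by
      rw [hYu, Finset.filter_insert, if_neg (lt_irrefl u)]
    have f2 : Yv.filter (fun a => a < v) = W.filter (fun a => a < v) := by
      rw [hYv, Finset.filter_insert, if_neg (lt_irrefl v)]
    have f3 : X.filter (fun a => a < u) = W.filter (fun a => a < u) := by
      ext a
      simp only [Finset.mem_filter]
      constructor
      · rintro ⟨haX, hau⟩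
        refine ⟨?_, hau⟩
        by_contra haW
        have : a ∈ X \ W := Finset.mem_sdiff.mpr ⟨haX, haW⟩
        rw [hpair] at this
        rcases Finset.mem_insert.mp this with h1 | h1
        · exact absurd h1 hau.ne
        · rw [Finset.mem_singleton.mp h1] at hau
          exact absurd hau (asymm huv)
      · rintro ⟨haW, hau⟩
        exact ⟨hWX haW, hau⟩
    have f4 : X.filter (fun a => a < v) = insert u (W.filter (fun a => a < v)) := by
      ext a
      simp only [Finset.mem_filter, Finset.mem_insert]
      constructor
      · rintro ⟨haX, hav⟩
        by_cases haW : a ∈ W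
        · exact Or.inr ⟨haW, hav⟩
        · have : a ∈ X \ W := Finset.mem_sdiff.mpr ⟨haX, haW⟩
          rw [hpair] at this
          rcases Finset.mem_insert.mp this with h1 | h1
          · exact Or.inl h1
          · exact absurd (Finset.mem_singleton.mp h1) hav.ne
      · rintro (rfl | ⟨haW, hav⟩)
        · exact ⟨huX, huv⟩
        · exact ⟨hWX haW, hav⟩
    have f4card : (X.filter (fun a => a < v)).card = (W.filter (fun a => a < v)).card + 1 := by
      rw [f4, Finset.card_insert_of_notMem (fun h => huW (Finset.mem_filter.mp h).1)]
    rw [e1, e2, e3, e4, f1, f2, f3, f4card, pow_succ]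
    ring
  · apply Finset.sum_eq_zero
    intro Y _
    by_contra h
    have h1 : Ient n k W Y ≠ 0 := fun hz => h (by rw [hz, zero_mul])
    have h2 : Ient n (k + 1) Y X ≠ 0 := fun hz => h (by rw [hz, mul_zero])
    exact hWX ((Ient_cond h1).1.trans (Ient_cond h2).1)

/-- The rows of `Î_{n,k}` (the rows of `I_{n,k}` indexed by `k`-element subsets of
`{1,…,n-1}`) are linearly independent, and their span equals the span of all the rows
of `I_{n,k}`. -/
theorem stmt1 (n k : ℕ) (hk : 1 ≤ k) (hkn : k < n) :
    LinearIndependent ℝ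
      (fun (Y : {Y : Finset (Fin n) // Y.card = k ∧ ∀ a ∈ Y, (a : ℕ) < n - 1}) =>
        (fun (X : {X : Finset (Fin n) // X.card = k + 1}) => Ient n k Y.1 X.1)) ∧
    Submodule.span ℝ
      (Set.range (fun (Y : {Y : Finset (Fin n) // Y.card = k ∧ ∀ a ∈ Y, (a : ℕ) < n - 1}) =>
        (fun (X : {X : Finset (Fin n) // X.card = k + 1}) => Ient n k Y.1 X.1)))
    = Submodule.span ℝ
      (Set.range (fun (Y : {Y : Finset (Fin n) // Y.card = k}) =>
        (fun (X : {X : Finset (Fin n) // X.card = k + 1}) => Ient n k Y.1 X.1))) := by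
  have hn : 1 ≤ n := le_trans hk hkn.le
  set m : Fin n := ⟨n - 1, by omega⟩ with hm
  have hmval : (m : ℕ) = n - 1 := rfl
  constructor
  · -- linear independence
    rw [Fintype.linearIndependent_iff]
    intro g hg i₀
    obtain ⟨Y₀, hY₀card, hY₀⟩ := i₀
    have hmY₀ : m ∉ Y₀ := fun h => by have := hY₀ m h; omega
    have hX₀card : (insert m Y₀).card = k + 1 := by
      rw [Finset.card_insert_of_notMem hmY₀, hY₀card]
    set X₀ : {X : Finset (Fin n) // X.card = k + 1} := ⟨insert m Y₀, hX₀card⟩ with hX₀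
    have := congrFun hg X₀
    rw [Finset.sum_apply] at this
    simp only [Pi.smul_apply, smul_eq_mul, Pi.zero_apply] at this
    rw [Finset.sum_eq_single (⟨Y₀, hY₀card, hY₀⟩ :
        {Y : Finset (Fin n) // Y.card = k ∧ ∀ a ∈ Y, (a : ℕ) < n - 1})] at this
    · have hne := Ient_ne_zero (n := n) (k := k) (Y := Y₀) (X := insert m Y₀)
        ⟨Finset.subset_insert m Y₀, hY₀card, hX₀card⟩
      exact (mul_eq_zero.mp this).resolve_right hne
    · intro i _ hne
      rcases eq_or_ne (Ient n k i.1 X₀.1) 0 with hz | hz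
      · rw [hz, mul_zero]
      · exfalso
        obtain ⟨hsub, hicard, _⟩ := Ient_cond hz
        have hmi : m ∉ i.1 := fun h => by have := i.2.2 m h; omega
        have : i.1 ⊆ Y₀ := by
          intro a ha
          rcases Finset.mem_insert.mp (hsub ha) with rfl | h
          · exact absurd ha hmi
          · exact h
        have heq : i.1 = Y₀ := Finset.eq_of_subset_of_card_le this (by rw [hicard, hY₀card])
        exact hne (Subtype.ext heq)
    · intro h
      exact absurd (Finset.mem_univ _) h
  · -- span equality
    apply le_antisymm
    · apply Submodule.span_mono
      rintro _ ⟨Y, rfl⟩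
      exact ⟨⟨Y.1, Y.2.1⟩, rfl⟩
    · rw [Submodule.span_le]
      rintro _ ⟨⟨Y, hYcard⟩, rfl⟩
      by_cases hall : ∀ a ∈ Y, (a : ℕ) < n - 1
      · exact Submodule.subset_span ⟨⟨Y, hYcard, hall⟩, rfl⟩
      push_neg at hall
      obtain ⟨a, haY, hav⟩ := hall
      have ham : a = m := by
        apply Fin.ext
        have := a.isLt
        simp only [hmval]
        omega
      have hmY : m ∈ Y := ham ▸ haY
      obtain ⟨j, rfl⟩ : ∃ j, k = j + 1 := ⟨k - 1, by omega⟩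
      set W : Finset (Fin n) := Y.erase m with hW
      have hWcard : W.card = j := by
        rw [hW, Finset.card_erase_of_mem hmY, hYcard]
        omega
      have hmW : m ∉ W := Finset.notMem_erase m Y
      have hWsub : W ⊆ Y := Finset.erase_subset m Y
      have hYins : insert m W = Y := Finset.insert_erase hmY
      -- the relation
      have hrel : ∑ Z : Finset (Fin n), Ient n j W Z •
          (fun X : {X : Finset (Fin n) // X.card = j + 1 + 1} => Ient n (j + 1) Z X.1) =
          (0 : {X : Finset (Fin n) // X.card = j + 1 + 1} → ℝ) := by
        funext X
        rw [Finset.sum_apply]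
        simp only [Pi.smul_apply, smul_eq_mul, Pi.zero_apply]
        exact ddzero n j W X.1 hWcard X.2
      have hsplit := Finset.add_sum_erase Finset.univ
        (fun Z : Finset (Fin n) => Ient n j W Z •
          (fun X : {X : Finset (Fin n) // X.card = j + 1 + 1} => Ient n (j + 1) Z X.1))
        (Finset.mem_univ Y)
      rw [hrel] at hsplit
      have hcY : Ient n j W Y ≠ 0 := Ient_ne_zero ⟨hWsub, hWcard, hYcard⟩
      -- rest is in span
      have hrest : ∑ Z ∈ Finset.univ.erase Y, Ient n j W Z •
          (fun X : {X : Finset (Fin n) // X.card = j + 1 + 1} => Ient n (j + 1) Z X.1) ∈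
          Submodule.span ℝ (Set.range
            (fun (Y : {Y : Finset (Fin n) // Y.card = j + 1 ∧ ∀ a ∈ Y, (a : ℕ) < n - 1}) =>
            (fun (X : {X : Finset (Fin n) // X.card = j + 1 + 1}) => Ient n (j + 1) Y.1 X.1))) := by
        apply Submodule.sum_mem
        intro Z hZ
        rcases eq_or_ne (Ient n j W Z) 0 with hz | hz
        · rw [hz, zero_smul]; exact Submodule.zero_mem _
        obtain ⟨hWZ, _, hZcard⟩ := Ient_cond hz
        have hZne : Z ≠ Y := Finset.ne_of_mem_erase hZ
        have hmZ : m ∉ Z := by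
          intro hmZ'
          have hins : insert m W ⊆ Z := Finset.insert_subset hmZ' hWZ
          have hcard : (insert m W).card = j + 1 := by
            rw [Finset.card_insert_of_notMem hmW, hWcard]
          have : insert m W = Z :=
            Finset.eq_of_subset_of_card_le hins (by rw [hZcard, hcard])
          exact hZne (this ▸ hYins)
        have hallZ : ∀ a ∈ Z, (a : ℕ) < n - 1 := by
          intro a haZ
          have h1 := a.isLt
          have h2 : a ≠ m := fun h => hmZ (h ▸ haZ)
          have h3 : (a : ℕ) ≠ n - 1 := fun h => h2 (Fin.ext (by rw [h, hmval]))
          omega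
        exact Submodule.smul_mem _ _ (Submodule.subset_span ⟨⟨Z, hZcard, hallZ⟩, rfl⟩)
      -- conclude
      have heq : (fun X : {X : Finset (Fin n) // X.card = j + 1 + 1} => Ient n (j + 1) Y X.1) =
          (-(Ient n j W Y)⁻¹) • ∑ Z ∈ Finset.univ.erase Y, Ient n j W Z •
          (fun X : {X : Finset (Fin n) // X.card = j + 1 + 1} => Ient n (j + 1) Z X.1) := by
        have h1 : Ient n j W Y •
            (fun X : {X : Finset (Fin n) // X.card = j + 1 + 1} => Ient n (j + 1) Y X.1) =
            -∑ Z ∈ Finset.univ.erase Y, Ient n j W Z •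
            (fun X : {X : Finset (Fin n) // X.card = j + 1 + 1} => Ient n (j + 1) Z X.1) := by
          exact eq_neg_of_add_eq_zero_left hsplit
        rw [neg_smul, ← smul_neg, ← h1, smul_smul, inv_mul_cancel₀ hcY, one_smul]
      have hfin : (fun X : {X : Finset (Fin n) // X.card = j + 1 + 1} =>
          Ient n (j + 1) Y X.1) ∈ Submodule.span ℝ (Set.range
            (fun (Y : {Y : Finset (Fin n) // Y.card = j + 1 ∧ ∀ a ∈ Y, (a : ℕ) < n - 1}) =>
            (fun (X : {X : Finset (Fin n) // X.card = j + 1 + 1}) => Ient n (j + 1) Y.1 X.1))) :=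
        heq ▸ Submodule.smul_mem _ _ hrest
      exact hfin
end

section
/- Let S be a (k−1)-element subset of {1,…,n} and let R = {r_1, r_2, r_3} be a 3-element subset of {1,…,n} disjoint from S. Then J(S∪{r_1,r_2}, S∪{r_2,r_3}) · J(S∪{r_2,r_3}, S∪{r_1,r_3}) · J(S∪{r_1,r_3}, S∪{r_1,r_2}) = −1. -/
/-- `J(X,Y) = I_{n,k}(X ∩ Y, X) · I_{n,k}(X ∩ Y, Y)` for `(k+1)`-element subsets `X, Y`
with `|X ∩ Y| = k`. -/
noncomputable def Jfun (n k : ℕ) (X Y : Finset (Fin n)) : ℝ :=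
  Ient n k (X ∩ Y) X * Ient n k (X ∩ Y) Y

lemma inter_aux {n : ℕ} (S : Finset (Fin n)) (a b c : Fin n)
    (ha : a ∉ S) (hc : c ∉ S) (hac : a ≠ c) :
    (S ∪ {a, b}) ∩ (S ∪ {b, c}) = S ∪ {b} := by
  ext x
  simp only [Finset.mem_inter, Finset.mem_union, Finset.mem_insert, Finset.mem_singleton]
  constructor
  · rintro ⟨h1 | h1 | h1, h2 | h2 | h2⟩ <;> subst_vars <;> tauto
  · rintro (h | h) <;> tauto

lemma Ient_pair {n k : ℕ} (hk : 1 ≤ k) (S : Finset (Fin n)) (hS : S.card = k - 1)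
    (a b : Fin n) (hab : a ≠ b) (ha : a ∉ S) (hb : b ∉ S) :
    Ient n k (S ∪ {a}) (S ∪ {a, b}) =
      (-1 : ℝ) ^ (S.filter (· < b)).card * (if a < b then -1 else 1) := by
  have hSa : (S ∪ {a}).card = k := by
    have : S ∪ {a} = insert a S := by
      ext x; simp only [Finset.mem_union, Finset.mem_singleton, Finset.mem_insert]; tauto
    rw [this, Finset.card_insert_of_notMem ha, hS]
    omega
  have hSab : (S ∪ {a, b}).card = k + 1 := by
    have : S ∪ {a, b} = insert a (insert b S) := by
      ext x
      simp only [Finset.mem_union, Finset.mem_insert, Finset.mem_singleton]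
      tauto
    rw [this, Finset.card_insert_of_notMem (by simp [ha, hab]),
      Finset.card_insert_of_notMem hb, hS]
    omega
  have hsub : S ∪ {a} ⊆ S ∪ {a, b} := by
    intro x hx
    simp only [Finset.mem_union, Finset.mem_insert, Finset.mem_singleton] at *
    tauto
  have hsdiff : (S ∪ {a, b}) \ (S ∪ {a}) = {b} := by
    ext x
    simp only [Finset.mem_sdiff, Finset.mem_union, Finset.mem_insert, Finset.mem_singleton]
    constructor
    · rintro ⟨h1 | h1 | h1, h2⟩ <;> tauto
    · rintro rfl
      refine ⟨by tauto, ?_⟩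
      push_neg
      exact ⟨hb, fun h => hab h.symm⟩
  rw [Ient, if_pos ⟨hsub, hSa, hSab⟩, hsdiff]
  have hfilt : ((S ∪ {a, b}).filter (fun x => ∀ y ∈ ({b} : Finset (Fin n)), x < y))
      = S.filter (· < b) ∪ ({a, b} : Finset (Fin n)).filter (· < b) := by
    rw [← Finset.filter_union]
    apply Finset.filter_congr
    intro x _
    simp
  rw [hfilt]
  have hab2 : ({a, b} : Finset (Fin n)).filter (· < b) = if a < b then {a} else ∅ := by
    split_ifs with h
    · ext x
      simp only [Finset.mem_filter, Finset.mem_insert, Finset.mem_singleton]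
      constructor
      · rintro ⟨rfl | rfl, h2⟩
        · rfl
        · exact absurd h2 (lt_irrefl _)
      · rintro rfl; exact ⟨Or.inl rfl, h⟩
    · ext x
      simp only [Finset.mem_filter, Finset.mem_insert, Finset.mem_singleton,
        Finset.notMem_empty, iff_false]
      rintro ⟨rfl | rfl, h2⟩
      · exact h h2
      · exact lt_irrefl _ h2
  rw [hab2]
  split_ifs with h
  · have hdisj : Disjoint (S.filter (· < b)) ({a} : Finset (Fin n)) := by
      simp [Finset.disjoint_singleton_right, ha]
    rw [Finset.card_union_of_disjoint hdisj, Finset.card_singleton, pow_succ]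
  · simp

lemma if_pair_mul {n : ℕ} (a b : Fin n) (hab : a ≠ b) :
    ((if a < b then (-1 : ℝ) else 1) * (if b < a then (-1 : ℝ) else 1)) = -1 := by
  rcases lt_trichotomy a b with h | h | h
  · rw [if_pos h, if_neg (asymm h)]; ring
  · exact absurd h hab
  · rw [if_neg (asymm h), if_pos h]; ring

/-- For a `(k-1)`-element subset `S` and a disjoint `3`-element subset `{r₁, r₂, r₃}` of
`{1,…,n}`, we have
`J(S∪{r₁,r₂}, S∪{r₂,r₃}) · J(S∪{r₂,r₃}, S∪{r₁,r₃}) · J(S∪{r₁,r₃}, S∪{r₁,r₂}) = -1`. -/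
theorem stmt2 (n k : ℕ) (hk : 1 ≤ k) (hkn : k < n)
    (S : Finset (Fin n)) (hS : S.card = k - 1)
    (r₁ r₂ r₃ : Fin n) (h12 : r₁ ≠ r₂) (h13 : r₁ ≠ r₃) (h23 : r₂ ≠ r₃)
    (hdisj : Disjoint S ({r₁, r₂, r₃} : Finset (Fin n))) :
    Jfun n k (S ∪ {r₁, r₂}) (S ∪ {r₂, r₃}) *
      Jfun n k (S ∪ {r₂, r₃}) (S ∪ {r₁, r₃}) *
      Jfun n k (S ∪ {r₁, r₃}) (S ∪ {r₁, r₂}) = -1 := by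
  have h1 : r₁ ∉ S := Finset.disjoint_left.mp hdisj.symm (by simp)
  have h2 : r₂ ∉ S := Finset.disjoint_left.mp hdisj.symm (by simp)
  have h3 : r₃ ∉ S := Finset.disjoint_left.mp hdisj.symm (by simp)
  have e12 : ({r₁, r₂} : Finset (Fin n)) = {r₂, r₁} := Finset.pair_comm _ _
  have e13 : ({r₁, r₃} : Finset (Fin n)) = {r₃, r₁} := Finset.pair_comm _ _
  have e23 : ({r₂, r₃} : Finset (Fin n)) = {r₃, r₂} := Finset.pair_comm _ _
  have i1 : (S ∪ {r₁, r₂}) ∩ (S ∪ {r₂, r₃}) = S ∪ {r₂} := inter_aux S r₁ r₂ r₃ h1 h3 h13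
  have i2 : (S ∪ {r₂, r₃}) ∩ (S ∪ {r₁, r₃}) = S ∪ {r₃} := by
    rw [show ({r₁, r₃} : Finset (Fin n)) = {r₃, r₁} from Finset.pair_comm _ _]
    exact inter_aux S r₂ r₃ r₁ h2 h1 (Ne.symm h12)
  have i3 : (S ∪ {r₁, r₃}) ∩ (S ∪ {r₁, r₂}) = S ∪ {r₁} := by
    rw [e13]
    exact inter_aux S r₃ r₁ r₂ h3 h2 (Ne.symm h23)
  rw [Jfun, Jfun, Jfun, i1, i2, i3]
  have E1 : Ient n k (S ∪ {r₂}) (S ∪ {r₁, r₂}) =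
      (-1 : ℝ) ^ (S.filter (· < r₁)).card * (if r₂ < r₁ then -1 else 1) := by
    rw [e12]; exact Ient_pair hk S hS r₂ r₁ (Ne.symm h12) h2 h1
  have E2 : Ient n k (S ∪ {r₂}) (S ∪ {r₂, r₃}) =
      (-1 : ℝ) ^ (S.filter (· < r₃)).card * (if r₂ < r₃ then -1 else 1) :=
    Ient_pair hk S hS r₂ r₃ h23 h2 h3
  have E3 : Ient n k (S ∪ {r₃}) (S ∪ {r₂, r₃}) =
      (-1 : ℝ) ^ (S.filter (· < r₂)).card * (if r₃ < r₂ then -1 else 1) := by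
    rw [e23]; exact Ient_pair hk S hS r₃ r₂ (Ne.symm h23) h3 h2
  have E4 : Ient n k (S ∪ {r₃}) (S ∪ {r₁, r₃}) =
      (-1 : ℝ) ^ (S.filter (· < r₁)).card * (if r₃ < r₁ then -1 else 1) := by
    rw [e13]; exact Ient_pair hk S hS r₃ r₁ (Ne.symm h13) h3 h1
  have E5 : Ient n k (S ∪ {r₁}) (S ∪ {r₁, r₃}) =
      (-1 : ℝ) ^ (S.filter (· < r₃)).card * (if r₁ < r₃ then -1 else 1) :=
    Ient_pair hk S hS r₁ r₃ h13 h1 h3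
  have E6 : Ient n k (S ∪ {r₁}) (S ∪ {r₁, r₂}) =
      (-1 : ℝ) ^ (S.filter (· < r₂)).card * (if r₁ < r₂ then -1 else 1) :=
    Ient_pair hk S hS r₁ r₂ h12 h1 h2
  rw [E1, E2, E3, E4, E5, E6]
  set A₁ : ℝ := (-1 : ℝ) ^ (S.filter (· < r₁)).card with hA₁
  set A₂ : ℝ := (-1 : ℝ) ^ (S.filter (· < r₂)).card with hA₂
  set A₃ : ℝ := (-1 : ℝ) ^ (S.filter (· < r₃)).card with hA₃
  set v₁₂ : ℝ := (if r₁ < r₂ then (-1 : ℝ) else 1) with hv₁₂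
  set v₂₁ : ℝ := (if r₂ < r₁ then (-1 : ℝ) else 1) with hv₂₁
  set v₁₃ : ℝ := (if r₁ < r₃ then (-1 : ℝ) else 1) with hv₁₃
  set v₃₁ : ℝ := (if r₃ < r₁ then (-1 : ℝ) else 1) with hv₃₁
  set v₂₃ : ℝ := (if r₂ < r₃ then (-1 : ℝ) else 1) with hv₂₃
  set v₃₂ : ℝ := (if r₃ < r₂ then (-1 : ℝ) else 1) with hv₃₂
  have q1 : A₁ * A₁ = 1 := by rw [hA₁, ← pow_add]; exact Even.neg_one_pow ⟨_, rfl⟩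
  have q2 : A₂ * A₂ = 1 := by rw [hA₂, ← pow_add]; exact Even.neg_one_pow ⟨_, rfl⟩
  have q3 : A₃ * A₃ = 1 := by rw [hA₃, ← pow_add]; exact Even.neg_one_pow ⟨_, rfl⟩
  have p1 : v₁₂ * v₂₁ = -1 := if_pair_mul r₁ r₂ h12
  have p2 : v₂₃ * v₃₂ = -1 := if_pair_mul r₂ r₃ h23
  have p3 : v₃₁ * v₁₃ = -1 := if_pair_mul r₃ r₁ (Ne.symm h13)
  have : A₁ * v₂₁ * (A₃ * v₂₃) * (A₂ * v₃₂ * (A₁ * v₃₁)) * (A₃ * v₁₃ * (A₂ * v₁₂)) =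
      (A₁ * A₁) * ((A₂ * A₂) * ((A₃ * A₃) * ((v₁₂ * v₂₁) * ((v₂₃ * v₃₂) * (v₃₁ * v₁₃))))) := by
    ring
  rw [this, q1, q2, q3, p1, p2, p3]
  norm_num
end

section
/- The matrix P_{n,k} = (1/n)·I_{n,k}ᵀ·I_{n,k} is the orthogonal projection onto the row space of Î_{n,k}: P_{n,k} is symmetric, P_{n,k}² = P_{n,k}, and for every vector v in the space indexed by the (k+1)-element subsets of {1,…,n}, P_{n,k} v lies in the row space of Î_{n,k} and v − P_{n,k} v is orthogonal to the row space of Î_{n,k}. -/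
open Matrix
/-- The matrix `I_{n,k}`, with rows indexed by `k`-element subsets and columns indexed by
`(k+1)`-element subsets of `Fin n`. -/
noncomputable def Imat (n k : ℕ) :
    Matrix {Y : Finset (Fin n) // Y.card = k} {X : Finset (Fin n) // X.card = k + 1} ℝ :=
  Matrix.of fun Y X => Ient n k Y.1 X.1

/-- The matrix `P_{n,k} = (1/n)·I_{n,k}ᵀ·I_{n,k}`. -/
noncomputable def Pmat (n k : ℕ) :
    Matrix {X : Finset (Fin n) // X.card = k + 1} {X : Finset (Fin n) // X.card = k + 1} ℝ :=
  (n : ℝ)⁻¹ • ((Imat n k)ᵀ * Imat n k)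

/-- The row space of `Î_{n,k}`: the span of the rows of `I_{n,k}` indexed by the
`k`-element subsets of `{1,…,n-1}`. -/
noncomputable def rowSpaceHat (n k : ℕ) :
    Submodule ℝ ({X : Finset (Fin n) // X.card = k + 1} → ℝ) :=
  Submodule.span ℝ
    (Set.range (fun (Y : {Y : Finset (Fin n) // Y.card = k ∧ ∀ a ∈ Y, (a : ℕ) < n - 1}) =>
      (fun (X : {X : Finset (Fin n) // X.card = k + 1}) => Ient n k Y.1 X.1)))



lemma Ient_zero {k : ℕ} {Y X : Finset (Fin n)}
    (h : ¬(Y ⊆ X ∧ Y.card = k ∧ X.card = k + 1)) : Ient n k Y X = 0 := if_neg h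

lemma exists_insert_of_subset {k : ℕ} {Y X : Finset (Fin n)} (hs : Y ⊆ X)
    (hY : Y.card = k) (hX : X.card = k + 1) : ∃ x, x ∉ Y ∧ X = insert x Y := by
  have h1 : (X \ Y).card = 1 := by rw [Finset.card_sdiff_of_subset hs, hY, hX]; omega
  obtain ⟨x, hx⟩ := Finset.card_eq_one.mp h1
  have hxX : x ∈ X \ Y := hx ▸ Finset.mem_singleton_self x
  refine ⟨x, (Finset.mem_sdiff.mp hxX).2, ?_⟩
  refine (Finset.eq_of_subset_of_card_le ?_ ?_).symm
  · exact Finset.insert_subset (Finset.mem_sdiff.mp hxX).1 hs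
  · rw [Finset.card_insert_of_notMem (Finset.mem_sdiff.mp hxX).2, hY, hX]

lemma Ient_insert {k : ℕ} {Y : Finset (Fin n)} {x : Fin n} (hx : x ∉ Y)
    (hY : Y.card = k) : Ient n k Y (insert x Y) = (-1 : ℝ) ^ (Y.filter (· < x)).card := by
  have hc : (insert x Y).card = k + 1 := by rw [Finset.card_insert_of_notMem hx, hY]
  rw [Ient, if_pos ⟨Finset.subset_insert x Y, hY, hc⟩]
  congr 1
  have hsd : insert x Y \ Y = {x} := by
    ext a; simp only [Finset.mem_sdiff, Finset.mem_insert, Finset.mem_singleton]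
    constructor
    · rintro ⟨h1 | h1, h2⟩ <;> tauto
    · rintro rfl; exact ⟨Or.inl rfl, hx⟩
  rw [hsd]
  simp only [Finset.mem_singleton, forall_eq, Finset.filter_insert, lt_irrefl, if_false]

lemma card_filter_insert {Z : Finset (Fin n)} {b b' : Fin n} (hb : b ∉ Z) :
    ((insert b Z).filter (· < b')).card
      = (Z.filter (· < b')).card + (if b < b' then 1 else 0) := by
  rw [Finset.filter_insert]
  by_cases h : b < b'
  · rw [if_pos h, if_pos h, Finset.card_insert_of_notMem (by simp [hb])]
  · rw [if_neg h, if_neg h, add_zero]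

lemma Ient_mul_self {k : ℕ} {Y X : Finset (Fin n)} (hs : Y ⊆ X)
    (hY : Y.card = k) (hX : X.card = k + 1) : Ient n k Y X * Ient n k Y X = 1 := by
  rw [Ient, if_pos ⟨hs, hY, hX⟩, ← pow_add, ← two_mul, pow_mul, neg_one_sq, one_pow]


theorem lemA (n m : ℕ) : Imat n m * Imat n (m + 1) = 0 := by
  ext Z X
  simp only [Matrix.mul_apply, Matrix.zero_apply, Imat, Matrix.of_apply]
  by_cases hZX : Z.1 ⊆ X.1
  · have hZ : Z.1.card = m := Z.2
    have hX : X.1.card = m + 2 := X.2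
    have hcard : (X.1 \ Z.1).card = 2 := by rw [Finset.card_sdiff_of_subset hZX, hZ, hX]; omega
    obtain ⟨b, b', hbb', hsd⟩ := Finset.card_eq_two.mp hcard
    have hbm : b ∈ X.1 \ Z.1 := by rw [hsd]; simp
    have hb'm : b' ∈ X.1 \ Z.1 := by rw [hsd]; simp
    have hbZ : b ∉ Z.1 := (Finset.mem_sdiff.mp hbm).2
    have hb'Z : b' ∉ Z.1 := (Finset.mem_sdiff.mp hb'm).2
    have hY1c : (insert b Z.1).card = m + 1 := by
      rw [Finset.card_insert_of_notMem hbZ, hZ]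
    have hY2c : (insert b' Z.1).card = m + 1 := by
      rw [Finset.card_insert_of_notMem hb'Z, hZ]
    have hXeq : X.1 = insert b' (insert b Z.1) := by
      have h1 : Z.1 ∪ (X.1 \ Z.1) = X.1 := Finset.union_sdiff_of_subset hZX
      rw [← h1, hsd]
      ext a
      simp only [Finset.mem_union, Finset.mem_insert, Finset.mem_singleton]
      tauto
    have hXeq2 : X.1 = insert b (insert b' Z.1) := by rw [hXeq, Finset.insert_comm]
    have key : ∑ Y : {Y : Finset (Fin n) // Y.card = m + 1},
        Ient n m Z.1 Y.1 * Ient n (m + 1) Y.1 X.1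
        = Ient n m Z.1 (insert b Z.1) * Ient n (m + 1) (insert b Z.1) X.1
          + Ient n m Z.1 (insert b' Z.1) * Ient n (m + 1) (insert b' Z.1) X.1 := by
      refine Finset.sum_eq_add (⟨insert b Z.1, hY1c⟩ : {Y : Finset (Fin n) // Y.card = m+1})
        ⟨insert b' Z.1, hY2c⟩ ?_ ?_ (fun h => absurd (Finset.mem_univ _) h)
        (fun h => absurd (Finset.mem_univ _) h)
      · intro h
        have : b' ∈ insert b Z.1 := by
          rw [Subtype.ext_iff] at h; simp only at h; rw [h]; simp
        simp only [Finset.mem_insert] at this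
        rcases this with h' | h'
        · exact hbb' h'.symm
        · exact hb'Z h'
      · rintro Y - ⟨h1, h2⟩
        by_cases hzy : Z.1 ⊆ Y.1
        · by_cases hyx : Y.1 ⊆ X.1
          · obtain ⟨a, haZ, haeq⟩ := exists_insert_of_subset hzy hZ Y.2
            have haX : a ∈ X.1 \ Z.1 := by
              refine Finset.mem_sdiff.mpr ⟨hyx (haeq ▸ Finset.mem_insert_self a Z.1), haZ⟩
            rw [hsd] at haX
            simp only [Finset.mem_insert, Finset.mem_singleton] at haX
            rcases haX with rfl | rfl
            · exact absurd (Subtype.ext haeq) h1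
            · exact absurd (Subtype.ext haeq) h2
          · rw [Ient_zero (k := m+1) (fun hc => hyx hc.1), mul_zero]
        · rw [Ient_zero (k := m) (fun hc => hzy hc.1), zero_mul]
    rw [key]
    rw [Ient_insert hbZ hZ, Ient_insert hb'Z hZ]
    rw [hXeq, Ient_insert (by simp [hb'Z, Ne.symm hbb']) hY1c]
    rw [← hXeq, hXeq2, Ient_insert (by simp [hbZ, hbb']) hY2c]
    rw [card_filter_insert hbZ, card_filter_insert hb'Z]
    rcases hbb'.lt_or_gt with h | h
    · rw [if_pos h, if_neg (not_lt.mpr h.le)]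
      simp [pow_add]
      ring
    · rw [if_neg (not_lt.mpr h.le), if_pos h]
      simp [pow_add]
      ring
  · apply Finset.sum_eq_zero
    intro Y _
    by_cases hzy : Z.1 ⊆ Y.1
    · by_cases hyx : Y.1 ⊆ X.1
      · exact absurd (hzy.trans hyx) hZX
      · rw [Ient_zero (k := m+1) (fun hc => hyx hc.1), mul_zero]
    · rw [Ient_zero (k := m) (fun hc => hzy hc.1), zero_mul]


theorem lemB (n m : ℕ) (hn : m + 1 ≤ n) :
    Imat n (m + 1) * (Imat n (m + 1))ᵀ + (Imat n m)ᵀ * Imat n m = (n : ℝ) • 1 := by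
  ext Y Y'
  simp only [Matrix.add_apply, Matrix.mul_apply, Matrix.transpose_apply, Imat,
    Matrix.of_apply, Matrix.smul_apply, Matrix.one_apply, smul_eq_mul]
  by_cases hYY : Y = Y'
  · subst hYY
    rw [if_pos rfl, mul_one]
    have h1 : ∑ X : {X : Finset (Fin n) // X.card = m + 1 + 1},
        Ient n (m + 1) Y.1 X.1 * Ient n (m + 1) Y.1 X.1
        = ((n : ℝ) - (m + 1)) := by
      have he : ∀ X : {X : Finset (Fin n) // X.card = m + 1 + 1},
          Ient n (m + 1) Y.1 X.1 * Ient n (m + 1) Y.1 X.1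
            = if Y.1 ⊆ X.1 then (1 : ℝ) else 0 := by
        intro X
        by_cases h : Y.1 ⊆ X.1
        · rw [if_pos h]; exact Ient_mul_self h Y.2 X.2
        · rw [if_neg h, Ient_zero (fun hc => h hc.1), mul_zero]
      rw [Finset.sum_congr rfl (fun X _ => he X), Finset.sum_boole]
      have hbij : (Finset.univ.filter
          (fun X : {X : Finset (Fin n) // X.card = m + 1 + 1} => Y.1 ⊆ X.1)).card
          = Y.1ᶜ.card := by
        refine (Finset.card_bij
          (fun x hx => (⟨insert x Y.1, by
            rw [Finset.card_insert_of_notMem (Finset.mem_compl.mp hx), Y.2]⟩ :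
            {X : Finset (Fin n) // X.card = m + 1 + 1})) ?_ ?_ ?_).symm
        · intro x hx
          simp only [Finset.mem_filter, Finset.mem_univ, true_and]
          exact Finset.subset_insert x Y.1
        · intro x hx x' hx' heq
          rw [Subtype.ext_iff] at heq
          simp only at heq
          have : x ∈ insert x' Y.1 := heq ▸ Finset.mem_insert_self x Y.1
          rcases Finset.mem_insert.mp this with h | h
          · exact h
          · exact absurd h (Finset.mem_compl.mp hx)
        · intro X hX
          simp only [Finset.mem_filter, Finset.mem_univ, true_and] at hX
          obtain ⟨x, hxY, hXeq⟩ := exists_insert_of_subset hX Y.2 X.2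
          exact ⟨x, Finset.mem_compl.mpr hxY, Subtype.ext hXeq.symm⟩
      rw [hbij, Finset.card_compl, Y.2, Fintype.card_fin]
      push_cast [Nat.cast_sub hn]
      ring
    have h2 : ∑ Z : {Z : Finset (Fin n) // Z.card = m},
        Ient n m Z.1 Y.1 * Ient n m Z.1 Y.1 = ((m : ℝ) + 1) := by
      have he : ∀ Z : {Z : Finset (Fin n) // Z.card = m},
          Ient n m Z.1 Y.1 * Ient n m Z.1 Y.1 = if Z.1 ⊆ Y.1 then (1 : ℝ) else 0 := by
        intro Z
        by_cases h : Z.1 ⊆ Y.1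
        · rw [if_pos h]; exact Ient_mul_self h Z.2 Y.2
        · rw [if_neg h, Ient_zero (fun hc => h hc.1), mul_zero]
      rw [Finset.sum_congr rfl (fun Z _ => he Z), Finset.sum_boole]
      have hbij : (Finset.univ.filter
          (fun Z : {Z : Finset (Fin n) // Z.card = m} => Z.1 ⊆ Y.1)).card
          = Y.1.card := by
        refine (Finset.card_bij
          (fun z hz => (⟨Y.1.erase z, by
            simp [Finset.card_erase_of_mem hz, Y.2]⟩ : {Z : Finset (Fin n) // Z.card = m}))
          ?_ ?_ ?_).symm
        · intro z hz
          simp only [Finset.mem_filter, Finset.mem_univ, true_and]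
          exact Finset.erase_subset z Y.1
        · intro z hz z' hz' heq
          rw [Subtype.ext_iff] at heq
          simp only at heq
          by_contra hne
          have : z ∈ Y.1.erase z' := Finset.mem_erase.mpr ⟨hne, hz⟩
          rw [← heq] at this
          exact (Finset.mem_erase.mp this).1 rfl
        · intro Z hZ
          simp only [Finset.mem_filter, Finset.mem_univ, true_and] at hZ
          have h1 : (Y.1 \ Z.1).card = 1 := by
            rw [Finset.card_sdiff_of_subset hZ, Y.2, Z.2]; omega
          obtain ⟨z, hz⟩ := Finset.card_eq_one.mp h1
          have hzY : z ∈ Y.1 := by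
            have : z ∈ Y.1 \ Z.1 := hz ▸ Finset.mem_singleton_self z
            exact (Finset.mem_sdiff.mp this).1
          refine ⟨z, hzY, Subtype.ext ?_⟩
          simp only
          rw [Finset.erase_eq, ← hz, Finset.sdiff_sdiff_eq_self hZ]
      rw [hbij, Y.2]
      push_cast; ring
    rw [h1, h2]; ring
  · rw [if_neg hYY, mul_zero]
    have hne1 : Y.1 ≠ Y'.1 := fun h => hYY (Subtype.ext h)
    by_cases hu : (Y.1 ∪ Y'.1).card = m + 2
    · -- |Y ∪ Y'| = m+2 case
      have hZ0 : (Y.1 ∩ Y'.1).card = m := by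
        have := Finset.card_union_add_card_inter Y.1 Y'.1
        rw [hu, Y.2, Y'.2] at this; omega
      have hYd : (Y.1 \ Y'.1).card = 1 := by
        have := Finset.card_inter_add_card_sdiff Y.1 Y'.1
        rw [hZ0, Y.2] at this; omega
      have hY'd : (Y'.1 \ Y.1).card = 1 := by
        have := Finset.card_inter_add_card_sdiff Y'.1 Y.1
        rw [Finset.inter_comm, hZ0, Y'.2] at this; omega
      obtain ⟨b, hb⟩ := Finset.card_eq_one.mp hYd
      obtain ⟨b', hb'⟩ := Finset.card_eq_one.mp hY'd
      have hbY : b ∈ Y.1 ∧ b ∉ Y'.1 := by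
        have : b ∈ Y.1 \ Y'.1 := hb ▸ Finset.mem_singleton_self b
        exact Finset.mem_sdiff.mp this
      have hb'Y : b' ∈ Y'.1 ∧ b' ∉ Y.1 := by
        have : b' ∈ Y'.1 \ Y.1 := hb' ▸ Finset.mem_singleton_self b'
        exact Finset.mem_sdiff.mp this
      have hbb' : b ≠ b' := fun h => hb'Y.2 (h ▸ hbY.1)
      have hbZ0 : b ∉ Y.1 ∩ Y'.1 := fun h => hbY.2 (Finset.mem_inter.mp h).2
      have hb'Z0 : b' ∉ Y.1 ∩ Y'.1 := fun h => hb'Y.2 (Finset.mem_inter.mp h).1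
      have hYeq : Y.1 = insert b (Y.1 ∩ Y'.1) := by
        ext a
        simp only [Finset.mem_insert, Finset.mem_inter]
        constructor
        · intro ha
          by_cases h' : a ∈ Y'.1
          · exact Or.inr ⟨ha, h'⟩
          · left
            have : a ∈ Y.1 \ Y'.1 := Finset.mem_sdiff.mpr ⟨ha, h'⟩
            rw [hb] at this; exact Finset.mem_singleton.mp this
        · rintro (rfl | ⟨h, -⟩); exacts [hbY.1, h]
      have hY'eq : Y'.1 = insert b' (Y.1 ∩ Y'.1) := by
        ext a
        simp only [Finset.mem_insert, Finset.mem_inter]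
        constructor
        · intro ha
          by_cases h' : a ∈ Y.1
          · exact Or.inr ⟨h', ha⟩
          · left
            have : a ∈ Y'.1 \ Y.1 := Finset.mem_sdiff.mpr ⟨ha, h'⟩
            rw [hb'] at this; exact Finset.mem_singleton.mp this
        · rintro (rfl | ⟨-, h⟩); exacts [hb'Y.1, h]
      have hX0c : (insert b' Y.1).card = m + 1 + 1 := by
        rw [Finset.card_insert_of_notMem hb'Y.2, Y.2]
      have hX0u : insert b' Y.1 = Y.1 ∪ Y'.1 := by
        conv_rhs => rw [hY'eq]
        rw [Finset.union_insert, Finset.union_eq_left.mpr Finset.inter_subset_left]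
      have hX0eq2 : insert b' Y.1 = insert b Y'.1 := by
        conv_lhs => rw [hYeq]
        conv_rhs => rw [hY'eq]
        exact Finset.insert_comm b' b _
      have h1 : ∑ X : {X : Finset (Fin n) // X.card = m + 1 + 1},
          Ient n (m + 1) Y.1 X.1 * Ient n (m + 1) Y'.1 X.1
          = Ient n (m + 1) Y.1 (insert b' Y.1) * Ient n (m + 1) Y'.1 (insert b' Y.1) := by
        refine Finset.sum_eq_single
          (⟨insert b' Y.1, hX0c⟩ : {X : Finset (Fin n) // X.card = m + 1 + 1}) ?_
          (fun h => absurd (Finset.mem_univ _) h)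
        rintro X - hXne
        by_cases hyx : Y.1 ⊆ X.1
        · by_cases hy'x : Y'.1 ⊆ X.1
          · exfalso
            apply hXne
            refine Subtype.ext ?_
            simp only
            have hsub : Y.1 ∪ Y'.1 ⊆ X.1 := Finset.union_subset hyx hy'x
            have := Finset.eq_of_subset_of_card_le hsub (by rw [X.2, hu])
            rw [← this, hX0u]
          · rw [Ient_zero (k := m + 1) (fun hc => hy'x hc.1), mul_zero]
        · rw [Ient_zero (k := m + 1) (fun hc => hyx hc.1), zero_mul]
      have h2 : ∑ Z : {Z : Finset (Fin n) // Z.card = m},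
          Ient n m Z.1 Y.1 * Ient n m Z.1 Y'.1
          = Ient n m (Y.1 ∩ Y'.1) Y.1 * Ient n m (Y.1 ∩ Y'.1) Y'.1 := by
        refine Finset.sum_eq_single
          (⟨Y.1 ∩ Y'.1, hZ0⟩ : {Z : Finset (Fin n) // Z.card = m}) ?_
          (fun h => absurd (Finset.mem_univ _) h)
        rintro Z - hZne
        by_cases hzy : Z.1 ⊆ Y.1
        · by_cases hzy' : Z.1 ⊆ Y'.1
          · exfalso
            apply hZne
            refine Subtype.ext ?_
            simp only
            exact Finset.eq_of_subset_of_card_le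
              (Finset.subset_inter hzy hzy') (by rw [hZ0, Z.2])
          · rw [Ient_zero (k := m) (fun hc => hzy' hc.1), mul_zero]
        · rw [Ient_zero (k := m) (fun hc => hzy hc.1), zero_mul]
      rw [h1, h2]
      set Z0 := Y.1 ∩ Y'.1 with hZ0def
      have e1 : Ient n (m + 1) Y.1 (insert b' Y.1)
          = (-1 : ℝ) ^ ((Y.1.filter (· < b')).card) := Ient_insert hb'Y.2 Y.2
      have e2 : Ient n (m + 1) Y'.1 (insert b' Y.1)
          = (-1 : ℝ) ^ ((Y'.1.filter (· < b)).card) := by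
        rw [hX0eq2]; exact Ient_insert hbY.2 Y'.2
      have e3 : Ient n m Z0 Y.1
          = (-1 : ℝ) ^ ((Z0.filter (· < b)).card) := by
        conv_lhs => rw [hYeq]
        exact Ient_insert hbZ0 hZ0
      have e4 : Ient n m Z0 Y'.1
          = (-1 : ℝ) ^ ((Z0.filter (· < b')).card) := by
        conv_lhs => rw [hY'eq]
        exact Ient_insert hb'Z0 hZ0
      have e5 : (Y.1.filter (· < b')).card
          = ((Z0.filter (· < b')).card) + (if b < b' then 1 else 0) := by
        conv_lhs => rw [hYeq]
        exact card_filter_insert hbZ0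
      have e6 : (Y'.1.filter (· < b)).card
          = ((Z0.filter (· < b)).card) + (if b' < b then 1 else 0) := by
        conv_lhs => rw [hY'eq]
        exact card_filter_insert hb'Z0
      rw [e1, e2, e3, e4, e5, e6]
      rcases hbb'.lt_or_gt with h | h
      · rw [if_pos h, if_neg (not_lt.mpr h.le)]
        simp [pow_add]
        ring
      · rw [if_neg (not_lt.mpr h.le), if_pos h]
        simp [pow_add]
        ring
    · -- |Y ∪ Y'| > m+2 case: everything vanishes
      have hge : m + 2 ≤ (Y.1 ∪ Y'.1).card := by
        have hne' : ¬ Y'.1 ⊆ Y.1 := fun h =>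
          hne1 ((Finset.eq_of_subset_of_card_le h (by rw [Y.2, Y'.2])).symm)
        have hss : Y.1 ⊂ Y.1 ∪ Y'.1 :=
          (Finset.subset_union_left).ssubset_of_ne
            (fun h => hne' (h ▸ Finset.subset_union_right))
        have := Finset.card_lt_card hss
        rw [Y.2] at this; omega
      have hgt : m + 2 < (Y.1 ∪ Y'.1).card := lt_of_le_of_ne hge (fun h => hu h.symm)
      have h1 : ∑ X : {X : Finset (Fin n) // X.card = m + 1 + 1},
          Ient n (m + 1) Y.1 X.1 * Ient n (m + 1) Y'.1 X.1 = 0 := by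
        apply Finset.sum_eq_zero
        rintro X -
        by_cases hyx : Y.1 ⊆ X.1
        · by_cases hy'x : Y'.1 ⊆ X.1
          · exfalso
            have := Finset.card_le_card (Finset.union_subset hyx hy'x)
            rw [X.2] at this; omega
          · rw [Ient_zero (k := m + 1) (fun hc => hy'x hc.1), mul_zero]
        · rw [Ient_zero (k := m + 1) (fun hc => hyx hc.1), zero_mul]
      have h2 : ∑ Z : {Z : Finset (Fin n) // Z.card = m},
          Ient n m Z.1 Y.1 * Ient n m Z.1 Y'.1 = 0 := by
        apply Finset.sum_eq_zero
        rintro Z -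
        by_cases hzy : Z.1 ⊆ Y.1
        · by_cases hzy' : Z.1 ⊆ Y'.1
          · exfalso
            have h3 := Finset.card_le_card (Finset.subset_inter hzy hzy')
            have h4 := Finset.card_union_add_card_inter Y.1 Y'.1
            rw [Y.2, Y'.2] at h4
            rw [Z.2] at h3
            omega
          · rw [Ient_zero (k := m) (fun hc => hzy' hc.1), mul_zero]
        · rw [Ient_zero (k := m) (fun hc => hzy hc.1), zero_mul]
      rw [h1, h2]; ring


theorem lemM (n m : ℕ) (hn : m + 1 ≤ n) :
    (Imat n (m + 1))ᵀ * (Imat n (m + 1) * (Imat n (m + 1))ᵀ) = (n : ℝ) • (Imat n (m + 1))ᵀ := by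
  have hB := lemB n m hn
  have hA := lemA n m
  have hsub : Imat n (m + 1) * (Imat n (m + 1))ᵀ
      = (n : ℝ) • 1 - (Imat n m)ᵀ * Imat n m := eq_sub_of_add_eq hB
  rw [hsub, Matrix.mul_sub, ← Matrix.mul_assoc, ← Matrix.transpose_mul, hA,
    Matrix.transpose_zero, Matrix.zero_mul, sub_zero, Matrix.mul_smul, Matrix.mul_one]

theorem row_mem (n m : ℕ) (Y : {Y : Finset (Fin n) // Y.card = m + 1}) :
    (fun X : {X : Finset (Fin n) // X.card = m + 1 + 1} => Ient n (m + 1) Y.1 X.1)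
      ∈ rowSpaceHat n (m + 1) := by
  by_cases hY : ∀ a ∈ Y.1, (a : ℕ) < n - 1
  · exact Submodule.subset_span ⟨⟨Y.1, Y.2, hY⟩, rfl⟩
  · push_neg at hY
    obtain ⟨t, htY, htge⟩ := hY
    have htval : (t : ℕ) = n - 1 := by have := t.isLt; omega
    have hZc : (Y.1.erase t).card = m := by
      rw [Finset.card_erase_of_mem htY, Y.2]
      omega
    have hZY : Y.1.erase t ⊆ Y.1 := Finset.erase_subset t Y.1
    have hYins : Y.1 = insert t (Y.1.erase t) := (Finset.insert_erase htY).symm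
    have htZ : t ∉ Y.1.erase t := Finset.notMem_erase t Y.1
    have hZlt : ∀ z ∈ Y.1.erase t, (z : ℕ) < n - 1 := by
      intro z hz
      have hzt : z ≠ t := (Finset.mem_erase.mp hz).1
      have h1 := z.isLt
      by_contra h
      push_neg at h
      have h2 : (z : ℕ) = n - 1 := by omega
      exact hzt (Fin.ext (by rw [h2, htval]))
    set s : ℝ := Ient n m (Y.1.erase t) Y.1 with hsdef
    have hs : s * s = 1 := Ient_mul_self hZY hZc Y.2
    have hrel : ∀ X : {X : Finset (Fin n) // X.card = m + 1 + 1},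
        ∑ Y' : {Y' : Finset (Fin n) // Y'.card = m + 1},
          Ient n m (Y.1.erase t) Y'.1 * Ient n (m + 1) Y'.1 X.1 = 0 := by
      intro X
      have h0 := congrFun (congrFun (lemA n m) ⟨Y.1.erase t, hZc⟩) X
      simpa [Imat, Matrix.mul_apply] using h0
    have key : (fun X : {X : Finset (Fin n) // X.card = m + 1 + 1} => Ient n (m + 1) Y.1 X.1)
        = ∑ Y' ∈ Finset.univ.erase Y,
            (-s * Ient n m (Y.1.erase t) Y'.1) •
              (fun X : {X : Finset (Fin n) // X.card = m + 1 + 1} =>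
                Ient n (m + 1) Y'.1 X.1) := by
      funext X
      rw [Finset.sum_apply]
      have h1 := hrel X
      rw [← Finset.add_sum_erase _ _ (Finset.mem_univ Y)] at h1
      have h2 : ∑ Y' ∈ Finset.univ.erase Y,
          Ient n m (Y.1.erase t) Y'.1 * Ient n (m + 1) Y'.1 X.1
          = -(s * Ient n (m + 1) Y.1 X.1) := by
        rw [← hsdef] at h1
        linarith [h1]
      have h3 : ∑ Y' ∈ Finset.univ.erase Y,
          ((-s * Ient n m (Y.1.erase t) Y'.1) •
            (fun X : {X : Finset (Fin n) // X.card = m + 1 + 1} =>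
              Ient n (m + 1) Y'.1 X.1)) X
          = -s * ∑ Y' ∈ Finset.univ.erase Y,
              Ient n m (Y.1.erase t) Y'.1 * Ient n (m + 1) Y'.1 X.1 := by
        rw [Finset.mul_sum]
        refine Finset.sum_congr rfl (fun Y' _ => ?_)
        simp only [Pi.smul_apply, smul_eq_mul]
        ring
      rw [h3, h2]
      have : -s * -(s * Ient n (m + 1) Y.1 X.1) = (s * s) * Ient n (m + 1) Y.1 X.1 := by ring
      rw [this, hs, one_mul]
    rw [key]
    apply Submodule.sum_mem
    intro Y' hY'
    by_cases hc : Ient n m (Y.1.erase t) Y'.1 = 0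
    · rw [hc, mul_zero, zero_smul]
      exact Submodule.zero_mem _
    · apply Submodule.smul_mem
      have hZY' : Y.1.erase t ⊆ Y'.1 := by
        by_contra h
        exact hc (Ient_zero (fun hcc => h hcc.1))
      obtain ⟨x, hxZ, hxeq⟩ := exists_insert_of_subset hZY' hZc Y'.2
      have hxt : x ≠ t := by
        rintro rfl
        exact (Finset.mem_erase.mp hY').1 (Subtype.ext (by rw [hxeq, ← hYins]))
      have hbound : ∀ a ∈ Y'.1, (a : ℕ) < n - 1 := by
        intro a ha
        rw [hxeq] at ha
        rcases Finset.mem_insert.mp ha with rfl | ha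
        · have h1 := a.isLt
          have h2 : (a : ℕ) ≠ n - 1 := fun h => hxt (Fin.ext (by rw [h, htval]))
          omega
        · exact hZlt a ha
      exact Submodule.subset_span ⟨⟨Y'.1, Y'.2, hbound⟩, rfl⟩

/-- `P_{n,k} = (1/n)·I_{n,k}ᵀ·I_{n,k}` is the orthogonal projection onto the row space of
`Î_{n,k}`: it is symmetric, idempotent, `P v` lies in the row space, and `v - P v` is
orthogonal to the row space. -/
theorem stmt3 (n k : ℕ) (hk : 1 ≤ k) (hkn : k < n) :
    (Pmat n k)ᵀ = Pmat n k ∧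
    Pmat n k * Pmat n k = Pmat n k ∧
    (∀ v : {X : Finset (Fin n) // X.card = k + 1} → ℝ,
      (Pmat n k).mulVec v ∈ rowSpaceHat n k) ∧
    (∀ v : {X : Finset (Fin n) // X.card = k + 1} → ℝ,
      ∀ w ∈ rowSpaceHat n k, dotProduct (v - (Pmat n k).mulVec v) w = 0) := by
  obtain ⟨m, rfl⟩ : ∃ m, k = m + 1 := ⟨k - 1, (Nat.succ_pred_eq_of_pos hk).symm⟩
  have hn : m + 1 ≤ n := hkn.le
  have hn0 : (n : ℝ) ≠ 0 := by
    have : 0 < n := lt_of_le_of_lt (Nat.zero_le _) hkn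
    exact_mod_cast this.ne'
  have hsym : (Pmat n (m + 1))ᵀ = Pmat n (m + 1) := by
    rw [Pmat, Matrix.transpose_smul, Matrix.transpose_mul, Matrix.transpose_transpose]
  have hPIT : Pmat n (m + 1) * (Imat n (m + 1))ᵀ = (Imat n (m + 1))ᵀ := by
    rw [Pmat, Matrix.smul_mul, Matrix.mul_assoc, lemM n m hn, smul_smul,
      inv_mul_cancel₀ hn0, one_smul]
  have hIP : Imat n (m + 1) * Pmat n (m + 1) = Imat n (m + 1) := by
    have := congrArg Matrix.transpose hPIT
    rwa [Matrix.transpose_mul, hsym, Matrix.transpose_transpose] at this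
  have hidem : Pmat n (m + 1) * Pmat n (m + 1) = Pmat n (m + 1) := by
    nth_rewrite 1 [Pmat]
    rw [Matrix.smul_mul, Matrix.mul_assoc, hIP]
    rfl
  refine ⟨hsym, hidem, ?_, ?_⟩
  · intro v
    rw [Pmat, Matrix.smul_mulVec]
    apply Submodule.smul_mem
    rw [← Matrix.mulVec_mulVec]
    have hrep : (Imat n (m + 1))ᵀ.mulVec ((Imat n (m + 1)).mulVec v)
        = ∑ Y : {Y : Finset (Fin n) // Y.card = m + 1},
            ((Imat n (m + 1)).mulVec v Y) •
              (fun X : {X : Finset (Fin n) // X.card = m + 1 + 1} =>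
                Ient n (m + 1) Y.1 X.1) := by
      funext X
      rw [Finset.sum_apply]
      simp only [Matrix.mulVec, dotProduct, Matrix.transpose_apply, Imat,
        Matrix.of_apply, Pi.smul_apply, smul_eq_mul]
      exact Finset.sum_congr rfl (fun Y _ => mul_comm _ _)
    rw [hrep]
    exact Submodule.sum_mem _ (fun Y _ => Submodule.smul_mem _ _ (row_mem n m Y))
  · intro v w hw
    induction hw using Submodule.span_induction with
    | mem w hwmem =>
      obtain ⟨Yg, rfl⟩ := hwmem
      have hfix : (Pmat n (m + 1)).mulVec
          (fun X : {X : Finset (Fin n) // X.card = m + 1 + 1} => Ient n (m + 1) Yg.1 X.1)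
          = (fun X => Ient n (m + 1) Yg.1 X.1) := by
        have hr : (fun X : {X : Finset (Fin n) // X.card = m + 1 + 1} =>
            Ient n (m + 1) Yg.1 X.1)
            = (Imat n (m + 1))ᵀ.mulVec (Pi.single ⟨Yg.1, Yg.2.1⟩ 1) := by
          funext X
          rw [Matrix.mulVec_single]
          simp [Imat]
        rw [hr, Matrix.mulVec_mulVec, hPIT]
      rw [sub_dotProduct, dotProduct_comm ((Pmat n (m + 1)).mulVec v),
        Matrix.dotProduct_mulVec, ← hsym, Matrix.vecMul_transpose, hfix,
        dotProduct_comm, sub_self]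
    | zero => simp
    | add x y hx hy ihx ihy => rw [dotProduct_add, ihx, ihy, add_zero]
    | smul a x hx ih => rw [dotProduct_smul, ih, smul_zero]
end

section
/- Let B be a real r×m matrix with linearly independent rows, and let P = Bᵀ(B Bᵀ)⁻¹ B be the orthogonal projection onto the row space of B, with entries p_{ij} for i, j ∈ {1,…,m}. Then for every subset F of {1,…,m}, the sum over all r-element subsets X of {1,…,m} containing F of det(B[X])² is at most det(B Bᵀ) · ∏_{i∈F} p_{ii}, where B[X] is the submatrix of B given by the columns indexed by X. -/
open Matrix

/-- `det(B[X])²` for a set `X` of columns of `B`: the square of the determinant of the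
submatrix of `B` given by the columns indexed by `X` (in increasing order), defined to be
`0` unless `|X| = r`. -/
noncomputable def detSq {r m : ℕ} (B : Matrix (Fin r) (Fin m) ℝ) (X : Finset (Fin m)) : ℝ :=
  if h : X.card = r then (B.submatrix id (X.orderEmbOfFin h)).det ^ 2 else 0

lemma detSq_nonneg {r m : ℕ} (B : Matrix (Fin r) (Fin m) ℝ) (X : Finset (Fin m)) :
    0 ≤ detSq B X := by
  unfold detSq; split <;> positivity

lemma diag_AtA {r m : ℕ} (A : Matrix (Fin r) (Fin m) ℝ) (j : Fin m) :
    (Aᵀ * A) j j = ∑ k, A k j ^ 2 := by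
  simp [Matrix.mul_apply, sq]

lemma diag_AtA_nonneg {r m : ℕ} (A : Matrix (Fin r) (Fin m) ℝ) (j : Fin m) :
    0 ≤ (Aᵀ * A) j j := by
  rw [diag_AtA]; positivity



lemma rotate {s m : ℕ} (A : Matrix (Fin (s+1)) (Fin m) ℝ) (hA : A * Aᵀ = 1) (i : Fin m) :
    ∃ C : Matrix (Fin (s+1)) (Fin m) ℝ, C * Cᵀ = 1 ∧ Cᵀ * C = Aᵀ * A ∧
      (∀ X, detSq C X = detSq A X) ∧ (∀ k : Fin (s+1), k ≠ 0 → C k i = 0) := by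
  classical
  set E := EuclideanSpace ℝ (Fin (s+1))
  set ai : E := WithLp.toLp 2 (fun k => A k i : Fin (s+1) → ℝ) with hai
  set u : E := if h : ai = 0 then EuclideanSpace.single (0 : Fin (s+1)) (1:ℝ)
    else ‖ai‖⁻¹ • ai with hu
  have hnu : ‖u‖ = 1 := by
    rw [hu]; split
    · rw [EuclideanSpace.norm_single]; exact norm_one
    · rw [norm_smul]
      rw [norm_inv, norm_norm]; exact inv_mul_cancel₀ (norm_ne_zero_iff.mpr (by assumption))
  have horth : Orthonormal ℝ (Set.restrict {(0 : Fin (s+1))} (fun _ => u)) := by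
    constructor
    · intro j; exact hnu
    · intro ⟨a, ha⟩ ⟨b, hb⟩ hab
      simp only [Set.mem_singleton_iff] at ha hb
      exfalso; apply hab; subst ha; subst hb; rfl
  obtain ⟨b, hb0⟩ := Orthonormal.exists_orthonormalBasis_extension_of_card_eq
    (𝕜 := ℝ) (by rw [finrank_euclideanSpace_fin]; simp) horth
  have hb0' : b 0 = u := hb0 0 rfl
  have hbo := b.orthonormal
  rw [orthonormal_iff_ite] at hbo
  set M : Matrix (Fin (s+1)) (Fin (s+1)) ℝ := fun k j => b k j with hM
  have hMMt : M * Mᵀ = 1 := by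
    ext k l
    have := hbo k l
    rw [PiLp.inner_apply] at this
    simpa [Matrix.mul_apply, Matrix.one_apply, mul_comm] using this
  have hMtM : Mᵀ * M = 1 := mul_eq_one_comm.mp hMMt
  have hdetM : det M ^ 2 = 1 := by
    have : det (M * Mᵀ) = 1 := by rw [hMMt, det_one]
    rwa [det_mul, det_transpose, ← sq] at this
  refine ⟨M * A, ?_, ?_, ?_, ?_⟩
  · rw [Matrix.transpose_mul, ← Matrix.mul_assoc, Matrix.mul_assoc M A, hA,
      Matrix.mul_one, hMMt]
  · rw [Matrix.transpose_mul, Matrix.mul_assoc, ← Matrix.mul_assoc Mᵀ, hMtM,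
      Matrix.one_mul]
  · intro X
    unfold detSq
    split
    · have : (M * A).submatrix id (X.orderEmbOfFin (by assumption)) =
        M * A.submatrix id (X.orderEmbOfFin (by assumption)) := by
        ext k l; simp [Matrix.mul_apply]
      rw [this, det_mul, mul_pow, hdetM, one_mul]
    · rfl
  · intro k hk
    have : (M * A) k i = (inner ℝ (b k) ai : ℝ) := by
      rw [PiLp.inner_apply]
      simp [Matrix.mul_apply, mul_comm, hai]
      rfl
    rw [this]
    by_cases h0 : ai = 0
    · rw [h0, inner_zero_right]
    · have : ai = ‖ai‖ • u := by
        rw [hu, dif_neg h0, smul_smul, mul_inv_cancel₀ (norm_ne_zero_iff.mpr h0), one_smul]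
      rw [this, inner_smul_right, ← hb0']
      rw [hbo k 0, if_neg hk, mul_zero]



lemma laplace {s m : ℕ} (C : Matrix (Fin (s+1)) (Fin m) ℝ) (i : Fin m)
    (hC : ∀ k : Fin (s+1), k ≠ 0 → C k i = 0) (X : Finset (Fin m)) (hX : X.card = s+1)
    (hi : i ∈ X) :
    detSq C X = C 0 i ^ 2 * detSq (C.submatrix Fin.succ id) (X.erase i) := by
  classical
  set e := X.orderEmbOfFin hX with he
  obtain ⟨k, hk⟩ : ∃ k, e k = i := by
    have : i ∈ Set.range e := by rw [Finset.range_orderEmbOfFin]; exact hi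
    exact this
  have h' : (X.erase i).card = s := by rw [Finset.card_erase_of_mem hi, hX]; rfl
  have hemb : (fun x : Fin s => e (k.succAbove x)) = ⇑((X.erase i).orderEmbOfFin h') := by
    apply Finset.orderEmbOfFin_unique h'
    · intro x
      rw [Finset.mem_erase]
      refine ⟨?_, Finset.orderEmbOfFin_mem X hX _⟩
      rw [← hk]
      exact fun hb => (Fin.succAbove_ne k x) (e.injective hb)
    · exact (X.orderEmbOfFin hX).strictMono.comp (Fin.strictMono_succAbove k)
  have hdet : (C.submatrix id ⇑e).det =
      (-1) ^ (k : ℕ) * C 0 i * ((C.submatrix Fin.succ id).submatrix id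
        ⇑((X.erase i).orderEmbOfFin h')).det := by
    rw [det_succ_column _ k]
    rw [Finset.sum_eq_single_of_mem 0 (Finset.mem_univ _)]
    · simp only [submatrix_apply, id_eq, hk, Fin.val_zero, zero_add]
      congr 1
      rw [submatrix_submatrix, submatrix_submatrix]
      congr 1
      ext a b
      simp only [Function.comp, submatrix_apply, id_eq, Fin.zero_succAbove, ← hemb]
    · intro l _ hl
      simp only [submatrix_apply, id_eq, hk, hC l hl]
      ring
  unfold detSq
  rw [dif_pos hX, dif_pos h', ← he, hdet]
  rw [mul_pow, mul_pow, ← pow_mul, mul_comm (k : ℕ) 2, pow_mul, neg_one_sq, one_pow, one_mul]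

lemma key {m : ℕ} : ∀ (r : ℕ) (A : Matrix (Fin r) (Fin m) ℝ), A * Aᵀ = 1 →
    ∀ F : Finset (Fin m),
    (∑ X ∈ Finset.univ.filter (fun X : Finset (Fin m) => X.card = r ∧ F ⊆ X), detSq A X)
      ≤ ∏ i ∈ F, (Aᵀ * A) i i := by
  intro r
  induction r with
  | zero =>
    intro A hA F
    rcases F.eq_empty_or_nonempty with hF | hF
    · subst hF
      have hfil : Finset.univ.filter (fun X : Finset (Fin m) => X.card = 0 ∧ ∅ ⊆ X) = {∅} := by
        ext X; simp [Finset.card_eq_zero]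
      rw [hfil, Finset.sum_singleton, Finset.prod_empty]
      unfold detSq
      rw [dif_pos (Finset.card_empty)]
      simp [Matrix.det_fin_zero]
    · have hfil : Finset.univ.filter (fun X : Finset (Fin m) => X.card = 0 ∧ F ⊆ X) = ∅ := by
        ext X
        simp only [Finset.mem_filter, Finset.mem_univ, true_and, Finset.notMem_empty, iff_false]
        rintro ⟨h0, hsub⟩
        obtain ⟨j, hj⟩ := hF
        rw [Finset.card_eq_zero] at h0; subst h0
        exact absurd (hsub hj) (by simp)
      rw [hfil, Finset.sum_empty]
      exact Finset.prod_nonneg fun j _ => diag_AtA_nonneg A j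
  | succ s IH =>
    intro A hA
    have main : ∀ G : Finset (Fin m), G.Nonempty →
        (∑ X ∈ Finset.univ.filter (fun X : Finset (Fin m) => X.card = s+1 ∧ G ⊆ X), detSq A X)
          ≤ ∏ i ∈ G, (Aᵀ * A) i i := by
      rintro G ⟨i, hiG⟩
      obtain ⟨C, hCCt, hCtC, hCdet, hCzero⟩ := rotate A hA i
      set C₁ : Matrix (Fin s) (Fin m) ℝ := C.submatrix Fin.succ id with hC1
      have hC1orth : C₁ * C₁ᵀ = 1 := by
        ext k l
        have h2 := congrFun (congrFun hCCt k.succ) l.succ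
        simp only [Matrix.mul_apply, Matrix.transpose_apply, Matrix.one_apply,
          Fin.succ_inj] at h2
        simpa only [hC1, Matrix.mul_apply, Matrix.transpose_apply, Matrix.submatrix_apply,
          id_eq, Matrix.one_apply] using h2
      have hdiagC : ∀ j, (Cᵀ * C) j j = (Aᵀ * A) j j := fun j =>
        congrFun (congrFun hCtC j) j
      have hdiag1 : ∀ j, (C₁ᵀ * C₁) j j ≤ (Aᵀ * A) j j := by
        intro j
        rw [← hdiagC j, diag_AtA, diag_AtA, Fin.sum_univ_succ]
        have : ∀ k : Fin s, C₁ k j = C k.succ j := fun k => rfl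
        simp only [this]
        exact le_add_of_nonneg_left (sq_nonneg _)
      have hC0i : C 0 i ^ 2 = (Aᵀ * A) i i := by
        rw [← hdiagC i, diag_AtA, Fin.sum_univ_succ]
        have hz : ∀ k : Fin s, C k.succ i ^ 2 = 0 := by
          intro k; rw [hCzero k.succ (Fin.succ_ne_zero k)]; ring
        simp [hz]
      -- reindex the sum
      have hsum : (∑ X ∈ Finset.univ.filter
            (fun X : Finset (Fin m) => X.card = s+1 ∧ G ⊆ X), detSq A X)
          = C 0 i ^ 2 * ∑ Y ∈ Finset.univ.filter
            (fun Y : Finset (Fin m) => Y.card = s ∧ G.erase i ⊆ Y ∧ i ∉ Y), detSq C₁ Y := by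
        rw [Finset.mul_sum]
        refine Finset.sum_nbij' (fun X => X.erase i) (fun Y => insert i Y) ?_ ?_ ?_ ?_ ?_
        · intro X hX
          simp only [Finset.mem_filter, Finset.mem_univ, true_and] at hX ⊢
          exact ⟨by rw [Finset.card_erase_of_mem (hX.2 hiG), hX.1]; rfl,
            Finset.erase_subset_erase i hX.2, Finset.notMem_erase i X⟩
        · intro Y hY
          simp only [Finset.mem_filter, Finset.mem_univ, true_and] at hY ⊢
          obtain ⟨hc, hsub, hni⟩ := hY
          refine ⟨by rw [Finset.card_insert_of_notMem hni, hc], ?_⟩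
          intro j hj
          rcases eq_or_ne j i with rfl | hji
          · exact Finset.mem_insert_self _ _
          · exact Finset.mem_insert_of_mem (hsub (Finset.mem_erase.mpr ⟨hji, hj⟩))
        · intro X hX
          simp only [Finset.mem_filter, Finset.mem_univ, true_and] at hX
          exact Finset.insert_erase (hX.2 hiG)
        · intro Y hY
          simp only [Finset.mem_filter, Finset.mem_univ, true_and] at hY
          exact Finset.erase_insert hY.2.2
        · intro X hX
          simp only [Finset.mem_filter, Finset.mem_univ, true_and] at hX
          rw [← hCdet X, laplace C i hCzero X hX.1 (hX.2 hiG)]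
      rw [hsum]
      have h1 : (∑ Y ∈ Finset.univ.filter
            (fun Y : Finset (Fin m) => Y.card = s ∧ G.erase i ⊆ Y ∧ i ∉ Y), detSq C₁ Y)
          ≤ ∑ Y ∈ Finset.univ.filter
            (fun Y : Finset (Fin m) => Y.card = s ∧ G.erase i ⊆ Y), detSq C₁ Y := by
        apply Finset.sum_le_sum_of_subset_of_nonneg
        · intro Y hY
          simp only [Finset.mem_filter, Finset.mem_univ, true_and] at hY ⊢
          exact ⟨hY.1, hY.2.1⟩
        · exact fun Y _ _ => detSq_nonneg C₁ Y
      have h2 := IH C₁ hC1orth (G.erase i)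
      have h3 : (∏ j ∈ G.erase i, (C₁ᵀ * C₁) j j) ≤ ∏ j ∈ G.erase i, (Aᵀ * A) j j :=
        Finset.prod_le_prod (fun j _ => diag_AtA_nonneg C₁ j) (fun j _ => hdiag1 j)
      calc C 0 i ^ 2 * ∑ Y ∈ Finset.univ.filter
            (fun Y : Finset (Fin m) => Y.card = s ∧ G.erase i ⊆ Y ∧ i ∉ Y), detSq C₁ Y
          ≤ C 0 i ^ 2 * ∏ j ∈ G.erase i, (Aᵀ * A) j j := by
            apply mul_le_mul_of_nonneg_left _ (sq_nonneg _)
            exact le_trans h1 (le_trans h2 h3)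
        _ = ∏ j ∈ G, (Aᵀ * A) j j := by
            rw [hC0i]; exact Finset.mul_prod_erase G (fun j => (Aᵀ * A) j j) hiG
    intro F
    rcases F.eq_empty_or_nonempty with hF | hF
    · subst hF
      have key0 : ∀ i : Fin m,
          (∑ X ∈ Finset.univ.filter
            (fun X : Finset (Fin m) => X.card = s+1 ∧ i ∈ X), detSq A X)
            ≤ (Aᵀ * A) i i := by
        intro i
        have := main {i} ⟨i, Finset.mem_singleton_self i⟩
        simpa [Finset.singleton_subset_iff] using this
      have hcount : ((s : ℝ) + 1) * (∑ X ∈ Finset.univ.filter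
            (fun X : Finset (Fin m) => X.card = s+1 ∧ (∅ : Finset (Fin m)) ⊆ X), detSq A X)
          = ∑ i : Fin m, ∑ X ∈ Finset.univ.filter
            (fun X : Finset (Fin m) => X.card = s+1 ∧ i ∈ X), detSq A X := by
        rw [Finset.mul_sum]
        have hrw : ∀ X ∈ Finset.univ.filter
            (fun X : Finset (Fin m) => X.card = s+1 ∧ (∅ : Finset (Fin m)) ⊆ X),
            ((s : ℝ) + 1) * detSq A X = ∑ i : Fin m, if i ∈ X then detSq A X else 0 := by
          intro X hX
          simp only [Finset.mem_filter, Finset.mem_univ, true_and] at hX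
          rw [Finset.sum_ite_mem, Finset.univ_inter, Finset.sum_const, nsmul_eq_mul, hX.1]
          push_cast
          ring
        rw [Finset.sum_congr rfl hrw, Finset.sum_comm]
        apply Finset.sum_congr rfl
        intro i _
        rw [← Finset.sum_filter, Finset.filter_filter]
        apply Finset.sum_congr _ (fun _ _ => rfl)
        apply Finset.filter_congr
        intro X _
        simp
      have hsumdiag : (∑ i : Fin m, (Aᵀ * A) i i) = (s : ℝ) + 1 := by
        have h1 : (∑ i : Fin m, (Aᵀ * A) i i) = Matrix.trace (Aᵀ * A) := rfl
        rw [h1, Matrix.trace_mul_comm, hA, Matrix.trace_one]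
        simp
      have hle : ((s : ℝ) + 1) * (∑ X ∈ Finset.univ.filter
            (fun X : Finset (Fin m) => X.card = s+1 ∧ (∅ : Finset (Fin m)) ⊆ X), detSq A X)
          ≤ ((s : ℝ) + 1) * 1 := by
        rw [hcount, mul_one, ← hsumdiag]
        exact Finset.sum_le_sum (fun i _ => key0 i)
      have hfin := le_of_mul_le_mul_left hle (by positivity)
      simpa using hfin
    · exact main F hF

section
open scoped MatrixOrder
lemma posDef_sqrt_aux {r : ℕ} (N : Matrix (Fin r) (Fin r) ℝ) (hN : N.PosDef) :
    ∃ S : Matrix (Fin r) (Fin r) ℝ, S * S = N ∧ Sᵀ = S :=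
  ⟨CFC.sqrt N, CFC.sqrt_mul_sqrt_self N hN.posSemidef.nonneg, by
    rw [← Matrix.conjTranspose_eq_transpose_of_trivial]; exact (CFC.sqrt_nonneg N).posSemidef.1⟩
end

/-- For a real `r × m` matrix `B` with linearly independent rows, `P = Bᵀ(BBᵀ)⁻¹B` the
orthogonal projection onto the row space of `B`, and any `F ⊆ {1,…,m}`:
`∑_{X ⊇ F, |X| = r} det(B[X])² ≤ det(BBᵀ)·∏_{i ∈ F} p_{ii}`, i.e. the determinantal
measure `ν_B` satisfies `ν_B({X : F ⊆ X}) ≤ ∏_{i ∈ F} p_{ii}`. -/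
theorem stmt4 (r m : ℕ) (B : Matrix (Fin r) (Fin m) ℝ)
    (hB : LinearIndependent ℝ (fun i => B i))
    (F : Finset (Fin m)) :
    (∑ X ∈ Finset.univ.filter (fun X : Finset (Fin m) => X.card = r ∧ F ⊆ X), detSq B X)
      ≤ (B * Bᵀ).det * ∏ i ∈ F, (Bᵀ * (B * Bᵀ)⁻¹ * B) i i := by
  classical
  have hNh : (B * Bᵀ).IsHermitian := by
    ext k l
    simp [Matrix.conjTranspose_apply, Matrix.mul_apply, mul_comm]
  have hNpd : (B * Bᵀ).PosDef := by
    refine Matrix.PosDef.of_dotProduct_mulVec_pos hNh (fun x hx => ?_)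
    have hv : star x = x := by funext j; simp
    rw [hv, ← Matrix.mulVec_mulVec, dotProduct_mulVec, Matrix.mulVec_transpose]
    set v := Matrix.vecMul x B with hvdef
    have hvne : v ≠ 0 := by
      intro hv0
      apply hx
      have hli := Fintype.linearIndependent_iff.mp hB
      have hzero : ∀ i, x i = 0 := by
        apply hli
        funext j
        have : (∑ i, x i • B i) j = v j := by
          rw [hvdef]
          simp [Matrix.vecMul, dotProduct]
        rw [hv0] at this
        simpa using this
      funext i; exact hzero i
    obtain ⟨j, hj⟩ := Function.ne_iff.mp hvne
    have hjpos : 0 < v j * v j := mul_self_pos.mpr hj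
    exact Finset.sum_pos' (fun k _ => mul_self_nonneg _) ⟨j, Finset.mem_univ _, hjpos⟩
  obtain ⟨S, hSS, hSsym⟩ := posDef_sqrt_aux (B * Bᵀ) hNpd
  have hdetS : S.det * S.det = (B * Bᵀ).det := by rw [← Matrix.det_mul, hSS]
  have hdetN : 0 < (B * Bᵀ).det := hNpd.det_pos
  have hdS : S.det ≠ 0 := by
    intro h
    rw [h, mul_zero] at hdetS
    exact absurd hdetS.symm (ne_of_gt hdetN)
  have hSunit : IsUnit S.det := Ne.isUnit hdS
  set A := S⁻¹ * B with hAdef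
  have hBA : B = S * A := by
    rw [hAdef, ← Matrix.mul_assoc, Matrix.mul_nonsing_inv S hSunit, Matrix.one_mul]
  have hAorth : A * Aᵀ = 1 := by
    rw [hAdef, Matrix.transpose_mul, Matrix.transpose_nonsing_inv, hSsym,
      Matrix.mul_assoc, ← Matrix.mul_assoc B, ← hSS]
    rw [← Matrix.mul_assoc, ← Matrix.mul_assoc, Matrix.nonsing_inv_mul S hSunit,
      Matrix.one_mul, Matrix.mul_nonsing_inv S hSunit]
  have hproj : Bᵀ * (B * Bᵀ)⁻¹ * B = Aᵀ * A := by
    rw [← hSS, Matrix.mul_inv_rev, hBA, Matrix.transpose_mul, hSsym]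
    simp only [Matrix.mul_assoc]
    rw [Matrix.mul_nonsing_inv_cancel_left S _ hSunit,
      Matrix.nonsing_inv_mul_cancel_left S _ hSunit]
  have hdetSq : ∀ X : Finset (Fin m), detSq B X = (B * Bᵀ).det * detSq A X := by
    intro X
    unfold detSq
    split
    · next h =>
      have hsub : (S * A).submatrix id (X.orderEmbOfFin h) =
          S * A.submatrix id (X.orderEmbOfFin h) := by
        ext k l; simp [Matrix.mul_apply]
      conv_lhs => rw [hBA]
      rw [hsub, Matrix.det_mul, mul_pow, pow_two, hdetS]
    · rw [mul_zero]
  calc (∑ X ∈ Finset.univ.filter (fun X : Finset (Fin m) => X.card = r ∧ F ⊆ X), detSq B X)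
      = (B * Bᵀ).det * ∑ X ∈ Finset.univ.filter
          (fun X : Finset (Fin m) => X.card = r ∧ F ⊆ X), detSq A X := by
        rw [Finset.mul_sum]
        exact Finset.sum_congr rfl (fun X _ => hdetSq X)
    _ ≤ (B * Bᵀ).det * ∏ i ∈ F, (Aᵀ * A) i i :=
        mul_le_mul_of_nonneg_left (key r A hAorth F) hdetN.le
    _ = (B * Bᵀ).det * ∏ i ∈ F, (Bᵀ * (B * Bᵀ)⁻¹ * B) i i := by rw [hproj]
end

section
/- Let B be a real r×m matrix with linearly independent rows, and let P = Bᵀ(B Bᵀ)⁻¹ B with entries p_{ij}. Let A_1 and A_2 be disjoint subsets of {1,…,m} such that p_{ij} = 0 for all i ∈ A_1 and j ∈ A_2. Then for all S_1 ⊆ A_1 and S_2 ⊆ A_2, det(B Bᵀ) · (∑_{X : |X| = r, X∩A_1 = S_1, X∩A_2 = S_2} det(B[X])²) = (∑_{X : |X| = r, X∩A_1 = S_1} det(B[X])²) · (∑_{X : |X| = r, X∩A_2 = S_2} det(B[X])²), where all sums range over r-element subsets X of {1,…,m} and B[X] is the submatrix of B given by the columns indexed by X. -/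
open Matrix

namespace Stmt5

variable {R : Type*} [CommRing R]

/-- restriction of a square matrix to a finset of indices -/
def msub {ι : Type*} (M : Matrix ι ι R) (U : Finset ι) : Matrix ↥U ↥U R :=
  Matrix.of fun i j => M i.1 j.1

/-- principal minor -/
noncomputable def pdet {ι : Type*} [DecidableEq ι] (M : Matrix ι ι R) (U : Finset ι) : R :=
  (msub M U).det

theorem det_piecewise {ι : Type*} [Fintype ι] [DecidableEq ι] (N : Matrix ι ι R) (s : Finset ι) :
    Matrix.det (show Matrix ι ι R from
        s.piecewise (fun i => (1 : Matrix ι ι R) i) (fun i => N i))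
      = pdet N sᶜ := by
  have h2 : pdet N sᶜ =
      Matrix.det (Matrix.of fun (i j : {x // ¬ x ∈ s}) => N i.1 j.1) := by
    rw [pdet, ← Matrix.det_submatrix_equiv_self
      (Equiv.subtypeEquivRight (p := fun x => ¬ x ∈ s) (q := fun x => x ∈ sᶜ)
        (fun x => (Finset.mem_compl).symm)) (msub N sᶜ)]
    congr 1
  rw [h2, ← Matrix.det_submatrix_equiv_self (Equiv.sumCompl (· ∈ s))]
  have h3 : (show Matrix ι ι R from
        s.piecewise (fun i => (1 : Matrix ι ι R) i) (fun i => N i)).submatrix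
          (Equiv.sumCompl (· ∈ s)) (Equiv.sumCompl (· ∈ s))
      = Matrix.fromBlocks 1 0
          (Matrix.of fun (a : {x // ¬ x ∈ s}) (b : {x // x ∈ s}) => N a.1 b.1)
          (Matrix.of fun (a b : {x // ¬ x ∈ s}) => N a.1 b.1) := by
    ext i j
    cases i with
    | inl a =>
      cases j with
      | inl b =>
        rw [Matrix.submatrix_apply]
        simp only [Finset.piecewise_eq_of_mem _ _ _ a.2, Matrix.one_apply, Equiv.sumCompl_apply_inl]
        simp [Matrix.one_apply]
      | inr b =>
        have hne : a.1 ≠ b.1 := fun h => b.2 (h ▸ a.2)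
        rw [Matrix.submatrix_apply]
        simp [Matrix.submatrix_apply, Finset.piecewise_eq_of_mem _ _ _ a.2,
          Matrix.one_apply, hne]
    | inr a =>
      cases j with
      | inl b =>
        rw [Matrix.submatrix_apply]
        simp [Matrix.submatrix_apply, Finset.piecewise_eq_of_notMem _ _ _ a.2]
      | inr b =>
        rw [Matrix.submatrix_apply]
        simp [Matrix.submatrix_apply, Finset.piecewise_eq_of_notMem _ _ _ a.2]
  rw [h3, Matrix.det_fromBlocks_zero₁₂, Matrix.det_one, one_mul]

theorem det_one_add {ι : Type*} [Fintype ι] [DecidableEq ι] (N : Matrix ι ι R) :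
    (1 + N).det = ∑ U : Finset ι, pdet N U := by
  have h := (Matrix.detRowAlternating (n := ι) (R := R)).toMultilinearMap.map_add_univ
    (fun i => (1 : Matrix ι ι R) i) (fun i => N i)
  have h1 : (1 + N).det = ∑ s : Finset ι,
      Matrix.det (show Matrix ι ι R from
        s.piecewise (fun i => (1 : Matrix ι ι R) i) (fun i => N i)) := h
  rw [h1]
  rw [show (∑ U : Finset ι, pdet N U)
      = ∑ s : Finset ι, pdet N sᶜ from
    (Fintype.sum_bijective (fun s : Finset ι => sᶜ)
      (Function.Involutive.bijective (fun s => compl_compl s)) _ _ (fun s => rfl)).symm]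
  exact Finset.sum_congr rfl fun s _ => det_piecewise N s

theorem pdet_smul {i : Type*} [DecidableEq i] (M : Matrix i i R) (c : R) (U : Finset i) :
    pdet (c  • M) U = c ^ U.card * pdet M U := by
  rw [pdet, pdet, show msub (c  • M) U = c • msub M U from rfl, Matrix.det_smul, Fintype.card_coe]

theorem pdet_map {i : Type*} [DecidableEq i] {S : Type*} [CommRing S] (f : R →+* S)
    (M : Matrix i i R) (U : Finset i) : pdet (M.map f) U = f (pdet M U) := by
  rw [pdet, pdet, show msub (M.map f) U = (msub M U).map f from rfl]
  exact (RingHom.map_det f (msub M U)).symm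

theorem pdet_univ {i : Type*} [Fintype i] [DecidableEq i] (A : Matrix i i R) :
    pdet A Finset.univ = A.det := by
  rw [pdet, show msub A Finset.univ
      = A.submatrix ((Equiv.subtypeUnivEquiv (fun x => Finset.mem_univ x)))
          ((Equiv.subtypeUnivEquiv (fun x => Finset.mem_univ x))) from rfl,
    Matrix.det_submatrix_equiv_self]

theorem pdet_eq_detSq {r m : ℕ} (M : Matrix (Fin r) (Fin m) ℝ) {U : Finset (Fin m)}
    (h : U.card = r) : pdet (Mᵀ * M) U = detSq M U := by
  rw [pdet, ← Matrix.det_submatrix_equiv_self (U.orderIsoOfFin h).toEquiv (msub (Mᵀ*M) U)]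
  have h2 : (msub (Mᵀ*M) U).submatrix (U.orderIsoOfFin h).toEquiv (U.orderIsoOfFin h).toEquiv
      = (M.submatrix id (U.orderEmbOfFin h))ᵀ * (M.submatrix id (U.orderEmbOfFin h)) := by
    ext i j
    simp [msub, Matrix.mul_apply, Finset.coe_orderIsoOfFin_apply]
  rw [h2, Matrix.det_mul, Matrix.det_transpose, detSq, dif_pos h, sq]

theorem cauchy_binet {r m : ℕ} (M : Matrix (Fin r) (Fin m) ℝ) :
    (M * Mᵀ).det = ∑ X : Finset (Fin m), detSq M X := by
  classical
  have expand : ∀ {i : Type} [Fintype i] [DecidableEq i] (G : Matrix i i ℝ),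
      (1 + (Polynomial.X : Polynomial ℝ) • G.map Polynomial.C).det
        = ∑ U : Finset i, Polynomial.X ^ U.card * Polynomial.C (pdet G U) := by
    intro i _ _ G
    rw [det_one_add]
    refine Finset.sum_congr rfl fun U _ => ?_
    rw [pdet_smul, pdet_map]
  have h3 : (1 + (Polynomial.X : Polynomial ℝ) • (Mᵀ * M).map Polynomial.C).det
      = (1 + (Polynomial.X : Polynomial ℝ) • (M * Mᵀ).map Polynomial.C).det := by
    have e1 : ((Polynomial.X : Polynomial ℝ) • (Mᵀ*M).map Polynomial.C)
        = ((Polynomial.X : Polynomial ℝ)  • Mᵀ.map Polynomial.C) * (M.map Polynomial.C) := by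
      rw [Matrix.map_mul, Matrix.smul_mul]
    have e2 : ((Polynomial.X : Polynomial ℝ) • (M*Mᵀ).map Polynomial.C)
        = (M.map Polynomial.C) * ((Polynomial.X : Polynomial ℝ)  • Mᵀ.map Polynomial.C) := by
      rw [Matrix.map_mul, Matrix.mul_smul]
    rw [e1, e2, Matrix.det_one_add_mul_comm]
  have h4 := congrArg (fun p : Polynomial ℝ => p.coeff r)
    ((expand (Mᵀ*M)).symm.trans (h3.trans (expand (M*Mᵀ))))
  simp only [Polynomial.finset_sum_coeff] at h4
  have hco : ∀ {i : Type} [Fintype i] [DecidableEq i] (G : Matrix i i ℝ) (U : Finset i),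
      (Polynomial.X ^ U.card * Polynomial.C (pdet G U)).coeff r
        = if U.card = r then pdet G U else 0 := by
    intro i _ _ G U
    rw [mul_comm, Polynomial.coeff_C_mul, Polynomial.coeff_X_pow]
    by_cases h : U.card = r
    · simp [h]
    · have h' : ¬ (r = U.card) := fun hh => h hh.symm
      simp [h, h']
  simp only [hco] at h4
  have h5 : (∑ V : Finset (Fin r), if V.card = r then pdet (M*Mᵀ) V else 0)
      = pdet (M*Mᵀ) Finset.univ := by
    rw [show (∑ V : Finset (Fin r), if V.card = r then pdet (M*Mᵀ) V else 0)
        = ∑ V : Finset (Fin r), if V = Finset.univ then pdet (M*Mᵀ) V else 0 from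
      Finset.sum_congr rfl fun V _ => by
        by_cases h : V = Finset.univ
        . simp [h]
        . rw [if_neg h, if_neg (by simpa [← Finset.card_eq_iff_eq_univ, Fintype.card_fin] using h)]]
    rw [Finset.sum_ite_eq' Finset.univ Finset.univ]
    simp
  rw [h5, pdet_univ] at h4
  rw [← h4]
  refine Finset.sum_congr rfl fun U _ => ?_
  by_cases h : U.card = r
  . rw [if_pos h, pdet_eq_detSq M h]
  . rw [if_neg h, detSq, dif_neg h]

theorem detSq_of_ne {r m : ℕ} (B : Matrix (Fin r) (Fin m) ℝ) {X : Finset (Fin m)}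
    (h : ¬ X.card = r) : detSq B X = 0 := dif_neg h

theorem det_mul_transpose_ne_zero {r m : ℕ} (B : Matrix (Fin r) (Fin m) ℝ)
    (hB : LinearIndependent ℝ (fun i => B i)) : (B * Bᵀ).det ≠ 0 := by
  intro h0
  obtain ⟨v, hv, hMv⟩ := (Matrix.exists_mulVec_eq_zero_iff).2 h0
  have hw : B *ᵥ (Bᵀ *ᵥ v) = 0 := by rw [Matrix.mulVec_mulVec, hMv]
  have hdot : (Bᵀ *ᵥ v) ⬝ᵥ (Bᵀ *ᵥ v) = 0 := by
    nth_rewrite 1 [Matrix.mulVec_transpose]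
    rw [← Matrix.dotProduct_mulVec, hw, dotProduct_zero]
  have hw0 : ∀ j, (Bᵀ *ᵥ v) j = 0 := by
    intro j
    have hnn : ∀ j ∈ Finset.univ, 0 ≤ (Bᵀ *ᵥ v) j * (Bᵀ *ᵥ v) j :=
      fun j _ => mul_self_nonneg _
    have hs : ∑ j, (Bᵀ *ᵥ v) j * (Bᵀ *ᵥ v) j = 0 := hdot
    exact mul_self_eq_zero.1 ((Finset.sum_eq_zero_iff_of_nonneg hnn).1 hs j (Finset.mem_univ j))
  have hv0 : ∀ i, v i = 0 := by
    apply Fintype.linearIndependent_iff.1 hB v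
    funext j
    have := hw0 j
    simp only [Matrix.mulVec, dotProduct, Matrix.transpose_apply] at this
    simpa [Finset.sum_apply, mul_comm] using this
  exact hv (funext hv0)

theorem avoid {r m : ℕ} (B : Matrix (Fin r) (Fin m) ℝ) (hd : IsUnit (B * Bᵀ).det)
    (U : Finset (Fin m)) :
    ∑ X : Finset (Fin m), (if X ∩ U = ∅ then detSq B X else 0)
      = (B * Bᵀ).det * ((1 : Matrix ↥U ↥U ℝ) - msub (Bᵀ * (B * Bᵀ)⁻¹ * B) U).det := by
  classical
  set B' : Matrix (Fin r) (Fin m) ℝ := Matrix.of fun i j => if j ∈ U then 0 else B i j with hB'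
  have hstep : ∀ X : Finset (Fin m), detSq B' X = if X ∩ U = ∅ then detSq B X else 0 := by
    intro X
    by_cases hc : X.card = r
    · by_cases hXU : X ∩ U = ∅
      · rw [if_pos hXU, detSq, detSq, dif_pos hc, dif_pos hc]
        congr 2
        ext i j
        have hj : (X.orderEmbOfFin hc) j ∈ X := Finset.orderEmbOfFin_mem X hc j
        have hnot : (X.orderEmbOfFin hc) j ∉ U := fun hin =>
          (Finset.eq_empty_iff_forall_notMem.1 hXU _ (Finset.mem_inter.2 ⟨hj, hin⟩))
        simp [B', hnot]
      · rw [if_neg hXU, detSq, dif_pos hc]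
        obtain ⟨j, hj⟩ := Finset.nonempty_iff_ne_empty.2 hXU
        obtain ⟨c, hc'⟩ : ∃ c, (X.orderEmbOfFin hc) c = j := by
          have hmem : j ∈ Set.range (X.orderEmbOfFin hc) := by
            rw [Finset.range_orderEmbOfFin]
            exact_mod_cast (Finset.mem_inter.1 hj).1
          exact hmem
        have hz : (B'.submatrix id (X.orderEmbOfFin hc)).det = 0 := by
          apply Matrix.det_eq_zero_of_column_eq_zero c
          intro i
          have hjU : j ∈ U := (Finset.mem_inter.1 hj).2
          simp [B', hc', hjU]
        rw [hz]; ring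
    · rw [detSq_of_ne B' hc, detSq_of_ne B hc]
      simp
  set C : Matrix (Fin r) ↥U ℝ := Matrix.of fun i u => B i u.1 with hCdef
  have hC : B' * B'ᵀ = B * Bᵀ - C * Cᵀ := by
    ext i k
    simp only [Matrix.mul_apply, Matrix.sub_apply, Matrix.transpose_apply, hB', Matrix.of_apply]
    have hpt : ∀ j, (if j ∈ U then 0 else B i j) * (if j ∈ U then 0 else B k j)
        = B i j * B k j - (if j ∈ U then B i j * B k j else 0) := by
      intro j; split_ifs <;> ring
    rw [Finset.sum_congr rfl fun j _ => hpt j, Finset.sum_sub_distrib]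
    congr 1
    rw [Finset.sum_ite_mem, Finset.univ_inter, hCdef]
    exact (Finset.sum_coe_sort U (fun j => B i j * B k j)).symm
  have hfact : B * Bᵀ - C * Cᵀ = (B * Bᵀ) * (1 - (B*Bᵀ)⁻¹ * (C * Cᵀ)) := by
    rw [Matrix.mul_sub, Matrix.mul_one, ← Matrix.mul_assoc, Matrix.mul_nonsing_inv _ hd,
      Matrix.one_mul]
  have hmain : (∑ X : Finset (Fin m), (if X ∩ U = ∅ then detSq B X else 0))
      = (B' * B'ᵀ).det := by
    rw [cauchy_binet B']
    exact (Finset.sum_congr rfl fun X _ => (hstep X)).symm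
  rw [hmain, hC, hfact, Matrix.det_mul]
  congr 1
  rw [show (1 : Matrix (Fin r) (Fin r) ℝ) - (B*Bᵀ)⁻¹ * (C * Cᵀ)
      = 1 - ((B*Bᵀ)⁻¹ * C) * Cᵀ from by rw [Matrix.mul_assoc], Matrix.det_one_sub_mul_comm]
  congr 2
  ext u u'
  simp only [Matrix.mul_apply, msub, Matrix.of_apply, hCdef, Matrix.transpose_apply,
    Finset.sum_mul, Finset.mul_sum]
  rw [Finset.sum_comm]
  exact Finset.sum_congr rfl fun k _ => Finset.sum_congr rfl fun l _ => by ring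

theorem sum_pow_neg_one {α : Type*} [DecidableEq α] (W : Finset α) :
    ∑ V ∈ W.powerset, (-1:ℝ)^V.card = if W = ∅ then 1 else 0 := by
  have h := Finset.sum_powerset_neg_one_pow_card (x := W)
  have h2 := congrArg (fun z : ℤ => (z : ℝ)) h
  push_cast at h2
  exact h2

theorem sum_powerset_ind_empty {α : Type*} [DecidableEq α] (W X : Finset α) :
    ∑ V ∈ W.powerset, (-1:ℝ)^V.card * (if V ∩ X = ∅ then 1 else 0)
      = if W \ X = ∅ then 1 else 0 := by
  have hsub : (W \ X).powerset ⊆ W.powerset :=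
    Finset.powerset_mono.2 Finset.sdiff_subset
  have hvanish : ∀ V ∈ W.powerset, V ∉ (W \ X).powerset →
      (-1:ℝ)^V.card * (if V ∩ X = ∅ then 1 else 0) = 0 := by
    intro V hV hVn
    have hVW : V ⊆ W := Finset.mem_powerset.1 hV
    have hne : ¬ (V ∩ X = ∅) := by
      intro he
      apply hVn
      rw [Finset.mem_powerset]
      intro a ha
      rw [Finset.mem_sdiff]
      exact ⟨hVW ha, fun hx =>
        Finset.eq_empty_iff_forall_notMem.1 he a (Finset.mem_inter.2 ⟨ha, hx⟩)⟩
    rw [if_neg hne, mul_zero]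
  rw [← Finset.sum_subset hsub hvanish]
  have hones : ∀ V ∈ (W \ X).powerset,
      (-1:ℝ)^V.card * (if V ∩ X = ∅ then 1 else 0) = (-1:ℝ)^V.card := by
    intro V hV
    have hVW : V ⊆ W \ X := Finset.mem_powerset.1 hV
    have he : V ∩ X = ∅ := by
      rw [Finset.eq_empty_iff_forall_notMem]
      intro a ha
      obtain ⟨haV, haX⟩ := Finset.mem_inter.1 ha
      exact (Finset.mem_sdiff.1 (hVW haV)).2 haX
    rw [if_pos he, mul_one]
  rw [Finset.sum_congr rfl hones, sum_pow_neg_one]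

theorem ind_subset_eq {α : Type*} [DecidableEq α] (T X : Finset α) :
    (if T ⊆ X then (1:ℝ) else 0)
      = ∑ U ∈ T.powerset, (-1:ℝ)^U.card * (if U ∩ X = ∅ then 1 else 0) := by
  rw [sum_powerset_ind_empty]
  by_cases h : T ⊆ X
  · rw [if_pos h, if_pos (Finset.sdiff_eq_empty_iff_subset.2 h)]
  · rw [if_neg h, if_neg (fun he => h (Finset.sdiff_eq_empty_iff_subset.1 he))]

theorem sum_powerset_ind_subset {α : Type*} [DecidableEq α] (W X : Finset α) :
    ∑ V ∈ W.powerset, (-1:ℝ)^V.card * (if V ⊆ X then 1 else 0)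
      = if W ∩ X = ∅ then 1 else 0 := by
  have hsub : (W ∩ X).powerset ⊆ W.powerset :=
    Finset.powerset_mono.2 Finset.inter_subset_left
  have hvanish : ∀ V ∈ W.powerset, V ∉ (W ∩ X).powerset →
      (-1:ℝ)^V.card * (if V ⊆ X then 1 else 0) = 0 := by
    intro V hV hVn
    have hVW : V ⊆ W := Finset.mem_powerset.1 hV
    have hne : ¬ (V ⊆ X) := by
      intro he
      exact hVn (Finset.mem_powerset.2 (Finset.subset_inter hVW he))
    rw [if_neg hne, mul_zero]
  rw [← Finset.sum_subset hsub hvanish]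
  have hones : ∀ V ∈ (W ∩ X).powerset,
      (-1:ℝ)^V.card * (if V ⊆ X then 1 else 0) = (-1:ℝ)^V.card := by
    intro V hV
    have hVW : V ⊆ W ∩ X := Finset.mem_powerset.1 hV
    rw [if_pos (hVW.trans Finset.inter_subset_right), mul_one]
  rw [Finset.sum_congr rfl hones, sum_pow_neg_one]

theorem ind_inter_eq {α : Type*} [DecidableEq α] {A S : Finset α} (hS : S ⊆ A) (X : Finset α) :
    (if X ∩ A = S then (1:ℝ) else 0)
      = ∑ T ∈ A.powerset.filter (fun T => S ⊆ T),
          (-1:ℝ)^((T \ S).card) * (if T ⊆ X then 1 else 0) := by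
  have hre : (∑ T ∈ A.powerset.filter (fun T => S ⊆ T),
        (-1:ℝ)^((T \ S).card) * (if T ⊆ X then 1 else 0))
      = ∑ V ∈ (A \ S).powerset, (-1:ℝ)^V.card * (if S ∪ V ⊆ X then 1 else 0) := by
    refine Finset.sum_nbij' (i := fun T => T \ S) (j := fun V => S ∪ V) ?_ ?_ ?_ ?_ ?_
    · intro T hT
      obtain ⟨hTA, hST⟩ := Finset.mem_filter.1 hT
      exact Finset.mem_powerset.2
        (Finset.sdiff_subset_sdiff (Finset.mem_powerset.1 hTA) (Finset.Subset.refl S))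
    · intro V hV
      have hV' : V ⊆ A \ S := Finset.mem_powerset.1 hV
      refine Finset.mem_filter.2 ⟨Finset.mem_powerset.2 ?_, Finset.subset_union_left⟩
      exact Finset.union_subset hS (hV'.trans Finset.sdiff_subset)
    · intro T hT
      exact Finset.union_sdiff_of_subset (Finset.mem_filter.1 hT).2
    · intro V hV
      have hV' : V ⊆ A \ S := Finset.mem_powerset.1 hV
      ext a
      simp only [Finset.mem_sdiff, Finset.mem_union]
      constructor
      · rintro ⟨ha | ha, haS⟩
        · exact absurd ha haS
        · exact ha
      · intro ha
        exact ⟨Or.inr ha, (Finset.mem_sdiff.1 (hV' ha)).2⟩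
    · intro T hT
      rw [Finset.union_sdiff_of_subset (Finset.mem_filter.1 hT).2]
  rw [hre]
  have hsplit : ∀ V ∈ (A \ S).powerset,
      (-1:ℝ)^V.card * (if S ∪ V ⊆ X then (1:ℝ) else 0)
      = (if S ⊆ X then (1:ℝ) else 0) * ((-1:ℝ)^V.card * (if V ⊆ X then 1 else 0)) := by
    intro V _
    by_cases h1 : S ⊆ X <;> by_cases h2 : V ⊆ X <;>
      simp [h1, h2, Finset.union_subset_iff]
  rw [Finset.sum_congr rfl hsplit, ← Finset.mul_sum, sum_powerset_ind_subset]
  have hiff : (X ∩ A = S) ↔ (S ⊆ X ∧ (A \ S) ∩ X = ∅) := by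
    constructor
    · intro h
      refine ⟨?_, ?_⟩
      · rw [← h]; exact Finset.inter_subset_left
      · rw [Finset.eq_empty_iff_forall_notMem]
        intro a ha
        obtain ⟨haAS, haX⟩ := Finset.mem_inter.1 ha
        obtain ⟨haA, haS⟩ := Finset.mem_sdiff.1 haAS
        exact haS (h ▸ Finset.mem_inter.2 ⟨haX, haA⟩)
    · rintro ⟨h1, h2⟩
      apply Finset.Subset.antisymm
      · intro a ha
        obtain ⟨haX, haA⟩ := Finset.mem_inter.1 ha
        by_contra haS
        exact Finset.eq_empty_iff_forall_notMem.1 h2 a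
          (Finset.mem_inter.2 ⟨Finset.mem_sdiff.2 ⟨haA, haS⟩, haX⟩)
      · intro a ha
        exact Finset.mem_inter.2 ⟨h1 ha, hS ha⟩
  by_cases h1 : S ⊆ X <;> by_cases h2 : (A \ S) ∩ X = ∅ <;>
    simp [h1, h2, hiff]

theorem sum_pdet_sub_one {ι : Type*} [DecidableEq ι] (P : Matrix ι ι R) (T : Finset ι) :
    ∑ U ∈ T.powerset, (msub P U - 1).det = pdet P T := by
  classical
  have hL : (1 + (msub P T - 1)).det = pdet P T := by
    rw [show (1 : Matrix ↥T ↥T R) + (msub P T - 1) = msub P T from by abel, pdet]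
  have key := det_one_add (msub P T - 1)
  rw [hL] at key
  rw [key]
  refine Finset.sum_nbij' (i := fun U => U.subtype (· ∈ T))
    (j := fun (U' : Finset ↥T) => U'.map (Function.Embedding.subtype _)) ?_ ?_ ?_ ?_ ?_
  · intro U _; exact Finset.mem_univ _
  · intro U' _
    refine Finset.mem_powerset.2 ?_
    intro a ha
    obtain ⟨b, _, rfl⟩ := Finset.mem_map.1 ha
    exact b.2
  · intro U hU
    have hUT : U ⊆ T := Finset.mem_powerset.1 hU
    ext a
    simp only [Finset.mem_map, Finset.mem_subtype, Function.Embedding.coe_subtype,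
      Subtype.exists]
    constructor
    · rintro ⟨b, hb, hb2, rfl⟩
      exact hb2
    · intro ha
      exact ⟨a, hUT ha, ha, rfl⟩
  · intro U' _
    ext a
    simp only [Finset.mem_subtype, Finset.mem_map, Function.Embedding.coe_subtype]
    constructor
    · rintro ⟨b, hb, hba⟩
      rwa [show b = a from Subtype.ext hba] at hb
    · intro ha
      exact ⟨a, ha, rfl⟩
  · intro U hU
    have hUT : U ⊆ T := Finset.mem_powerset.1 hU
    rw [pdet, ← Matrix.det_submatrix_equiv_self
      ((⟨fun u => ⟨⟨u.1, hUT u.2⟩, Finset.mem_subtype.2 u.2⟩,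
        fun a => ⟨a.1.1, Finset.mem_subtype.1 a.2⟩,
        fun u => rfl, fun a => rfl⟩ : ↥U ≃ {a : ↥T // a ∈ U.subtype (· ∈ T)}))
      (msub (msub P T - 1) (U.subtype (· ∈ T)))]
    congr 1
    ext u u'
    rw [Matrix.submatrix_apply]
    simp only [msub, Matrix.of_apply, Matrix.sub_apply, Matrix.one_apply, Equiv.coe_fn_mk]
    simp

theorem inclusion {r m : ℕ} (B : Matrix (Fin r) (Fin m) ℝ) (hd : IsUnit (B * Bᵀ).det)
    (T : Finset (Fin m)) :
    ∑ X : Finset (Fin m), (if T ⊆ X then detSq B X else 0)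
      = (B * Bᵀ).det * pdet (Bᵀ * (B * Bᵀ)⁻¹ * B) T := by
  classical
  have h1 : ∀ X : Finset (Fin m), (if T ⊆ X then detSq B X else 0)
      = ∑ U ∈ T.powerset, (-1:ℝ)^U.card * (if X ∩ U = ∅ then detSq B X else 0) := by
    intro X
    have h := congrArg (fun t => detSq B X * t) (ind_subset_eq T X)
    simp only [Finset.mul_sum] at h
    calc (if T ⊆ X then detSq B X else 0)
        = detSq B X * (if T ⊆ X then 1 else 0) := by split_ifs <;> ring
      _ = _ := by
          rw [h]
          refine Finset.sum_congr rfl fun U _ => ?_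
          rw [Finset.inter_comm X U]
          split_ifs <;> ring
  rw [Finset.sum_congr rfl fun X _ => h1 X, Finset.sum_comm]
  have h2 : ∀ U ∈ T.powerset,
      (∑ X : Finset (Fin m), (-1:ℝ)^U.card * (if X ∩ U = ∅ then detSq B X else 0))
        = (B * Bᵀ).det * (msub (Bᵀ * (B * Bᵀ)⁻¹ * B) U - 1).det := by
    intro U _
    rw [← Finset.mul_sum, avoid B hd U]
    have hneg : ((-1:ℝ))^U.card
        * ((1 : Matrix ↥U ↥U ℝ) - msub (Bᵀ * (B * Bᵀ)⁻¹ * B) U).det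
        = (msub (Bᵀ * (B * Bᵀ)⁻¹ * B) U - 1).det := by
      rw [show (msub (Bᵀ * (B * Bᵀ)⁻¹ * B) U - (1 : Matrix ↥U ↥U ℝ))
          = -((1 : Matrix ↥U ↥U ℝ) - msub (Bᵀ * (B * Bᵀ)⁻¹ * B) U) from (neg_sub _ _).symm,
        Matrix.det_neg, Fintype.card_coe]
    rw [← hneg]; ring
  rw [Finset.sum_congr rfl h2, ← Finset.mul_sum, sum_pdet_sub_one]

def unionEquiv {m : ℕ} (T₁ T₂ : Finset (Fin m)) (hdisj : Disjoint T₁ T₂) :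
    ↥T₁ ⊕ ↥T₂ ≃ ↥(T₁ ∪ T₂) where
  toFun x := Sum.elim (fun a => (⟨a.1, Finset.mem_union_left _ a.2⟩ : ↥(T₁ ∪ T₂)))
    (fun a => ⟨a.1, Finset.mem_union_right _ a.2⟩) x
  invFun x := if h : x.1 ∈ T₁ then Sum.inl ⟨x.1, h⟩ else Sum.inr ⟨x.1,
    (Finset.mem_union.1 x.2).resolve_left h⟩
  left_inv := by
    rintro (u | u)
    · simp only [Sum.elim_inl]
      exact dif_pos u.2
    · simp only [Sum.elim_inr]
      exact dif_neg (Finset.disjoint_right.1 hdisj u.2)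
  right_inv := by
    intro x
    by_cases h : x.1 ∈ T₁
    · simp only [dif_pos h, Sum.elim_inl]
    · simp only [dif_neg h, Sum.elim_inr]

@[simp] lemma unionEquiv_inl {m : ℕ} (T₁ T₂ : Finset (Fin m)) (hdisj : Disjoint T₁ T₂)
    (a : ↥T₁) : ((unionEquiv T₁ T₂ hdisj (Sum.inl a) : ↥(T₁ ∪ T₂)) : Fin m) = a.1 := rfl

@[simp] lemma unionEquiv_inr {m : ℕ} (T₁ T₂ : Finset (Fin m)) (hdisj : Disjoint T₁ T₂)
    (a : ↥T₂) : ((unionEquiv T₁ T₂ hdisj (Sum.inr a) : ↥(T₁ ∪ T₂)) : Fin m) = a.1 := rfl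

theorem pdet_union {m : ℕ} (P : Matrix (Fin m) (Fin m) ℝ) (T₁ T₂ : Finset (Fin m))
    (hdisj : Disjoint T₁ T₂)
    (h12 : ∀ i ∈ T₁, ∀ j ∈ T₂, P i j = 0) (h21 : ∀ i ∈ T₂, ∀ j ∈ T₁, P i j = 0) :
    pdet P (T₁ ∪ T₂) = pdet P T₁ * pdet P T₂ := by
  classical
  rw [pdet, ← Matrix.det_submatrix_equiv_self (unionEquiv T₁ T₂ hdisj) (msub P (T₁ ∪ T₂))]
  have hblock : (msub P (T₁ ∪ T₂)).submatrix (unionEquiv T₁ T₂ hdisj) (unionEquiv T₁ T₂ hdisj)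
      = Matrix.fromBlocks (msub P T₁) 0 0 (msub P T₂) := by
    ext i j
    cases i with
    | inl a =>
      cases j with
      | inl b =>
        simp [msub, Matrix.submatrix_apply]
      | inr b =>
        simp only [msub, Matrix.submatrix_apply, Matrix.fromBlocks_apply₁₂,
          Matrix.zero_apply, Matrix.of_apply, unionEquiv_inl, unionEquiv_inr]
        exact h12 a.1 a.2 b.1 b.2
    | inr a =>
      cases j with
      | inl b =>
        simp only [msub, Matrix.submatrix_apply, Matrix.fromBlocks_apply₂₁,
          Matrix.zero_apply, Matrix.of_apply, unionEquiv_inl, unionEquiv_inr]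
        exact h21 a.1 a.2 b.1 b.2
      | inr b =>
        simp [msub, Matrix.submatrix_apply]
  rw [hblock, Matrix.det_fromBlocks_zero₁₂]
  rfl

theorem key_sum {m : ℕ} (g : Finset (Fin m) → ℝ) {A S : Finset (Fin m)} (hS : S ⊆ A) :
    ∑ X : Finset (Fin m), g X * (if X ∩ A = S then 1 else 0)
      = ∑ T ∈ A.powerset.filter (fun T => S ⊆ T),
          (-1:ℝ)^((T \ S).card) * ∑ X : Finset (Fin m), (if T ⊆ X then g X else 0) := by
  have h1 : ∀ X, g X * (if X ∩ A = S then 1 else 0)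
      = ∑ T ∈ A.powerset.filter (fun T => S ⊆ T),
          (-1:ℝ)^((T \ S).card) * (if T ⊆ X then g X else 0) := by
    intro X
    rw [ind_inter_eq hS X, Finset.mul_sum]
    exact Finset.sum_congr rfl fun T _ => by split_ifs <;> ring
  rw [Finset.sum_congr rfl fun X _ => h1 X, Finset.sum_comm]
  exact Finset.sum_congr rfl fun T _ => by rw [Finset.mul_sum]

end Stmt5

/-- For a real `r × m` matrix `B` with linearly independent rows, `P = Bᵀ(BBᵀ)⁻¹B`, and
disjoint sets `A₁, A₂ ⊆ {1,…,m}` with `p_{ij} = 0` for all `i ∈ A₁`, `j ∈ A₂`: for all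
`S₁ ⊆ A₁` and `S₂ ⊆ A₂`,
`det(BBᵀ)·∑_{|X|=r, X∩A₁=S₁, X∩A₂=S₂} det(B[X])²
  = (∑_{|X|=r, X∩A₁=S₁} det(B[X])²)·(∑_{|X|=r, X∩A₂=S₂} det(B[X])²)`,
i.e. under `ν_B` the random sets `X ∩ A₁` and `X ∩ A₂` are independent. -/
theorem stmt5 (r m : ℕ) (B : Matrix (Fin r) (Fin m) ℝ)
    (hB : LinearIndependent ℝ (fun i => B i))
    (A₁ A₂ : Finset (Fin m)) (hd : Disjoint A₁ A₂)
    (hP : ∀ i ∈ A₁, ∀ j ∈ A₂, (Bᵀ * (B * Bᵀ)⁻¹ * B) i j = 0)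
    (S₁ S₂ : Finset (Fin m)) (hS₁ : S₁ ⊆ A₁) (hS₂ : S₂ ⊆ A₂) :
    (B * Bᵀ).det *
      (∑ X ∈ Finset.univ.filter
          (fun X : Finset (Fin m) => X.card = r ∧ X ∩ A₁ = S₁ ∧ X ∩ A₂ = S₂), detSq B X)
      = (∑ X ∈ Finset.univ.filter
            (fun X : Finset (Fin m) => X.card = r ∧ X ∩ A₁ = S₁), detSq B X) *
        (∑ X ∈ Finset.univ.filter
            (fun X : Finset (Fin m) => X.card = r ∧ X ∩ A₂ = S₂), detSq B X) := by
  classical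
  have hd0 : (B * Bᵀ).det ≠ 0 := Stmt5.det_mul_transpose_ne_zero B hB
  have hdu : IsUnit (B * Bᵀ).det := isUnit_iff_ne_zero.2 hd0
  set P : Matrix (Fin m) (Fin m) ℝ := Bᵀ * (B * Bᵀ)⁻¹ * B with hPdef
  have hsym : ∀ i j, P i j = P j i := by
    intro i j
    have hPt : Pᵀ = P := by
      rw [hPdef, Matrix.transpose_mul, Matrix.transpose_mul, Matrix.transpose_transpose,
        Matrix.transpose_nonsing_inv, Matrix.transpose_mul, Matrix.transpose_transpose,
        ← Matrix.mul_assoc]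
    conv_lhs => rw [← hPt]
    rfl
  have conv1 : ∀ (A S : Finset (Fin m)),
      (∑ X ∈ Finset.univ.filter (fun X : Finset (Fin m) => X.card = r ∧ X ∩ A = S), detSq B X)
        = ∑ X : Finset (Fin m), detSq B X * (if X ∩ A = S then 1 else 0) := by
    intro A S
    rw [Finset.sum_filter]
    refine Finset.sum_congr rfl fun X _ => ?_
    by_cases hc : X.card = r
    · by_cases he : X ∩ A = S <;> simp [hc, he]
    · simp [hc, Stmt5.detSq_of_ne B hc]
  have convp :
      (∑ X ∈ Finset.univ.filter
          (fun X : Finset (Fin m) => X.card = r ∧ X ∩ A₁ = S₁ ∧ X ∩ A₂ = S₂), detSq B X)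
        = ∑ X : Finset (Fin m),
            detSq B X * (if X ∩ A₁ = S₁ then 1 else 0) * (if X ∩ A₂ = S₂ then 1 else 0) := by
    rw [Finset.sum_filter]
    refine Finset.sum_congr rfl fun X _ => ?_
    by_cases hc : X.card = r
    · by_cases h1 : X ∩ A₁ = S₁ <;> by_cases h2 : X ∩ A₂ = S₂ <;> simp [hc, h1, h2]
    · simp [hc, Stmt5.detSq_of_ne B hc]
  have hone : ∀ (A S : Finset (Fin m)), S ⊆ A →
      (∑ X : Finset (Fin m), detSq B X * (if X ∩ A = S then 1 else 0))
        = (B * Bᵀ).det * ∑ T ∈ A.powerset.filter (fun T => S ⊆ T),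
            (-1:ℝ)^((T \ S).card) * Stmt5.pdet P T := by
    intro A S hS
    rw [Stmt5.key_sum (detSq B) hS, Finset.mul_sum]
    refine Finset.sum_congr rfl fun T _ => ?_
    rw [Stmt5.inclusion B hdu T]
    ring
  have hpair :
      (∑ X : Finset (Fin m),
          detSq B X * (if X ∩ A₁ = S₁ then 1 else 0) * (if X ∩ A₂ = S₂ then 1 else 0))
        = (B * Bᵀ).det *
          ((∑ T ∈ A₁.powerset.filter (fun T => S₁ ⊆ T),
              (-1:ℝ)^((T \ S₁).card) * Stmt5.pdet P T) *
           (∑ T ∈ A₂.powerset.filter (fun T => S₂ ⊆ T),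
              (-1:ℝ)^((T \ S₂).card) * Stmt5.pdet P T)) := by
    have step0 : ∀ X : Finset (Fin m),
        detSq B X * (if X ∩ A₁ = S₁ then (1:ℝ) else 0) * (if X ∩ A₂ = S₂ then 1 else 0)
        = (detSq B X * (if X ∩ A₂ = S₂ then 1 else 0)) * (if X ∩ A₁ = S₁ then 1 else 0) :=
      fun X => by ring
    rw [Finset.sum_congr rfl fun X _ => step0 X,
      Stmt5.key_sum (fun X => detSq B X * (if X ∩ A₂ = S₂ then 1 else 0)) hS₁]
    have step1 : ∀ T₁ ∈ A₁.powerset.filter (fun T => S₁ ⊆ T),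
        ((-1:ℝ)^((T₁ \ S₁).card) * ∑ X : Finset (Fin m),
            (if T₁ ⊆ X then detSq B X * (if X ∩ A₂ = S₂ then (1:ℝ) else 0) else 0))
          = ∑ T₂ ∈ A₂.powerset.filter (fun T => S₂ ⊆ T),
              ((-1:ℝ)^((T₁ \ S₁).card) * Stmt5.pdet P T₁) *
                (((-1:ℝ)^((T₂ \ S₂).card) * Stmt5.pdet P T₂) * (B * Bᵀ).det) := by
      intro T₁ hT₁
      have hT₁A : T₁ ⊆ A₁ := Finset.mem_powerset.1 (Finset.mem_filter.1 hT₁).1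
      have e0 : ∀ X : Finset (Fin m),
          (if T₁ ⊆ X then detSq B X * (if X ∩ A₂ = S₂ then (1:ℝ) else 0) else 0)
          = (if T₁ ⊆ X then detSq B X else 0) * (if X ∩ A₂ = S₂ then 1 else 0) := by
        intro X; split_ifs <;> ring
      rw [Finset.sum_congr rfl fun X _ => e0 X,
        Stmt5.key_sum (fun X => if T₁ ⊆ X then detSq B X else 0) hS₂, Finset.mul_sum]
      refine Finset.sum_congr rfl fun T₂ hT₂ => ?_
      have hT₂A : T₂ ⊆ A₂ := Finset.mem_powerset.1 (Finset.mem_filter.1 hT₂).1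
      have e1 : ∀ X : Finset (Fin m),
          (if T₂ ⊆ X then (if T₁ ⊆ X then detSq B X else 0) else 0)
          = (if T₁ ∪ T₂ ⊆ X then detSq B X else 0) := by
        intro X
        by_cases h1 : T₁ ⊆ X <;> by_cases h2 : T₂ ⊆ X <;>
          simp [h1, h2, Finset.union_subset_iff]
      have hdisj : Disjoint T₁ T₂ :=
        Finset.disjoint_of_subset_left hT₁A (Finset.disjoint_of_subset_right hT₂A hd)
      rw [Finset.sum_congr rfl fun X _ => e1 X, Stmt5.inclusion B hdu (T₁ ∪ T₂)]
      rw [show Stmt5.pdet (Bᵀ * (B * Bᵀ)⁻¹ * B) (T₁ ∪ T₂) = Stmt5.pdet P (T₁ ∪ T₂) from rfl,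
        Stmt5.pdet_union P T₁ T₂ hdisj (fun i hi j hj => hP i (hT₁A hi) j (hT₂A hj))
          (fun i hi j hj => by rw [hsym]; exact hP j (hT₁A hj) i (hT₂A hi))]
      ring
    rw [Finset.sum_congr rfl step1]
    rw [Finset.sum_mul_sum, Finset.mul_sum]
    refine Finset.sum_congr rfl fun T₁ _ => ?_
    rw [Finset.mul_sum]
    refine Finset.sum_congr rfl fun T₂ _ => ?_
    ring
  rw [convp, hpair, conv1 A₁ S₁, conv1 A₂ S₂, hone A₁ S₁ hS₁, hone A₂ S₂ hS₂]
  ring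
end

section
/- Let T and T' be proper subtrees of L_{n,k} such that T is a subtree of T' and every X ∈ V_k(T')∖V_k(T) has a neighbor in V(T). Let M be a complete matching of T, let U be the set of vertices of V_{k−1}(T) not covered by M, and for Y ∈ V_{k−1}(T) set Δ(Y) = deg_{T'}(Y) − deg_T(Y). Then the number of complete matchings M' of T' with M ⊆ M' equals (∏_{Y∈U} (Δ(Y)·k^{Δ(Y)−1} + k^{Δ(Y)})) · (∏_{Y∈V_{k−1}(T)∖U} k^{Δ(Y)}). -/
/-- The bipartite graph `L_{n,k}`. -/
def Lgraph (n k : ℕ) : SimpleGraph (Finset (Fin n)) where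
  Adj A B := (A.card = k ∧ B.card = k + 1 ∧ A ⊆ B) ∨ (B.card = k ∧ A.card = k + 1 ∧ B ⊆ A)
  symm := by
    refine ⟨fun A B h => ?_⟩
    tauto
  loopless := by
    refine ⟨fun A h => ?_⟩
    rcases h with ⟨h1, h2, -⟩ | ⟨h1, h2, -⟩ <;> omega

instance (n k : ℕ) : DecidableRel (Lgraph n k).Adj := fun A B =>
  decidable_of_iff
    ((A.card = k ∧ B.card = k + 1 ∧ A ⊆ B) ∨ (B.card = k ∧ A.card = k + 1 ∧ B ⊆ A))
    Iff.rfl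

/-- A proper subtree of `L_{n,k}`, given by its vertex set `t`. -/
def IsProperSubtree (n k : ℕ) (t : Finset (Finset (Fin n))) : Prop :=
  (∀ Z ∈ t, Z.card = k ∨ Z.card = k + 1) ∧
  ((Lgraph n k).induce (↑t : Set (Finset (Fin n)))).IsTree ∧
  (∀ X ∈ t, X.card = k + 1 → ∀ Y ⊆ X, Y.card = k → Y ∈ t)

/-- The degree of a vertex `Y` in the subgraph of `L_{n,k}` induced by the vertex set `t`. -/
def degIn (n k : ℕ) (t : Finset (Finset (Fin n))) (Y : Finset (Fin n)) : ℕ :=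
  (t.filter (fun Z => (Lgraph n k).Adj Y Z)).card


set_option linter.unusedSectionVars false
set_option maxHeartbeats 1000000
open Finset

section Counting

variable {κ σ : Type*} [DecidableEq κ]

/-- The number of functions `κ → σ` satisfying `P`. -/
noncomputable def cnt (P : (κ → σ) → Prop) : ℕ := Nat.card {f : κ → σ // P f}

lemma cnt_congr {P Q : (κ → σ) → Prop} (h : ∀ f, P f ↔ Q f) : cnt P = cnt Q :=
  Nat.card_congr (Equiv.subtypeEquivRight h)

lemma cnt_const (d : σ) : cnt (fun f : κ → σ => ∀ x, f x = d) = 1 := by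
  have : Unique {f : κ → σ // ∀ x, f x = d} :=
    ⟨⟨⟨fun _ => d, fun _ => rfl⟩⟩, by
      rintro ⟨f, hf⟩
      ext x
      exact hf x⟩
  simp [cnt, Nat.card_unique]

/-- Splitting a count over a block of coordinates. -/
lemma cnt_block_split (s : Finset κ) (d : σ) (R T : (κ → σ) → Prop)
    (hR : ∀ f g : κ → σ, (∀ x ∈ s, f x = g x) → R f → R g)
    (hT : ∀ f g : κ → σ, (∀ x ∉ s, f x = g x) → T f → T g) :
    cnt (fun f => R f ∧ T f)
      = cnt (fun f => R f ∧ ∀ x ∉ s, f x = d) * cnt (fun f => (∀ x ∈ s, f x = d) ∧ T f) := by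
  rw [cnt, cnt, cnt, ← Nat.card_prod]
  apply Nat.card_congr
  refine
    { toFun := fun f =>
        (⟨fun x => if x ∈ s then f.1 x else d, ?_, fun x hx => if_neg hx⟩,
         ⟨fun x => if x ∈ s then d else f.1 x, fun x hx => if_pos hx, ?_⟩)
      invFun := fun p => ⟨fun x => if x ∈ s then p.1.1 x else p.2.1 x, ?_, ?_⟩
      left_inv := ?_
      right_inv := ?_ }
  · exact hR f.1 _ (fun x hx => (if_pos hx).symm) f.2.1
  · exact hT f.1 _ (fun x hx => (if_neg hx).symm) f.2.2
  · exact hR p.1.1 _ (fun x hx => (if_pos hx).symm) p.1.2.1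
  · exact hT p.2.1 _ (fun x hx => (if_neg hx).symm) p.2.2.2
  · rintro ⟨f, hf⟩
    apply Subtype.ext
    funext x
    by_cases hx : x ∈ s <;> simp [hx]
  · rintro ⟨⟨f1, hf1⟩, ⟨f2, hf2⟩⟩
    refine Prod.ext (Subtype.ext ?_) (Subtype.ext ?_) <;> funext x <;>
      by_cases hx : x ∈ s <;> simp [hx]
    · exact (hf1.2 x hx).symm
    · exact (hf2.1 x hx).symm

lemma cnt_single (Z : κ) (C : Finset σ) (d : σ) :
    cnt (fun f : κ → σ => f Z ∈ C ∧ ∀ x, x ≠ Z → f x = d) = C.card := by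
  rw [cnt, ← Nat.card_eq_finsetCard]
  apply Nat.card_congr
  refine
    { toFun := fun f => ⟨f.1 Z, f.2.1⟩
      invFun := fun v => ⟨Function.update (fun _ => d) Z v.1, by simp, fun x hx => by
        simp [Function.update, hx]⟩
      left_inv := ?_
      right_inv := ?_ }
  · rintro ⟨f, hf⟩
    apply Subtype.ext
    funext x
    by_cases hx : x = Z
    · subst hx; simp
    · simp [Function.update, hx, hf.2 x hx]
  · rintro ⟨v, hv⟩
    simp

lemma cnt_pi (s : Finset κ) (L : κ → Finset σ) (d : σ) :
    cnt (fun f : κ → σ => (∀ X ∈ s, f X ∈ L X) ∧ ∀ X ∉ s, f X = d)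
      = ∏ X ∈ s, (L X).card := by
  induction s using Finset.induction_on with
  | empty =>
    rw [cnt_congr (Q := fun f : κ → σ => ∀ x, f x = d) (fun f => by simp)]
    simp [cnt_const]
  | @insert Z s hZ ih =>
    have e1 : cnt (fun f : κ → σ => (∀ X ∈ insert Z s, f X ∈ L X) ∧ ∀ X ∉ insert Z s, f X = d)
        = cnt (fun f : κ → σ => (f Z ∈ L Z) ∧
            ((∀ X ∈ s, f X ∈ L X) ∧ ∀ X ∉ insert Z s, f X = d)) := by
      apply cnt_congr
      intro f
      constructor
      · rintro ⟨h1, h2⟩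
        exact ⟨h1 Z (by simp), fun X hX => h1 X (by simp [hX]), h2⟩
      · rintro ⟨h1, h2, h3⟩
        refine ⟨fun X hX => ?_, h3⟩
        rcases Finset.mem_insert.mp hX with rfl | hX
        · exact h1
        · exact h2 X hX
    rw [e1, cnt_block_split ({Z} : Finset κ) d _ _
      (fun f g h => by rw [h Z (by simp)]; exact id)
      (fun f g h hf => by
        constructor
        · intro X hX
          rw [← h X (by simp only [mem_singleton]; rintro rfl; exact hZ hX)]
          exact hf.1 X hX
        · intro X hX
          rw [← h X (by simp only [mem_singleton]; rintro rfl; exact hX (by simp))]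
          exact hf.2 X hX)]
    have e2 : cnt (fun f : κ → σ =>
          (∀ x ∈ ({Z} : Finset κ), f x = d) ∧
            ((∀ X ∈ s, f X ∈ L X) ∧ ∀ X ∉ insert Z s, f X = d))
        = cnt (fun f : κ → σ => (∀ X ∈ s, f X ∈ L X) ∧ ∀ X ∉ s, f X = d) := by
      apply cnt_congr
      intro f
      constructor
      · rintro ⟨h1, h2, h3⟩
        refine ⟨h2, fun X hX => ?_⟩
        by_cases hXZ : X = Z
        · exact h1 X (by simp [hXZ])
        · exact h3 X (by simp [hXZ, hX])
      · rintro ⟨h1, h2⟩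
        exact ⟨fun x hx => h2 x (by simp only [mem_singleton] at hx; subst hx; exact hZ),
          h1, fun X hX => h2 X (fun h => hX (Finset.mem_insert_of_mem h))⟩
    have e3 : cnt (fun f : κ → σ => f Z ∈ L Z ∧ ∀ x ∉ ({Z} : Finset κ), f x = d)
        = (L Z).card := by
      rw [cnt_congr (Q := fun f : κ → σ => f Z ∈ L Z ∧ ∀ x, x ≠ Z → f x = d)
        (fun f => by simp), cnt_single]
    rw [e2, e3, ih, Finset.prod_insert hZ]

end Counting

section Counting2

variable {κ σ : Type*} [DecidableEq κ]

set_option linter.unusedSectionVars false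

lemma cnt_split [Finite κ] [Finite σ] (P Q : (κ → σ) → Prop) :
    cnt P = cnt (fun f => P f ∧ Q f) + cnt (fun f => P f ∧ ¬ Q f) := by
  classical
  rw [cnt, cnt, cnt, ← Nat.card_sum]
  apply Nat.card_congr
  exact (Equiv.subtypeEquivRight (q := fun f => (P f ∧ Q f) ∨ (P f ∧ ¬ Q f))
    (fun f => by tauto)).trans
    (subtypeOrEquiv _ _ (by intro r hp hq x hx; exact (hq x hx).2 (hp x hx).2))

lemma cnt_atmostone [Finite κ] [Finite σ] [DecidableEq σ] (s : Finset κ) (L : κ → Finset σ) (y d : σ)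
    (hy : ∀ X ∈ s, y ∉ L X) :
    cnt (fun f : κ → σ =>
      (∀ X ∈ s, f X ∈ insert y (L X)) ∧
      (∀ X ∈ s, ∀ X' ∈ s, f X = y → f X' = y → X = X') ∧
      ∀ X ∉ s, f X = d)
    = ∏ X ∈ s, (L X).card + ∑ X ∈ s, ∏ X' ∈ s.erase X, (L X').card := by
  induction s using Finset.induction_on with
  | empty =>
    rw [cnt_congr (Q := fun f : κ → σ => ∀ x, f x = d) (fun f => by simp)]
    simp [cnt_const]
  | @insert Z s hZ ih =>
    rw [cnt_split _ (fun f => f Z = y)]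
    have eA : cnt (fun f : κ → σ =>
        ((∀ X ∈ insert Z s, f X ∈ insert y (L X)) ∧
          (∀ X ∈ insert Z s, ∀ X' ∈ insert Z s, f X = y → f X' = y → X = X') ∧
          ∀ X ∉ insert Z s, f X = d) ∧ f Z = y)
        = cnt (fun f : κ → σ => (f Z = y) ∧
            ((∀ X ∈ s, f X ∈ L X) ∧ ∀ X ∉ insert Z s, f X = d)) := by
      apply cnt_congr
      intro f
      constructor
      · rintro ⟨⟨h1, h2, h3⟩, h4⟩
        refine ⟨h4, fun X hX => ?_, h3⟩
        have := h1 X (Finset.mem_insert_of_mem hX)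
        rcases Finset.mem_insert.mp this with hXy | hXm
        · exact absurd (h2 X (Finset.mem_insert_of_mem hX) Z (Finset.mem_insert_self _ _)
            hXy h4) (by rintro rfl; exact hZ hX)
        · exact hXm
      · rintro ⟨h1, h2, h3⟩
        refine ⟨⟨fun X hX => ?_, fun X hX X' hX' hXy hX'y => ?_, h3⟩, h1⟩
        · rcases Finset.mem_insert.mp hX with rfl | hX
          · rw [h1]; exact Finset.mem_insert_self _ _
          · exact Finset.mem_insert_of_mem (h2 X hX)
        · rcases Finset.mem_insert.mp hX with rfl | hX
          · rcases Finset.mem_insert.mp hX' with rfl | hX'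
            · rfl
            · exact absurd hX'y (fun h => hy X' (Finset.mem_insert_of_mem hX') (h ▸ h2 X' hX'))
          · exact absurd hXy (fun h => hy X (Finset.mem_insert_of_mem hX) (h ▸ h2 X hX))
    have eB : cnt (fun f : κ → σ =>
        ((∀ X ∈ insert Z s, f X ∈ insert y (L X)) ∧
          (∀ X ∈ insert Z s, ∀ X' ∈ insert Z s, f X = y → f X' = y → X = X') ∧
          ∀ X ∉ insert Z s, f X = d) ∧ ¬ f Z = y)
        = cnt (fun f : κ → σ => (f Z ∈ L Z) ∧
            ((∀ X ∈ s, f X ∈ insert y (L X)) ∧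
              (∀ X ∈ s, ∀ X' ∈ s, f X = y → f X' = y → X = X') ∧
              ∀ X ∉ insert Z s, f X = d)) := by
      apply cnt_congr
      intro f
      constructor
      · rintro ⟨⟨h1, h2, h3⟩, h4⟩
        refine ⟨?_, fun X hX => h1 X (Finset.mem_insert_of_mem hX),
          fun X hX X' hX' hXy hX'y =>
            h2 X (Finset.mem_insert_of_mem hX) X' (Finset.mem_insert_of_mem hX') hXy hX'y, h3⟩
        have := h1 Z (Finset.mem_insert_self _ _)
        rcases Finset.mem_insert.mp this with hZy | hZm
        · exact absurd hZy h4
        · exact hZm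
      · rintro ⟨h1, h2, h3, h4⟩
        have hZy : f Z ≠ y := fun h => hy Z (Finset.mem_insert_self _ _) (h ▸ h1)
        refine ⟨⟨fun X hX => ?_, fun X hX X' hX' hXy hX'y => ?_, h4⟩, hZy⟩
        · rcases Finset.mem_insert.mp hX with rfl | hX
          · exact Finset.mem_insert_of_mem h1
          · exact h2 X hX
        · rcases Finset.mem_insert.mp hX with rfl | hX
          · exact absurd hXy hZy
          · rcases Finset.mem_insert.mp hX' with rfl | hX'
            · exact absurd hX'y hZy
            · exact h3 X hX X' hX' hXy hX'y
    rw [eA, eB]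
    have hblockA := cnt_block_split ({Z} : Finset κ) d
      (fun f : κ → σ => f Z = y)
      (fun f : κ → σ => (∀ X ∈ s, f X ∈ L X) ∧ ∀ X ∉ insert Z s, f X = d)
      (fun f g h => by rw [h Z (by simp)]; exact id)
      (fun f g h hf => by
        constructor
        · intro X hX
          rw [← h X (by simp only [mem_singleton]; rintro rfl; exact hZ hX)]
          exact hf.1 X hX
        · intro X hX
          rw [← h X (by simp only [mem_singleton]; rintro rfl; exact hX (by simp))]
          exact hf.2 X hX)
    have hblockB := cnt_block_split ({Z} : Finset κ) d
      (fun f : κ → σ => f Z ∈ L Z)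
      (fun f : κ → σ => (∀ X ∈ s, f X ∈ insert y (L X)) ∧
          (∀ X ∈ s, ∀ X' ∈ s, f X = y → f X' = y → X = X') ∧
          ∀ X ∉ insert Z s, f X = d)
      (fun f g h => by rw [h Z (by simp)]; exact id)
      (fun f g h hf => by
        obtain ⟨hf1, hf2, hf3⟩ := hf
        have hne : ∀ X ∈ s, f X = g X := fun X hX =>
          h X (by simp only [mem_singleton]; rintro rfl; exact hZ hX)
        refine ⟨fun X hX => hne X hX ▸ hf1 X hX,
          fun X hX X' hX' hXy hX'y => hf2 X hX X' hX' (by rw [hne X hX]; exact hXy)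
            (by rw [hne X' hX']; exact hX'y), fun X hX => ?_⟩
        rw [← h X (by simp only [mem_singleton]; rintro rfl; exact hX (by simp))]
        exact hf3 X hX)
    rw [hblockA, hblockB]
    have e1 : cnt (fun f : κ → σ => f Z = y ∧ ∀ x ∉ ({Z} : Finset κ), f x = d)
        = 1 := by
      rw [cnt_congr (Q := fun f : κ → σ => f Z ∈ ({y} : Finset σ) ∧ ∀ x, x ≠ Z → f x = d)
        (fun f => by simp), cnt_single, Finset.card_singleton]
    have e2 : cnt (fun f : κ → σ =>
          (∀ x ∈ ({Z} : Finset κ), f x = d) ∧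
            ((∀ X ∈ s, f X ∈ L X) ∧ ∀ X ∉ insert Z s, f X = d))
        = ∏ X ∈ s, (L X).card := by
      rw [cnt_congr (Q := fun f : κ → σ => (∀ X ∈ s, f X ∈ L X) ∧ ∀ X ∉ s, f X = d)
        (fun f => ?_), cnt_pi]
      constructor
      · rintro ⟨h1, h2, h3⟩
        refine ⟨h2, fun X hX => ?_⟩
        by_cases hXZ : X = Z
        · exact h1 X (by simp [hXZ])
        · exact h3 X (by simp [hXZ, hX])
      · rintro ⟨h1, h2⟩
        exact ⟨fun x hx => h2 x (by simp only [mem_singleton] at hx; subst hx; exact hZ),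
          h1, fun X hX => h2 X (fun h => hX (Finset.mem_insert_of_mem h))⟩
    have e3 : cnt (fun f : κ → σ => f Z ∈ L Z ∧ ∀ x ∉ ({Z} : Finset κ), f x = d)
        = (L Z).card := by
      rw [cnt_congr (Q := fun f : κ → σ => f Z ∈ L Z ∧ ∀ x, x ≠ Z → f x = d)
        (fun f => by simp), cnt_single]
    have e4 : cnt (fun f : κ → σ =>
          (∀ x ∈ ({Z} : Finset κ), f x = d) ∧
            ((∀ X ∈ s, f X ∈ insert y (L X)) ∧
              (∀ X ∈ s, ∀ X' ∈ s, f X = y → f X' = y → X = X') ∧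
              ∀ X ∉ insert Z s, f X = d))
        = cnt (fun f : κ → σ =>
            (∀ X ∈ s, f X ∈ insert y (L X)) ∧
            (∀ X ∈ s, ∀ X' ∈ s, f X = y → f X' = y → X = X') ∧
            ∀ X ∉ s, f X = d) := by
      apply cnt_congr
      intro f
      constructor
      · rintro ⟨h1, h2, h3, h4⟩
        refine ⟨h2, h3, fun X hX => ?_⟩
        by_cases hXZ : X = Z
        · exact h1 X (by simp [hXZ])
        · exact h4 X (by simp [hXZ, hX])
      · rintro ⟨h1, h2, h3⟩
        exact ⟨fun x hx => h3 x (by simp only [mem_singleton] at hx; subst hx; exact hZ),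
          h1, h2, fun X hX => h3 X (fun h => hX (Finset.mem_insert_of_mem h))⟩
    rw [e1, e2, e3, e4, ih (fun X hX => hy X (Finset.mem_insert_of_mem hX))]
    rw [Finset.prod_insert hZ, Finset.sum_insert hZ, Finset.erase_insert hZ]
    have hsum : ∑ X ∈ s, ∏ X' ∈ (insert Z s).erase X, (L X').card
        = ∑ X ∈ s, (L Z).card * ∏ X' ∈ s.erase X, (L X').card := by
      refine Finset.sum_congr rfl (fun X hX => ?_)
      rw [Finset.erase_insert_of_ne (by rintro rfl; exact hZ hX),
        Finset.prod_insert (fun h => hZ (Finset.mem_of_mem_erase h))]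
    rw [hsum, ← Finset.mul_sum]
    ring

lemma cnt_fiber {ι : Type*} [DecidableEq ι] (B : Finset ι) (fiber : ι → Finset κ)
    (hdisj : ∀ Y ∈ B, ∀ Y' ∈ B, Y ≠ Y' → ∀ x ∈ fiber Y, x ∉ fiber Y')
    (Q : ι → (κ → σ) → Prop)
    (hQ : ∀ Y ∈ B, ∀ f g : κ → σ, (∀ x ∈ fiber Y, f x = g x) → Q Y f → Q Y g) (d : σ) :
    cnt (fun f : κ → σ => (∀ Y ∈ B, Q Y f) ∧ ∀ x ∉ B.biUnion fiber, f x = d)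
      = ∏ Y ∈ B, cnt (fun f : κ → σ => Q Y f ∧ ∀ x ∉ fiber Y, f x = d) := by
  induction B using Finset.induction_on with
  | empty =>
    rw [cnt_congr (Q := fun f : κ → σ => ∀ x, f x = d) (fun f => by simp)]
    simp [cnt_const]
  | @insert Y B hY ih =>
    have e1 : cnt (fun f : κ → σ =>
          (∀ Y' ∈ insert Y B, Q Y' f) ∧ ∀ x ∉ (insert Y B).biUnion fiber, f x = d)
        = cnt (fun f : κ → σ => Q Y f ∧
            ((∀ Y' ∈ B, Q Y' f) ∧ ∀ x ∉ (insert Y B).biUnion fiber, f x = d)) := by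
      apply cnt_congr
      intro f
      constructor
      · rintro ⟨h1, h2⟩
        exact ⟨h1 Y (Finset.mem_insert_self _ _),
          fun Y' hY' => h1 Y' (Finset.mem_insert_of_mem hY'), h2⟩
      · rintro ⟨h1, h2, h3⟩
        refine ⟨fun Y' hY' => ?_, h3⟩
        rcases Finset.mem_insert.mp hY' with rfl | hY'
        · exact h1
        · exact h2 Y' hY'
    rw [e1, cnt_block_split (fiber Y) d _ _
      (fun f g h => hQ Y (Finset.mem_insert_self _ _) f g h)
      (fun f g h hf => by
        obtain ⟨hf1, hf2⟩ := hf
        refine ⟨fun Y' hY' => hQ Y' (Finset.mem_insert_of_mem hY') f g (fun x hx => ?_) (hf1 Y' hY'),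
          fun x hx => ?_⟩
        · exact h x (hdisj Y' (Finset.mem_insert_of_mem hY') Y (Finset.mem_insert_self _ _)
            (by rintro rfl; exact hY hY') x hx)
        · rw [← h x (fun hxY => hx (Finset.mem_biUnion.mpr ⟨Y, Finset.mem_insert_self _ _, hxY⟩))]
          exact hf2 x hx)]
    have e2 : cnt (fun f : κ → σ =>
          (∀ x ∈ fiber Y, f x = d) ∧
            ((∀ Y' ∈ B, Q Y' f) ∧ ∀ x ∉ (insert Y B).biUnion fiber, f x = d))
        = cnt (fun f : κ → σ => (∀ Y' ∈ B, Q Y' f) ∧ ∀ x ∉ B.biUnion fiber, f x = d) := by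
      apply cnt_congr
      intro f
      constructor
      · rintro ⟨h1, h2, h3⟩
        refine ⟨h2, fun x hx => ?_⟩
        by_cases hxY : x ∈ fiber Y
        · exact h1 x hxY
        · refine h3 x (fun hmem => ?_)
          rcases Finset.mem_biUnion.mp hmem with ⟨Y', hY', hx'⟩
          rcases Finset.mem_insert.mp hY' with rfl | hY'
          · exact hxY hx'
          · exact hx (Finset.mem_biUnion.mpr ⟨Y', hY', hx'⟩)
      · rintro ⟨h1, h2⟩
        refine ⟨fun x hx => h2 x (fun hmem => ?_), h1,
          fun x hx => h2 x (fun hmem => hx (Finset.mem_biUnion.mpr ?_))⟩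
        · rcases Finset.mem_biUnion.mp hmem with ⟨Y', hY', hx'⟩
          exact hdisj Y (Finset.mem_insert_self _ _) Y' (Finset.mem_insert_of_mem hY')
            (by rintro rfl; exact hY hY') x hx hx'
        · rcases Finset.mem_biUnion.mp hmem with ⟨Y', hY', hx'⟩
          exact ⟨Y', Finset.mem_insert_of_mem hY', hx'⟩
    rw [e2, ih (fun Y1 h1 Y2 h2 hne => hdisj Y1 (Finset.mem_insert_of_mem h1) Y2
        (Finset.mem_insert_of_mem h2) hne)
      (fun Y1 h1 => hQ Y1 (Finset.mem_insert_of_mem h1)), Finset.prod_insert hY]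

end Counting2

section Structural

variable {n k : ℕ}

lemma adj_card_k {Y Z : Finset (Fin n)} (hY : Y.card = k) (h : (Lgraph n k).Adj Y Z) :
    Z.card = k + 1 ∧ Y ⊆ Z := by
  rcases h with ⟨-, h2, h3⟩ | ⟨-, h2, -⟩
  · exact ⟨h2, h3⟩
  · omega

lemma adj_card_k1 {X Z : Finset (Fin n)} (hX : X.card = k + 1) (h : (Lgraph n k).Adj X Z) :
    Z.card = k ∧ Z ⊆ X := by
  rcases h with ⟨h1, -, -⟩ | ⟨h1, -, h3⟩
  · omega
  · exact ⟨h1, h3⟩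

/-- In the tree `t'`, a vertex `X ∉ t` has at most one neighbor in the connected subtree `t`. -/
lemma anchor_unique {t t' : Finset (Finset (Fin n))} (htt' : t ⊆ t')
    (htc : ((Lgraph n k).induce (↑t : Set (Finset (Fin n)))).Connected)
    (ht'a : ((Lgraph n k).induce (↑t' : Set (Finset (Fin n)))).IsAcyclic)
    {X Y₁ Y₂ : Finset (Fin n)} (hX : X ∈ t') (hXt : X ∉ t)
    (hY₁ : Y₁ ∈ t) (hY₂ : Y₂ ∈ t)
    (h1 : (Lgraph n k).Adj Y₁ X) (h2 : (Lgraph n k).Adj Y₂ X) : Y₁ = Y₂ := by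
  by_contra hne
  set G' := (Lgraph n k).induce (↑t' : Set (Finset (Fin n)))
  let a : ↥(↑t' : Set (Finset (Fin n))) := ⟨Y₁, htt' hY₁⟩
  let b : ↥(↑t' : Set (Finset (Fin n))) := ⟨Y₂, htt' hY₂⟩
  let x : ↥(↑t' : Set (Finset (Fin n))) := ⟨X, hX⟩
  have hax : G'.Adj a x := h1
  have hxb : G'.Adj x b := h2.symm
  have hr1 : (SimpleGraph.Walk.cons hax (SimpleGraph.Walk.cons hxb SimpleGraph.Walk.nil)).IsPath := by
    rw [SimpleGraph.Walk.cons_isPath_iff]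
    refine ⟨?_, ?_⟩
    · rw [SimpleGraph.Walk.cons_isPath_iff]
      refine ⟨SimpleGraph.Walk.IsPath.nil, ?_⟩
      simp only [SimpleGraph.Walk.support_nil, List.mem_singleton]
      intro h
      have hxy : X = Y₂ := Subtype.ext_iff.mp h
      exact hXt (by rw [hxy]; exact hY₂)
    · simp only [SimpleGraph.Walk.support_cons, SimpleGraph.Walk.support_nil]
      intro h
      rcases List.mem_cons.mp h with h | h
      · have hxy : Y₁ = X := Subtype.ext_iff.mp h
        exact hXt (by rw [← hxy]; exact hY₁)
      · rcases List.mem_singleton.mp h with h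
        exact hne (Subtype.ext_iff.mp h)
  -- the path inside t
  have hreach := (htc.preconnected ⟨Y₁, hY₁⟩ ⟨Y₂, hY₂⟩)
  rcases hreach with ⟨w⟩
  let φ := SimpleGraph.induceHomOfLE (Lgraph n k) (show (↑t : Set (Finset (Fin n))) ≤ ↑t' by
    exact_mod_cast fun z hz => htt' hz)
  let q := (w.toPath.val.map φ.toHom)
  have hq : q.IsPath := SimpleGraph.Walk.map_isPath_of_injective φ.injective w.toPath.prop
  have hqa : φ ⟨Y₁, hY₁⟩ = a := rfl
  have hqb : φ ⟨Y₂, hY₂⟩ = b := rfl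
  have huniq := ht'a.path_unique
    ⟨(q.copy hqa hqb), (SimpleGraph.Walk.isPath_copy q hqa hqb).mpr hq⟩
    ⟨SimpleGraph.Walk.cons hax (SimpleGraph.Walk.cons hxb SimpleGraph.Walk.nil), hr1⟩
  have hx : x ∈ (SimpleGraph.Walk.cons hax (SimpleGraph.Walk.cons hxb SimpleGraph.Walk.nil)).support := by
    simp [SimpleGraph.Walk.support_cons]
  have hweq : q.copy hqa hqb
      = SimpleGraph.Walk.cons hax (SimpleGraph.Walk.cons hxb SimpleGraph.Walk.nil) :=
    congrArg Subtype.val huniq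
  rw [← hweq] at hx
  simp only [q, SimpleGraph.Walk.support_copy, SimpleGraph.Walk.support_map, List.mem_map] at hx
  rcases hx with ⟨u, -, hu⟩
  apply hXt
  have : (u : Finset (Fin n)) = X := by
    have := congrArg Subtype.val hu
    exact this
  exact this ▸ u.2

/-- A `k`-set outside `t` is contained in at most one `(k+1)`-set of `t'` outside `t`. -/
lemma leaf_unique {t t' : Finset (Finset (Fin n))} (htt' : t ⊆ t')
    (htc : ((Lgraph n k).induce (↑t : Set (Finset (Fin n)))).Connected)
    (ht'a : ((Lgraph n k).induce (↑t' : Set (Finset (Fin n)))).IsAcyclic)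
    {Y X₁ X₂ Y₁ Y₂ : Finset (Fin n)} (hYt' : Y ∈ t') (hYt : Y ∉ t)
    (hX₁ : X₁ ∈ t') (hX₁t : X₁ ∉ t) (hX₂ : X₂ ∈ t') (hX₂t : X₂ ∉ t)
    (hY₁ : Y₁ ∈ t) (hY₂ : Y₂ ∈ t)
    (a1 : (Lgraph n k).Adj X₁ Y₁) (a2 : (Lgraph n k).Adj X₂ Y₂)
    (b1 : (Lgraph n k).Adj X₁ Y) (b2 : (Lgraph n k).Adj X₂ Y) : X₁ = X₂ := by
  by_contra hne
  set G' := (Lgraph n k).induce (↑t' : Set (Finset (Fin n)))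
  let x1 : ↥(↑t' : Set (Finset (Fin n))) := ⟨X₁, hX₁⟩
  let x2 : ↥(↑t' : Set (Finset (Fin n))) := ⟨X₂, hX₂⟩
  let yv : ↥(↑t' : Set (Finset (Fin n))) := ⟨Y, hYt'⟩
  let av : ↥(↑t' : Set (Finset (Fin n))) := ⟨Y₁, htt' hY₁⟩
  let bv : ↥(↑t' : Set (Finset (Fin n))) := ⟨Y₂, htt' hY₂⟩
  have h1y : G'.Adj x1 yv := b1
  have hy2 : G'.Adj yv x2 := b2.symm
  have h1a : G'.Adj x1 av := a1
  have h2b : G'.Adj x2 bv := a2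
  have hx1yv : x1 ≠ yv := fun h => (b1.ne) (Subtype.ext_iff.mp h)
  have hx2yv : x2 ≠ yv := fun h => (b2.ne) (Subtype.ext_iff.mp h)
  have hx1x2 : x1 ≠ x2 := fun h => hne (Subtype.ext_iff.mp h)
  -- first path x1 - Y - x2
  let r1 : G'.Walk x1 x2 :=
    SimpleGraph.Walk.cons h1y (SimpleGraph.Walk.cons hy2 SimpleGraph.Walk.nil)
  have hr1 : r1.IsPath := by
    rw [SimpleGraph.Walk.cons_isPath_iff, SimpleGraph.Walk.cons_isPath_iff]
    refine ⟨⟨SimpleGraph.Walk.IsPath.nil, ?_⟩, ?_⟩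
    · simp only [SimpleGraph.Walk.support_nil, List.mem_singleton]
      exact fun h => hx2yv (h.symm)
    · simp only [SimpleGraph.Walk.support_cons, SimpleGraph.Walk.support_nil]
      intro h
      rcases List.mem_cons.mp h with h | h
      · exact hx1yv h
      · exact hx1x2 (List.mem_singleton.mp h)
  -- second path x1 - Y₁ - (path in t) - Y₂ - x2
  obtain ⟨w⟩ := htc.preconnected ⟨Y₁, hY₁⟩ ⟨Y₂, hY₂⟩
  let φ := SimpleGraph.induceHomOfLE (Lgraph n k) (show (↑t : Set (Finset (Fin n))) ≤ ↑t' by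
    exact_mod_cast fun z hz => htt' hz)
  have hqa : φ ⟨Y₁, hY₁⟩ = av := rfl
  have hqb : φ ⟨Y₂, hY₂⟩ = bv := rfl
  let q : G'.Walk av bv := (w.toPath.val.map φ.toHom).copy hqa hqb
  have hq : q.IsPath := (SimpleGraph.Walk.isPath_copy _ hqa hqb).mpr
    (SimpleGraph.Walk.map_isPath_of_injective φ.injective w.toPath.prop)
  have hqsup : ∀ v ∈ q.support, (v : Finset (Fin n)) ∈ t := by
    intro v hv
    simp only [q, SimpleGraph.Walk.support_copy, SimpleGraph.Walk.support_map,
      List.mem_map] at hv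
    obtain ⟨u, -, hu⟩ := hv
    have : (u : Finset (Fin n)) = (v : Finset (Fin n)) := congrArg Subtype.val hu
    exact this ▸ u.2
  let w2 : G'.Walk x2 av := SimpleGraph.Walk.cons h2b q.reverse
  have hw2 : w2.IsPath := by
    rw [SimpleGraph.Walk.cons_isPath_iff]
    refine ⟨hq.reverse, fun h => ?_⟩
    rw [SimpleGraph.Walk.support_reverse, List.mem_reverse] at h
    exact hX₂t (hqsup _ h)
  let r2 : G'.Walk x1 x2 := SimpleGraph.Walk.cons h1a w2.reverse
  have hr2 : r2.IsPath := by
    rw [SimpleGraph.Walk.cons_isPath_iff]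
    refine ⟨hw2.reverse, fun h => ?_⟩
    rw [SimpleGraph.Walk.support_reverse, List.mem_reverse] at h
    simp only [w2, SimpleGraph.Walk.support_cons] at h
    rcases List.mem_cons.mp h with h | h
    · exact hx1x2 h
    · rw [SimpleGraph.Walk.support_reverse, List.mem_reverse] at h
      exact hX₁t (hqsup _ h)
  have huniq := ht'a.path_unique ⟨r1, hr1⟩ ⟨r2, hr2⟩
  have hweq : r1 = r2 := congrArg Subtype.val huniq
  have hyv1 : yv ∈ r1.support := by
    simp [r1, SimpleGraph.Walk.support_cons]
  rw [hweq] at hyv1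
  simp only [r2, SimpleGraph.Walk.support_cons, SimpleGraph.Walk.support_reverse,
    List.mem_cons, List.mem_reverse] at hyv1
  rcases hyv1 with h | h
  · exact hx1yv h.symm
  · simp only [w2, SimpleGraph.Walk.support_cons, SimpleGraph.Walk.support_reverse] at h
    rcases List.mem_cons.mp h with h | h
    · exact hx2yv h.symm
    · rw [List.mem_reverse] at h
      exact hYt (hqsup _ h)

end Structural

/-- The subgraph obtained from `M` by adding, for each `X ∈ A`, the edge `X ~ f X`. -/
def mkSub {V : Type*} (G : SimpleGraph V) (M : G.Subgraph) (A : Finset V) (f : V → V)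
    (hadj : ∀ X ∈ A, G.Adj X (f X)) : G.Subgraph where
  verts := M.verts ∪ {v | ∃ X ∈ A, v = X ∨ v = f X}
  Adj a b := M.Adj a b ∨ ∃ X ∈ A, (a = X ∧ b = f X) ∨ (b = X ∧ a = f X)
  adj_sub := by
    rintro a b (h | ⟨X, hX, ⟨rfl, rfl⟩ | ⟨rfl, rfl⟩⟩)
    · exact M.adj_sub h
    · exact hadj a hX
    · exact (hadj b hX).symm
  edge_vert := by
    rintro a b (h | ⟨X, hX, ⟨rfl, rfl⟩ | ⟨rfl, rfl⟩⟩)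
    · exact Or.inl (M.edge_vert h)
    · exact Or.inr ⟨a, hX, Or.inl rfl⟩
    · exact Or.inr ⟨b, hX, Or.inr rfl⟩
  symm := by
    constructor
    rintro a b (h | ⟨X, hX, ⟨rfl, rfl⟩ | ⟨rfl, rfl⟩⟩)
    · exact Or.inl (M.adj_symm h)
    · exact Or.inr ⟨a, hX, Or.inr ⟨rfl, rfl⟩⟩
    · exact Or.inr ⟨b, hX, Or.inl ⟨rfl, rfl⟩⟩

lemma mkSub_adj {V : Type*} (G : SimpleGraph V) (M : G.Subgraph) (A : Finset V) (f : V → V)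
    (hadj : ∀ X ∈ A, G.Adj X (f X)) (a b : V) :
    (mkSub G M A f hadj).Adj a b ↔
      (M.Adj a b ∨ ∃ X ∈ A, (a = X ∧ b = f X) ∨ (b = X ∧ a = f X)) := Iff.rfl

lemma mkSub_verts {V : Type*} (G : SimpleGraph V) (M : G.Subgraph) (A : Finset V) (f : V → V)
    (hadj : ∀ X ∈ A, G.Adj X (f X)) :
    (mkSub G M A f hadj).verts = M.verts ∪ {v | ∃ X ∈ A, v = X ∨ v = f X} := rfl

/-- Let `T ⊆ T'` be proper subtrees of `L_{n,k}` (vertex sets `t ⊆ t'`) such that every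
`X ∈ V_k(T')∖V_k(T)` has a neighbor in `V(T)`. Let `M` be a complete matching of `T`,
`U` the set of vertices of `V_{k-1}(T)` not covered by `M`, and
`Δ(Y) = deg_{T'}(Y) − deg_T(Y)`. Then the number of complete matchings `M'` of `T'` with
`M ⊆ M'` equals
`(∏_{Y∈U} (Δ(Y)·k^{Δ(Y)−1} + k^{Δ(Y)})) · (∏_{Y∈V_{k-1}(T)∖U} k^{Δ(Y)})`. -/
theorem stmt10 (n k : ℕ) (hk : 1 ≤ k) (hkn : k < n)
    (t t' : Finset (Finset (Fin n)))
    (ht : IsProperSubtree n k t) (ht' : IsProperSubtree n k t') (htt' : t ⊆ t')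
    (hnb : ∀ X ∈ t', X.card = k + 1 → X ∉ t → ∃ Y ∈ t, (Lgraph n k).Adj X Y)
    (M : (Lgraph n k).Subgraph) (hM : M.IsMatching) (hMt : M.verts ⊆ ↑t)
    (hMc : ∀ Z ∈ t, Z.card = k + 1 → Z ∈ M.verts)
    (U : Finset (Finset (Fin n)))
    (hU : ∀ Z, Z ∈ U ↔ Z ∈ t ∧ Z.card = k ∧ Z ∉ M.verts) :
    Set.ncard {M' : (Lgraph n k).Subgraph |
        M'.IsMatching ∧ M'.verts ⊆ ↑t' ∧ (∀ Z ∈ t', Z.card = k + 1 → Z ∈ M'.verts) ∧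
        M ≤ M'}
      = (∏ Y ∈ U,
          ((degIn n k t' Y - degIn n k t Y) * k ^ (degIn n k t' Y - degIn n k t Y - 1)
            + k ^ (degIn n k t' Y - degIn n k t Y))) *
        (∏ Y ∈ (t.filter (fun Z => Z.card = k)) \ U,
          k ^ (degIn n k t' Y - degIn n k t Y)) := by
  classical
  obtain ⟨htcard, httree, htdown⟩ := ht
  obtain ⟨ht'card, ht'tree, ht'down⟩ := ht'
  -- notation
  set A : Finset (Finset (Fin n)) := (t' \ t).filter (fun X => X.card = k + 1) with hA
  set B : Finset (Finset (Fin n)) := t.filter (fun Z => Z.card = k) with hB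
  set fib : Finset (Fin n) → Finset (Finset (Fin n)) :=
    fun Y => A.filter (fun X => Y ⊆ X) with hfib
  set L : Finset (Fin n) → Finset (Finset (Fin n)) :=
    fun X => (X.powersetCard k).filter (fun Z => Z ∉ t) with hL
  have hAmem : ∀ X, X ∈ A ↔ X ∈ t' ∧ X ∉ t ∧ X.card = k + 1 := by
    intro X
    simp only [hA, Finset.mem_filter, Finset.mem_sdiff]
    tauto
  have hBmem : ∀ Y, Y ∈ B ↔ Y ∈ t ∧ Y.card = k := by
    intro Y; simp [hB]
  -- anchors: existence
  have hanchor_ex : ∀ X ∈ A, ∃ Y, Y ∈ t ∧ Y.card = k ∧ Y ⊆ X := by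
    intro X hX
    rw [hAmem] at hX
    obtain ⟨Y, hYt, hadj⟩ := hnb X hX.1 hX.2.2 hX.2.1
    obtain ⟨hc, hs⟩ := adj_card_k1 hX.2.2 hadj
    exact ⟨Y, hYt, hc, hs⟩
  -- anchors: uniqueness
  have hanchor_uniq : ∀ X ∈ A, ∀ Y₁ Y₂ : Finset (Fin n), Y₁ ∈ t → Y₂ ∈ t →
      Y₁ ⊆ X → Y₂ ⊆ X → Y₁.card = k → Y₂.card = k → Y₁ = Y₂ := by
    intro X hX Y₁ Y₂ h1t h2t h1s h2s h1c h2c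
    rw [hAmem] at hX
    exact anchor_unique htt' httree.isConnected ht'tree.IsAcyclic hX.1 hX.2.1 h1t h2t
      (Or.inl ⟨h1c, hX.2.2, h1s⟩) (Or.inl ⟨h2c, hX.2.2, h2s⟩)
  -- leaves: uniqueness
  have hleaf_uniq : ∀ X₁ ∈ A, ∀ X₂ ∈ A, ∀ Z : Finset (Fin n),
      Z ⊆ X₁ → Z ⊆ X₂ → Z.card = k → Z ∉ t → X₁ = X₂ := by
    intro X₁ hX₁ X₂ hX₂ Z hs1 hs2 hc hZt
    obtain ⟨Y₁, hY₁t, hY₁c, hY₁s⟩ := hanchor_ex X₁ hX₁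
    obtain ⟨Y₂, hY₂t, hY₂c, hY₂s⟩ := hanchor_ex X₂ hX₂
    rw [hAmem] at hX₁ hX₂
    have hZt' : Z ∈ t' := ht'down X₁ hX₁.1 hX₁.2.2 Z hs1 hc
    exact leaf_unique htt' httree.isConnected ht'tree.IsAcyclic hZt' hZt
      hX₁.1 hX₁.2.1 hX₂.1 hX₂.2.1 hY₁t hY₂t
      (Or.inr ⟨hY₁c, hX₁.2.2, hY₁s⟩) (Or.inr ⟨hY₂c, hX₂.2.2, hY₂s⟩)
      (Or.inr ⟨hc, hX₁.2.2, hs1⟩) (Or.inr ⟨hc, hX₂.2.2, hs2⟩)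
  -- every X in A lies in exactly the fiber of its anchor
  have hA_biUnion : B.biUnion fib = A := by
    apply Finset.Subset.antisymm
    · intro X hX
      rw [Finset.mem_biUnion] at hX
      obtain ⟨Y, -, hXf⟩ := hX
      exact Finset.mem_of_mem_filter X hXf
    · intro X hX
      obtain ⟨Y, hYt, hYc, hYs⟩ := hanchor_ex X hX
      exact Finset.mem_biUnion.mpr ⟨Y, (hBmem Y).mpr ⟨hYt, hYc⟩,
        Finset.mem_filter.mpr ⟨hX, hYs⟩⟩
  have hfib_mem : ∀ Y X, X ∈ fib Y ↔ X ∈ A ∧ Y ⊆ X := by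
    intro Y X; simp [hfib]
  have hfib_disj : ∀ Y ∈ B, ∀ Y' ∈ B, Y ≠ Y' → ∀ X ∈ fib Y, X ∉ fib Y' := by
    intro Y hY Y' hY' hne X hX hX'
    rw [hfib_mem] at hX hX'
    rw [hBmem] at hY hY'
    exact hne (hanchor_uniq X hX.1 Y Y' hY.1 hY'.1 hX.2 hX'.2 hY.2 hY'.2)
  -- the number of new supersets of Y is the degree difference
  have hdelta : ∀ Y ∈ B, degIn n k t' Y - degIn n k t Y = (fib Y).card := by
    intro Y hY
    rw [hBmem] at hY
    have hdeg : ∀ s : Finset (Finset (Fin n)),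
        s.filter (fun Z => (Lgraph n k).Adj Y Z)
          = s.filter (fun Z => Z.card = k + 1 ∧ Y ⊆ Z) := by
      intro s
      apply Finset.filter_congr
      intro Z _
      constructor
      · intro h; exact adj_card_k hY.2 h
      · intro h
        exact Or.inl ⟨hY.2, h.1, h.2⟩
    have hfibeq : fib Y = (t'.filter (fun Z => Z.card = k + 1 ∧ Y ⊆ Z))
        \ (t.filter (fun Z => Z.card = k + 1 ∧ Y ⊆ Z)) := by
      ext X
      rw [hfib_mem, hAmem]
      simp only [Finset.mem_sdiff, Finset.mem_filter]
      constructor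
      · rintro ⟨⟨hXt', hXt, hXc⟩, hs⟩
        exact ⟨⟨hXt', hXc, hs⟩, fun h => hXt h.1⟩
      · rintro ⟨⟨hXt', hXc, hs⟩, h⟩
        exact ⟨⟨hXt', fun hXt => h ⟨hXt, hXc, hs⟩, hXc⟩, hs⟩
    rw [degIn, degIn, hdeg t', hdeg t, hfibeq]
    rw [Finset.card_sdiff_of_subset (Finset.filter_subset_filter _ htt')]
  -- leaves have cardinality k
  have hLcard : ∀ Y ∈ B, ∀ X ∈ fib Y, (L X).card = k := by
    intro Y hY X hX
    rw [hfib_mem] at hX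
    obtain ⟨hXA, hYs⟩ := hX
    rw [hBmem] at hY
    have hXA' := (hAmem X).mp hXA
    have hpc : (X.powersetCard k).card = k + 1 := by
      rw [Finset.card_powersetCard, hXA'.2.2, Nat.choose_succ_self_right]
    have hor : (X.powersetCard k).filter (fun Z => Z ∈ t) = {Y} := by
      ext Z
      simp only [Finset.mem_filter, Finset.mem_powersetCard, Finset.mem_singleton]
      constructor
      · rintro ⟨⟨hZs, hZc⟩, hZt⟩
        exact hanchor_uniq X hXA Z Y hZt hY.1 hZs hYs hZc hY.2
      · rintro rfl
        exact ⟨⟨hYs, hY.2⟩, hY.1⟩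
    have := Finset.card_filter_add_card_filter_not
      (s := X.powersetCard k) (p := fun Z => Z ∈ t)
    rw [hor, hpc, Finset.card_singleton] at this
    have : ((X.powersetCard k).filter (fun Z => ¬ Z ∈ t)).card = k := by omega
    simpa [hL] using this
  -- local predicate for the fiber count
  set Q : Finset (Fin n) → (Finset (Fin n) → Finset (Fin n)) → Prop :=
    fun Y f => ∀ X ∈ fib Y, f X ⊆ X ∧ (f X).card = k ∧ f X ∉ M.verts ∧
      ∀ X' ∈ fib Y, f X = f X' → X = X' with hQdef
  -- STEP 1: the set of matchings is in bijection with the functions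
  have step1 : Set.ncard {M' : (Lgraph n k).Subgraph |
        M'.IsMatching ∧ M'.verts ⊆ ↑t' ∧ (∀ Z ∈ t', Z.card = k + 1 → Z ∈ M'.verts) ∧
        M ≤ M'}
      = cnt (fun f : Finset (Fin n) → Finset (Fin n) =>
          (∀ Y ∈ B, Q Y f) ∧ ∀ X ∉ A, f X = ∅) := by
    rw [← Nat.card_coe_set_eq]
    have hAcard : ∀ X ∈ A, X.card = k + 1 := fun X hX => ((hAmem X).mp hX).2.2
    have hAt' : ∀ X ∈ A, X ∈ t' := fun X hX => ((hAmem X).mp hX).1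
    have hAt : ∀ X ∈ A, X ∉ t := fun X hX => ((hAmem X).mp hX).2.1
    have hQall : ∀ f : Finset (Fin n) → Finset (Fin n), (∀ Y ∈ B, Q Y f) →
        ∀ X ∈ A, f X ⊆ X ∧ (f X).card = k ∧ f X ∉ M.verts := by
      intro f hf X hX
      obtain ⟨Y, hYt, hYc, hYs⟩ := hanchor_ex X hX
      have hYB : Y ∈ B := (hBmem Y).mpr ⟨hYt, hYc⟩
      have hXf : X ∈ fib Y := (hfib_mem Y X).mpr ⟨hX, hYs⟩
      obtain ⟨h1, h2, h3, -⟩ := hf Y hYB X hXf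
      exact ⟨h1, h2, h3⟩
    have hinjf : ∀ f : Finset (Fin n) → Finset (Fin n), (∀ Y ∈ B, Q Y f) →
        ∀ X ∈ A, ∀ X' ∈ A, f X = f X' → X = X' := by
      intro f hf X hX X' hX' heq
      obtain ⟨h1, h2, h3⟩ := hQall f hf X hX
      obtain ⟨h1', h2', h3'⟩ := hQall f hf X' hX'
      by_cases hft : f X ∈ t
      · have hYB : f X ∈ B := (hBmem _).mpr ⟨hft, h2⟩
        have hXf : X ∈ fib (f X) := (hfib_mem _ X).mpr ⟨hX, h1⟩
        have hXf' : X' ∈ fib (f X) := (hfib_mem _ X').mpr ⟨hX', by rw [heq]; exact h1'⟩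
        exact (hf (f X) hYB X hXf).2.2.2 X' hXf' heq
      · exact hleaf_uniq X hX X' hX' (f X) h1 (by rw [heq]; exact h1') h2 hft
    have hGadj : ∀ f : Finset (Fin n) → Finset (Fin n), (∀ Y ∈ B, Q Y f) →
        ∀ X ∈ A, (Lgraph n k).Adj X (f X) := by
      intro f hf X hX
      obtain ⟨h1, h2, -⟩ := hQall f hf X hX
      exact Or.inr ⟨h2, hAcard X hX, h1⟩
    set F : (Finset (Fin n) → Finset (Fin n)) → Prop :=
      fun f => (∀ Y ∈ B, Q Y f) ∧ ∀ X ∉ A, f X = ∅ with hFdef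
    set Θ : {f : Finset (Fin n) → Finset (Fin n) // F f} → (Lgraph n k).Subgraph :=
      fun fp => mkSub (Lgraph n k) M A fp.1 (hGadj fp.1 fp.2.1) with hΘdef
    -- each Θ fp is in the target set
    have hmemP : ∀ fp, Θ fp ∈ {M' : (Lgraph n k).Subgraph |
        M'.IsMatching ∧ M'.verts ⊆ ↑t' ∧ (∀ Z ∈ t', Z.card = k + 1 → Z ∈ M'.verts) ∧
        M ≤ M'} := by
      intro fp
      obtain ⟨f, hf⟩ := fp
      obtain ⟨hfQ, hfoff⟩ := hf
      simp only [hΘdef, Set.mem_setOf_eq]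
      refine ⟨?_, ?_, ?_, ?_⟩
      · -- matching
        intro v hv
        rw [mkSub_verts, Set.mem_union, Set.mem_setOf_eq] at hv
        rcases hv with hv | ⟨X, hX, rfl | rfl⟩
        · obtain ⟨w, hw, hwu⟩ := hM hv
          refine ⟨w, Or.inl hw, ?_⟩
          intro y hy
          rw [mkSub_adj] at hy
          rcases hy with hy | ⟨X, hX, ⟨rfl, rfl⟩ | ⟨rfl, rfl⟩⟩
          · exact hwu y hy
          · exact absurd (hMt hv) (hAt _ hX)
          · exact absurd hv (hQall f hfQ y hX).2.2
        · refine ⟨f v, Or.inr ⟨v, hX, Or.inl ⟨rfl, rfl⟩⟩, ?_⟩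
          intro y hy
          rw [mkSub_adj] at hy
          rcases hy with hy | ⟨X', hX', ⟨h1, h2⟩ | ⟨h1, h2⟩⟩
          · exact absurd (hMt (M.edge_vert hy)) (hAt v hX)
          · rw [h2, ← h1]
          · exfalso
            have hc1 := (hQall f hfQ X' hX').2.1
            rw [← h2] at hc1
            have hc2 := hAcard v hX
            omega
        · refine ⟨X, Or.inr ⟨X, hX, Or.inr ⟨rfl, rfl⟩⟩, ?_⟩
          intro y hy
          rw [mkSub_adj] at hy
          rcases hy with hy | ⟨X', hX', ⟨h1, h2⟩ | ⟨h1, h2⟩⟩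
          · exact absurd (M.edge_vert hy) (hQall f hfQ X hX).2.2
          · exfalso
            have hc1 := (hQall f hfQ X hX).2.1
            rw [h1] at hc1
            have hc2 := hAcard X' hX'
            omega
          · rw [h1]
            exact (hinjf f hfQ X' hX' X hX h2.symm)
      · -- verts ⊆ t'
        rw [mkSub_verts]
        rintro v hv
        rw [Set.mem_union, Set.mem_setOf_eq] at hv
        rcases hv with hv | ⟨X, hX, rfl | rfl⟩
        · exact htt' (hMt hv)
        · exact hAt' v hX
        · obtain ⟨h1, h2, -⟩ := hQall f hfQ X hX
          exact ht'down X (hAt' X hX) (hAcard X hX) (f X) h1 h2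
      · -- covers all (k+1)-sets of t'
        intro Z hZ hZc
        rw [mkSub_verts, Set.mem_union, Set.mem_setOf_eq]
        by_cases hZt : Z ∈ t
        · exact Or.inl (hMc Z hZt hZc)
        · exact Or.inr ⟨Z, (hAmem Z).mpr ⟨hZ, hZt, hZc⟩, Or.inl rfl⟩
      · -- M ≤ Θ fp
        exact ⟨Set.subset_union_left, fun a b h => Or.inl h⟩
    refine (Nat.card_congr (Equiv.ofBijective
      (fun fp => (⟨Θ fp, hmemP fp⟩ : {M' : (Lgraph n k).Subgraph //
        M' ∈ {M' : (Lgraph n k).Subgraph | M'.IsMatching ∧ M'.verts ⊆ ↑t' ∧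
          (∀ Z ∈ t', Z.card = k + 1 → Z ∈ M'.verts) ∧ M ≤ M'}})) ⟨?_, ?_⟩)).symm
    · -- injectivity
      intro fp fq h
      have hh : Θ fp = Θ fq := congrArg Subtype.val h
      apply Subtype.ext
      funext X
      by_cases hX : X ∈ A
      · have hadjf : (Θ fp).Adj X (fp.1 X) := by
          rw [hΘdef]
          exact Or.inr ⟨X, hX, Or.inl ⟨rfl, rfl⟩⟩
        rw [hh, hΘdef] at hadjf
        rw [mkSub_adj] at hadjf
        rcases hadjf with hy | ⟨X', hX', ⟨h1, h2⟩ | ⟨h1, h2⟩⟩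
        · exact absurd (hMt (M.edge_vert hy)) (hAt X hX)
        · rw [h2, ← h1]
        · exfalso
          have hc1 := (hQall fq.1 fq.2.1 X' hX').2.1
          rw [← h2] at hc1
          have hc2 := hAcard X hX
          omega
      · rw [fp.2.2 X hX, fq.2.2 X hX]
    · -- surjectivity
      rintro ⟨M', hm⟩
      obtain ⟨hm1, hm2, hm3, hm4⟩ := hm
      have hle1 : M.verts ⊆ M'.verts := hm4.1
      have hle2 : ∀ ⦃a b⦄, M.Adj a b → M'.Adj a b := hm4.2
      have hpu : ∀ v w w', M'.Adj v w → M'.Adj v w' → w = w' := by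
        intro v w w' h h'
        obtain ⟨w0, -, hu⟩ := hm1 (M'.edge_vert h)
        rw [hu w h, hu w' h']
      have hvert : ∀ X ∈ A, X ∈ M'.verts := fun X hX => hm3 X (hAt' X hX) (hAcard X hX)
      set f : Finset (Fin n) → Finset (Fin n) := fun X =>
        if h : X ∈ A then (hm1 (hvert X h)).exists.choose else ∅ with hfdef
      have hfadj : ∀ X, X ∈ A → M'.Adj X (f X) := by
        intro X hX
        have : f X = (hm1 (hvert X hX)).exists.choose := by
          rw [hfdef]; exact dif_pos hX
        rw [this]
        exact (hm1 (hvert X hX)).exists.choose_spec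
      have hfsub : ∀ X ∈ A, f X ⊆ X ∧ (f X).card = k := by
        intro X hX
        have := adj_card_k1 (hAcard X hX) (M'.adj_sub (hfadj X hX))
        exact ⟨this.2, this.1⟩
      have hfnM : ∀ X ∈ A, f X ∉ M.verts := by
        intro X hX hfM
        obtain ⟨w, hw, -⟩ := hM hfM
        have h1 : M'.Adj (f X) w := hle2 hw
        have h2 : M'.Adj (f X) X := (hfadj X hX).symm
        have hwX : w = X := hpu _ _ _ h1 h2
        have hwT : w ∈ M.verts := M.edge_vert hw.symm
        rw [hwX] at hwT
        exact hAt X hX (hMt hwT)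
      have hFf : F f := by
        constructor
        · intro Y hYB X hXf
          have hXA := ((hfib_mem Y X).mp hXf).1
          refine ⟨(hfsub X hXA).1, (hfsub X hXA).2, hfnM X hXA, ?_⟩
          intro X' hX' heq
          have hX'A := ((hfib_mem Y X').mp hX').1
          have h1 : M'.Adj (f X) X := (hfadj X hXA).symm
          have h2 : M'.Adj (f X) X' := by rw [heq]; exact (hfadj X' hX'A).symm
          exact hpu _ _ _ h1 h2
        · intro X hX
          rw [hfdef]
          exact dif_neg hX
      refine ⟨⟨f, hFf⟩, ?_⟩
      apply Subtype.ext
      show Θ ⟨f, hFf⟩ = M'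
      rw [hΘdef]
      have hcase : ∀ a b : Finset (Fin n), M'.Adj a b → a.card = k + 1 →
          (M.Adj a b ∨ ∃ X ∈ A, (a = X ∧ b = f X) ∨ (b = X ∧ a = f X)) := by
        intro a b hab hac
        have hat' : a ∈ t' := hm2 (M'.edge_vert hab)
        by_cases hat : a ∈ t
        · have haM := hMc a hat hac
          obtain ⟨u, hu, -⟩ := hM haM
          have hub : u = b := hpu _ _ _ (hle2 hu) hab
          exact Or.inl (hub ▸ hu)
        · have haA : a ∈ A := (hAmem a).mpr ⟨hat', hat, hac⟩
          have hfb : f a = b := hpu _ _ _ (hfadj a haA) hab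
          exact Or.inr ⟨a, haA, Or.inl ⟨rfl, hfb.symm⟩⟩
      apply SimpleGraph.Subgraph.ext
      · -- verts equal
        rw [mkSub_verts]
        apply Set.ext
        intro v
        rw [Set.mem_union, Set.mem_setOf_eq]
        constructor
        · rintro (hv | ⟨X, hX, rfl | rfl⟩)
          · exact hle1 hv
          · exact hvert v hX
          · exact M'.edge_vert (hfadj X hX).symm
        · intro hv
          obtain ⟨w, hw, -⟩ := hm1 hv
          have hGvw := M'.adj_sub hw
          have hvt' : v ∈ t' := hm2 hv
          rcases ht'card v hvt' with hvk | hvk1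
          · obtain ⟨hwc, hws⟩ := adj_card_k hvk hGvw
            have hwt' : w ∈ t' := hm2 (M'.edge_vert hw.symm)
            by_cases hwt : w ∈ t
            · have hwM : w ∈ M.verts := hMc w hwt hwc
              obtain ⟨u, hu, -⟩ := hM hwM
              have h1 : M'.Adj w u := hle2 hu
              have h2 : M'.Adj w v := hw.symm
              have huv : u = v := hpu _ _ _ h1 h2
              left
              rw [← huv]
              exact M.edge_vert hu.symm
            · have hwA : w ∈ A := (hAmem w).mpr ⟨hwt', hwt, hwc⟩
              have hfw : f w = v := hpu _ _ _ (hfadj w hwA) hw.symm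
              exact Or.inr ⟨w, hwA, Or.inr hfw.symm⟩
          · by_cases hvt : v ∈ t
            · exact Or.inl (hMc v hvt hvk1)
            · exact Or.inr ⟨v, (hAmem v).mpr ⟨hvt', hvt, hvk1⟩, Or.inl rfl⟩
      · -- Adj equal
        funext a b
        apply propext
        rw [mkSub_adj]
        constructor
        · rintro (h | ⟨X, hX, ⟨rfl, rfl⟩ | ⟨rfl, rfl⟩⟩)
          · exact hle2 h
          · exact hfadj a hX
          · exact (hfadj b hX).symm
        · intro h
          have hat' : a ∈ t' := hm2 (M'.edge_vert h)
          rcases ht'card a hat' with hak | hak1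
          · have hbk1 := (adj_card_k hak (M'.adj_sub h)).1
            rcases hcase b a h.symm hbk1 with hmm | ⟨X, hX, ⟨h1, h2⟩ | ⟨h1, h2⟩⟩
            · exact Or.inl hmm.symm
            · exact Or.inr ⟨X, hX, Or.inr ⟨h1, h2⟩⟩
            · exact Or.inr ⟨X, hX, Or.inl ⟨h1, h2⟩⟩
          · exact hcase a b h hak1
  -- STEP 2: fiber decomposition
  have step2 : cnt (fun f : Finset (Fin n) → Finset (Fin n) =>
          (∀ Y ∈ B, Q Y f) ∧ ∀ X ∉ A, f X = ∅)
      = ∏ Y ∈ B, cnt (fun f : Finset (Fin n) → Finset (Fin n) =>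
          Q Y f ∧ ∀ X ∉ fib Y, f X = ∅) := by
    rw [cnt_congr (Q := fun f : Finset (Fin n) → Finset (Fin n) =>
      (∀ Y ∈ B, Q Y f) ∧ ∀ X ∉ B.biUnion fib, f X = ∅) (fun f => by rw [hA_biUnion])]
    exact cnt_fiber B fib hfib_disj Q (fun Y hY f g hfg hf => by
      intro X hX
      obtain ⟨h1, h2, h3, h4⟩ := hf X hX
      rw [← hfg X hX]
      exact ⟨h1, h2, h3, fun X' hX' h => h4 X' hX' (by rw [h, hfg X' hX'])⟩) ∅
  -- STEP 3: local counts
  have hUB : U ⊆ B := by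
    intro Y hY
    rw [hU] at hY
    exact (hBmem Y).mpr ⟨hY.1, hY.2.1⟩
  have step3U : ∀ Y ∈ U, cnt (fun f : Finset (Fin n) → Finset (Fin n) =>
          Q Y f ∧ ∀ X ∉ fib Y, f X = ∅)
      = (fib Y).card * k ^ ((fib Y).card - 1) + k ^ (fib Y).card := by
    intro Y hYU
    have hYB : Y ∈ B := hUB hYU
    have hYt := ((hBmem Y).mp hYB).1
    have hYc := ((hBmem Y).mp hYB).2
    have hYM : Y ∉ M.verts := ((hU Y).mp hYU).2.2
    rw [cnt_congr (Q := fun f : Finset (Fin n) → Finset (Fin n) =>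
      (∀ X ∈ fib Y, f X ∈ insert Y (L X)) ∧
      (∀ X ∈ fib Y, ∀ X' ∈ fib Y, f X = Y → f X' = Y → X = X') ∧
      ∀ X ∉ fib Y, f X = ∅) ?_]
    · rw [cnt_atmostone (fib Y) L Y ∅ (fun X hX => by
        simp only [hL, Finset.mem_filter]
        exact fun h => h.2 hYt)]
      have h1 : ∏ X ∈ fib Y, (L X).card = k ^ (fib Y).card := by
        rw [Finset.prod_congr rfl (fun X hX => hLcard Y hYB X hX), Finset.prod_const]
      have h2 : ∑ X ∈ fib Y, ∏ X' ∈ (fib Y).erase X, (L X').card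
          = (fib Y).card * k ^ ((fib Y).card - 1) := by
        rw [Finset.sum_congr rfl (fun X hX => ?_), Finset.sum_const, smul_eq_mul]
        rw [Finset.prod_congr rfl (fun X' hX' =>
          hLcard Y hYB X' (Finset.mem_of_mem_erase hX')), Finset.prod_const,
          Finset.card_erase_of_mem hX]
      rw [h1, h2]
      ring
    · intro f
      constructor
      · rintro ⟨hQf, hoff⟩
        refine ⟨fun X hX => ?_, fun X hX X' hX' hXy hX'y => ?_, hoff⟩
        · obtain ⟨h1, h2, h3, h4⟩ := hQf X hX
          by_cases hft : f X ∈ t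
          · have : f X = Y := hanchor_uniq X ((hfib_mem Y X).mp hX).1 (f X) Y hft hYt h1
              ((hfib_mem Y X).mp hX).2 h2 hYc
            rw [this]; exact Finset.mem_insert_self _ _
          · refine Finset.mem_insert_of_mem ?_
            simp only [hL, Finset.mem_filter, Finset.mem_powersetCard]
            exact ⟨⟨h1, h2⟩, hft⟩
        · exact (hQf X hX).2.2.2 X' hX' (by rw [hXy, hX'y])
      · rintro ⟨hmem, honey, hoff⟩
        refine ⟨fun X hX => ?_, hoff⟩
        have hXA := ((hfib_mem Y X).mp hX).1
        have hYX := ((hfib_mem Y X).mp hX).2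
        rcases Finset.mem_insert.mp (hmem X hX) with hfY | hfL
        · refine ⟨hfY ▸ hYX, hfY ▸ hYc, hfY ▸ hYM, fun X' hX' h => ?_⟩
          rcases Finset.mem_insert.mp (hmem X' hX') with hfY' | hfL'
          · exact honey X hX X' hX' hfY hfY'
          · exfalso
            simp only [hL, Finset.mem_filter] at hfL'
            rw [← h, hfY] at hfL'
            exact hfL'.2 hYt
        · simp only [hL, Finset.mem_filter, Finset.mem_powersetCard] at hfL
          refine ⟨hfL.1.1, hfL.1.2, fun hfM => hfL.2 (hMt hfM), fun X' hX' h => ?_⟩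
          rcases Finset.mem_insert.mp (hmem X' hX') with hfY' | hfL'
          · exact absurd (show f X ∈ t by rw [h.trans hfY']; exact hYt) hfL.2
          · simp only [hL, Finset.mem_filter, Finset.mem_powersetCard] at hfL'
            exact hleaf_uniq X hXA X' ((hfib_mem Y X').mp hX').1 (f X) hfL.1.1
              (by rw [h]; exact hfL'.1.1) hfL.1.2 hfL.2
  have step3NU : ∀ Y ∈ B \ U, cnt (fun f : Finset (Fin n) → Finset (Fin n) =>
          Q Y f ∧ ∀ X ∉ fib Y, f X = ∅)
      = k ^ (fib Y).card := by
    intro Y hY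
    rw [Finset.mem_sdiff] at hY
    obtain ⟨hYB, hYU⟩ := hY
    have hYt := ((hBmem Y).mp hYB).1
    have hYc := ((hBmem Y).mp hYB).2
    have hYM : Y ∈ M.verts := by
      by_contra hYM
      exact hYU ((hU Y).mpr ⟨hYt, hYc, hYM⟩)
    rw [cnt_congr (Q := fun f : Finset (Fin n) → Finset (Fin n) =>
      (∀ X ∈ fib Y, f X ∈ L X) ∧ ∀ X ∉ fib Y, f X = ∅) ?_]
    · rw [cnt_pi]
      rw [Finset.prod_congr rfl (fun X hX => hLcard Y hYB X hX), Finset.prod_const]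
    · intro f
      constructor
      · rintro ⟨hQf, hoff⟩
        refine ⟨fun X hX => ?_, hoff⟩
        obtain ⟨h1, h2, h3, h4⟩ := hQf X hX
        simp only [hL, Finset.mem_filter, Finset.mem_powersetCard]
        refine ⟨⟨h1, h2⟩, fun hft => ?_⟩
        have : f X = Y := hanchor_uniq X ((hfib_mem Y X).mp hX).1 (f X) Y hft hYt h1
          ((hfib_mem Y X).mp hX).2 h2 hYc
        rw [this] at h3
        exact h3 hYM
      · rintro ⟨hmem, hoff⟩
        refine ⟨fun X hX => ?_, hoff⟩
        have hfL := hmem X hX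
        simp only [hL, Finset.mem_filter, Finset.mem_powersetCard] at hfL
        refine ⟨hfL.1.1, hfL.1.2, fun hfM => hfL.2 (hMt hfM), fun X' hX' h => ?_⟩
        have hfL' := hmem X' hX'
        simp only [hL, Finset.mem_filter, Finset.mem_powersetCard] at hfL'
        exact hleaf_uniq X ((hfib_mem Y X).mp hX).1 X' ((hfib_mem Y X').mp hX').1 (f X)
          hfL.1.1 (by rw [h]; exact hfL'.1.1) hfL.1.2 hfL.2
  -- final assembly
  rw [step1, step2, ← Finset.prod_sdiff hUB]
  have hP1 : ∏ Y ∈ U, cnt (fun f : Finset (Fin n) → Finset (Fin n) =>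
        Q Y f ∧ ∀ X ∉ fib Y, f X = ∅)
      = ∏ Y ∈ U, ((degIn n k t' Y - degIn n k t Y)
          * k ^ (degIn n k t' Y - degIn n k t Y - 1)
          + k ^ (degIn n k t' Y - degIn n k t Y)) := by
    refine Finset.prod_congr rfl (fun Y hY => ?_)
    rw [step3U Y hY, hdelta Y (hUB hY)]
  have hP2 : ∏ Y ∈ B \ U, cnt (fun f : Finset (Fin n) → Finset (Fin n) =>
        Q Y f ∧ ∀ X ∉ fib Y, f X = ∅)
      = ∏ Y ∈ B \ U, k ^ (degIn n k t' Y - degIn n k t Y) := by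
    refine Finset.prod_congr rfl (fun Y hY => ?_)
    rw [step3NU Y hY, hdelta Y (Finset.mem_sdiff.mp hY).1]
  rw [hP1, hP2, mul_comm]
end
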